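/- arXiv:1811.07563 — 11 statements merged into one kernel-verified Lean document; each statement's English description precedes it below -/
import Mathlib

section
/- Let f be a profile that is positive everywhere, normalized by ∫_ℝ ρ(z) dz = 1, and such that f(z,v_k) → 0 as z → +∞ and as z → −∞ for every k. Then the tumbling flux I is differentiable on ℝ∖{0} and there exist positive numbers λ₊, μ₊, λ₋, μ₋ > 0 such that e^{λ₊ z} I′(z) → −μ₊ as z → +∞ and e^{−λ₋ z} I′(z) → μ₋ as z → −∞; in particular I′(z) < 0 for all sufficiently large z > 0 and I′(z) > 0 for all sufficiently negative z < 0. -/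
open MeasureTheory Filter
open Set


/-- Exponential representation from a linear scalar ODE on `Ioi 0`. -/
lemma expRep (ξ : ℝ) (h : ℝ → ℝ)
    (hd : ∀ z ∈ Set.Ioi (0:ℝ), HasDerivAt h (-ξ * h z) z) :
    ∀ z ∈ Set.Ioi (0:ℝ), h z = (h 1 * Real.exp ξ) * Real.exp (-ξ * z) := by
  set u : ℝ → ℝ := fun z => h z * Real.exp (ξ * z) with hu
  have hud : ∀ z ∈ Set.Ioi (0:ℝ), HasDerivAt u 0 z := by
    intro z hz
    have he : HasDerivAt (fun z => Real.exp (ξ * z)) (ξ * Real.exp (ξ * z)) z := by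
      have := (Real.hasDerivAt_exp (ξ * z)).comp z ((hasDerivAt_id z).const_mul ξ)
      simpa [Function.comp_def, mul_comm] using this
    have := (hd z hz).fun_mul he
    convert this using 1
    · rfl
    · rfl
    ring
  have hconst : ∀ z ∈ Set.Ioi (0:ℝ), u z = u 1 := by
    intro z hz
    have hdiff : DifferentiableOn ℝ u (Set.Ioi (0:ℝ)) := fun x hx =>
      (hud x hx).differentiableAt.differentiableWithinAt
    have hfd : ∀ x ∈ Set.Ioi (0:ℝ), fderivWithin ℝ u (Set.Ioi (0:ℝ)) x = 0 := by
      intro x hx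
      have : fderivWithin ℝ u (Set.Ioi (0:ℝ)) x = fderiv ℝ u x :=
        fderivWithin_of_isOpen isOpen_Ioi hx
      rw [this, ((hud x hx).hasFDerivAt.fderiv)]
      ext y; simp
    exact (convex_Ioi (0:ℝ)).is_const_of_fderivWithin_eq_zero hdiff hfd hz (by norm_num)
  intro z hz
  have := hconst z hz
  have hexp : Real.exp (ξ * z) ≠ 0 := Real.exp_ne_zero _
  have : h z * Real.exp (ξ * z) = h 1 * Real.exp ξ := by simpa [hu, mul_one] using this
  have h2 : h z = (h 1 * Real.exp ξ) / Real.exp (ξ * z) := by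
    field_simp at this ⊢; linarith [this]
  rw [h2, div_eq_mul_inv, ← Real.exp_neg]
  ring_nf


lemma tendsto_inv_nhdsLT_zero_atBot : Tendsto (fun y : ℝ => y⁻¹) (nhdsWithin 0 (Set.Iio 0)) atBot := by
  have hneg : Tendsto (fun y : ℝ => -y) (nhdsWithin 0 (Set.Iio 0)) (nhdsWithin 0 (Set.Ioi 0)) := by
    rw [tendsto_nhdsWithin_iff]
    constructor
    · have : Tendsto (fun y : ℝ => -y) (nhds 0) (nhds (-0)) := tendsto_neg _
      simpa using this.mono_left nhdsWithin_le_nhds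
    · filter_upwards [self_mem_nhdsWithin] with y hy
      simp only [Set.mem_Ioi]
      simp only [Set.mem_Iio] at hy
      linarith
  have h1 : Tendsto (fun y : ℝ => (-y)⁻¹) (nhdsWithin 0 (Set.Iio 0)) atTop :=
    tendsto_inv_nhdsGT_zero.comp hneg
  have h2 := tendsto_neg_atTop_atBot.comp h1
  refine h2.congr (fun y => ?_)
  simp [Function.comp, inv_neg]

/-- In a gap between two consecutive poles, `ψ(x) = ∑ ω k / (p k - x)` has a zero. -/
lemma root_in_gap {ι : Type*} [Fintype ι] [DecidableEq ι]
    (ω p : ι → ℝ) (hω : ∀ k, 0 < ω k) (hp : Function.Injective p)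
    (k₀ k₁ : ι) (hlt : p k₀ < p k₁)
    (hgap : ∀ k, p k ∉ Set.Ioo (p k₀) (p k₁)) :
    ∃ x ∈ Set.Ioo (p k₀) (p k₁), ∑ k, ω k / (p k - x) = 0 := by
  set q := p k₀ with hq
  set q' := p k₁ with hq'
  set ψ : ℝ → ℝ := fun x => ∑ k, ω k / (p k - x) with hψ
  have hne : ∀ x ∈ Set.Ioo q q', ∀ k, p k - x ≠ 0 := by
    intro x hx k hzero
    have : p k = x := by linarith [sub_eq_zero.mp hzero]
    exact hgap k (this ▸ hx)
  have hcont : ContinuousOn ψ (Set.Ioo q q') := by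
    apply continuousOn_finset_sum
    intro k _
    exact ContinuousOn.div continuousOn_const
      (continuousOn_const.sub continuousOn_id) (fun x hx => hne x hx k)
  -- singular limits at a pole, generic version
  have hsing : ∀ (k₂ : ι) (l : Filter ℝ), l ≤ nhds (p k₂) →
      Tendsto (fun x => p k₂ - x) l (nhdsWithin 0 (Set.Iio 0)) →
      Tendsto ψ l atBot := by
    intro k₂ l hl hmain
    have hsplit : ψ = fun x => ω k₂ / (p k₂ - x) +
        ∑ k ∈ Finset.univ.erase k₂, ω k / (p k - x) := by
      funext x
      simp only [hψ]
      exact (Finset.add_sum_erase _ _ (Finset.mem_univ k₂)).symm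
    rw [hsplit]
    apply Filter.Tendsto.atBot_add (C := ∑ k ∈ Finset.univ.erase k₂, ω k / (p k - p k₂))
    · have h2 : Tendsto (fun x => (p k₂ - x)⁻¹) l atBot :=
        tendsto_inv_nhdsLT_zero_atBot.comp hmain
      have := h2.const_mul_atBot (hω k₂)
      simpa [div_eq_mul_inv] using this
    · apply Tendsto.mono_left _ hl
      apply tendsto_finset_sum
      intro k hk
      have hk0 : k ≠ k₂ := Finset.ne_of_mem_erase hk
      have hd : p k - p k₂ ≠ 0 := sub_ne_zero.mpr (fun h => hk0 (hp h))
      exact Tendsto.div tendsto_const_nhds (tendsto_const_nhds.sub tendsto_id) hd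
  -- ψ → -∞ as x → q⁺
  have hbot : Tendsto ψ (nhdsWithin q (Set.Ioi q)) atBot := by
    apply hsing k₀ _ nhdsWithin_le_nhds
    rw [tendsto_nhdsWithin_iff]
    constructor
    · have : Tendsto (fun x : ℝ => q - x) (nhds q) (nhds (q - q)) :=
        tendsto_const_nhds.sub tendsto_id
      simpa using this.mono_left nhdsWithin_le_nhds
    · filter_upwards [self_mem_nhdsWithin] with x hx
      simp only [Set.mem_Iio, Set.mem_Ioi] at *
      linarith
  -- ψ → +∞ as x → q'⁻ : i.e. -ψ → -∞, via hsing applied to reflected data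
  have htop : Tendsto ψ (nhdsWithin q' (Set.Iio q')) atTop := by
    have hsplit : ψ = fun x => ω k₁ / (p k₁ - x) +
        ∑ k ∈ Finset.univ.erase k₁, ω k / (p k - x) := by
      funext x
      simp only [hψ]
      exact (Finset.add_sum_erase _ _ (Finset.mem_univ k₁)).symm
    rw [hsplit]
    apply Filter.Tendsto.atTop_add (C := ∑ k ∈ Finset.univ.erase k₁, ω k / (p k - p k₁))
    · have hmain : Tendsto (fun x => p k₁ - x) (nhdsWithin q' (Set.Iio q'))
          (nhdsWithin 0 (Set.Ioi 0)) := by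
        rw [tendsto_nhdsWithin_iff]
        constructor
        · have : Tendsto (fun x : ℝ => q' - x) (nhds q') (nhds (q' - q')) :=
            tendsto_const_nhds.sub tendsto_id
          simpa using this.mono_left nhdsWithin_le_nhds
        · filter_upwards [self_mem_nhdsWithin] with x hx
          simp only [Set.mem_Iio, Set.mem_Ioi] at *
          linarith
      have h2 : Tendsto (fun x => (p k₁ - x)⁻¹) (nhdsWithin q' (Set.Iio q')) atTop :=
        tendsto_inv_nhdsGT_zero.comp hmain
      have := h2.const_mul_atTop (hω k₁)
      simpa [div_eq_mul_inv] using this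
    · apply Tendsto.mono_left _ (nhdsWithin_le_nhds)
      apply tendsto_finset_sum
      intro k hk
      have hk0 : k ≠ k₁ := Finset.ne_of_mem_erase hk
      have hd : p k - p k₁ ≠ 0 := sub_ne_zero.mpr (fun h => hk0 (hp h))
      exact Tendsto.div tendsto_const_nhds (tendsto_const_nhds.sub tendsto_id) hd
  -- pick evaluation points and apply IVT
  obtain ⟨x₁, hx₁mem, hx₁neg⟩ : ∃ x ∈ Set.Ioo q q', ψ x < 0 := by
    have hev : ∀ᶠ x in nhdsWithin q (Set.Ioi q), ψ x < 0 := hbot.eventually_lt_atBot 0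
    have hmem : Set.Ioo q q' ∈ nhdsWithin q (Set.Ioi q) := Ioo_mem_nhdsGT_of_mem ⟨le_refl q, hlt⟩
    obtain ⟨x, hx1, hx2⟩ := (hev.and (Filter.eventually_of_mem hmem (fun x hx => hx))).exists
    exact ⟨x, hx2, hx1⟩
  obtain ⟨x₂, hx₂mem, hx₂pos, hx₁₂⟩ : ∃ x ∈ Set.Ioo q q', 0 < ψ x ∧ x₁ < x := by
    have hev : ∀ᶠ x in nhdsWithin q' (Set.Iio q'), 0 < ψ x := htop.eventually_gt_atTop 0
    have hmem : Set.Ioo x₁ q' ∈ nhdsWithin q' (Set.Iio q') := Ioo_mem_nhdsLT_of_mem ⟨hx₁mem.2, le_refl q'⟩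
    obtain ⟨x, hx1, hx2⟩ := (hev.and (Filter.eventually_of_mem hmem (fun x hx => hx))).exists
    exact ⟨x, ⟨lt_trans hx₁mem.1 hx2.1, hx2.2⟩, hx1, hx2.1⟩
  have hsub : Set.Icc x₁ x₂ ⊆ Set.Ioo q q' := fun y hy =>
    ⟨lt_of_lt_of_le hx₁mem.1 hy.1, lt_of_le_of_lt hy.2 hx₂mem.2⟩
  have hIVT := intermediate_value_Icc (le_of_lt hx₁₂) (hcont.mono hsub)
  have h0 : (0:ℝ) ∈ Set.Icc (ψ x₁) (ψ x₂) := ⟨le_of_lt hx₁neg, le_of_lt hx₂pos⟩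
  obtain ⟨x, hxmem, hxval⟩ := hIVT h0
  exact ⟨x, hsub hxmem, hxval⟩


/-- The (transposed) collision operator as an endomorphism of `ι → ℝ`. -/
noncomputable def Bop {ι : Type*} [Fintype ι] (ω t w : ι → ℝ) : Module.End ℝ (ι → ℝ) where
  toFun u := fun k => ω k * t k * (∑ k', u k' / w k') - t k * u k / w k
  map_add' u v := by
    funext k
    simp only [Pi.add_apply, add_div, Finset.sum_add_distrib]
    ring
  map_smul' r u := by
    funext k
    simp only [Pi.smul_apply, smul_eq_mul, RingHom.id_apply]
    have hsum : ∑ k', r * u k' / w k' = r * ∑ k', u k' / w k' := by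
      rw [Finset.mul_sum]
      exact Finset.sum_congr rfl (fun k' _ => by ring)
    rw [hsum]
    ring

lemma core {ι : Type*} [Fintype ι] [DecidableEq ι] [Nonempty ι]
    (ω t w : ι → ℝ) (g : ℝ → ι → ℝ)
    (hω : ∀ k, 0 < ω k) (hωs : ∑ k, ω k = 1)
    (ht : ∀ k, 0 < t k) (hw : ∀ k, w k ≠ 0)
    (hpinj : Function.Injective fun k => t k / w k)
    (hadm : ∑ k, ω k * w k / t k < 0)
    (hgd : ∀ z : ℝ, 0 < z → ∀ k, HasDerivAt (fun z' => g z' k)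
      (((∑ k', ω k' * t k' * g z k') - t k * g z k) / w k) z)
    (hgpos : ∀ z : ℝ, 0 < z → ∀ k, 0 < g z k)
    (hgtop : ∀ k, Tendsto (fun z => g z k) atTop (nhds 0)) :
    ∃ l m : ℝ, 0 < l ∧ 0 < m ∧
      Tendsto (fun z => Real.exp (l * z) *
        ∑ k, ω k * t k * (((∑ k', ω k' * t k' * g z k') - t k * g z k) / w k))
        atTop (nhds (-(l * m))) := by
  classical
  obtain ⟨p, htw⟩ : ∃ p : ι → ℝ, ∀ k, t k = p k * w k :=
    ⟨fun k => t k / w k, fun k => (div_mul_cancel₀ (t k) (hw k)).symm⟩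
  have hpeq : ∀ k, p k = t k / w k := by
    intro k
    rw [htw k, mul_div_cancel_right₀ _ (hw k)]
  have hpinj' : Function.Injective p := by
    intro a b hab
    apply hpinj
    show t a / w a = t b / w b
    rw [← hpeq a, ← hpeq b, hab]
  have hψ0 : ∑ k, ω k / p k < 0 := by
    have : ∀ k, ω k / p k = ω k * w k / t k := by
      intro k
      rw [hpeq k, div_div_eq_mul_div]
    rw [Finset.sum_congr rfl (fun k _ => this k)]
    exact hadm
  -- maximal pole
  obtain ⟨kmax, -, hkmax⟩ := Finset.exists_max_image Finset.univ p ⟨Classical.arbitrary ι, Finset.mem_univ _⟩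
  set s : Finset ι := Finset.univ.erase kmax with hs
  -- roots of ψ, one in each gap
  have hroot : ∀ k : ↥s, ∃ x : ℝ, (p k.1 < x ∧ ∀ j, p k.1 < p j → x < p j) ∧
      ∑ j, ω j / (p j - x) = 0 := by
    intro ⟨k, hk⟩
    have hkne : k ≠ kmax := Finset.ne_of_mem_erase hk
    have hklt : p k < p kmax :=
      lt_of_le_of_ne (hkmax k (Finset.mem_univ k)) (fun h => hkne (hpinj' h))
    set U : Finset ι := Finset.univ.filter (fun j => p k < p j) with hU
    have hUne : U.Nonempty := ⟨kmax, by simp [hU, hklt]⟩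
    obtain ⟨k₁, hk₁U, hk₁min⟩ := Finset.exists_min_image U p hUne
    have hk₁gt : p k < p k₁ := by
      simp only [hU, Finset.mem_filter] at hk₁U; exact hk₁U.2
    have hgap : ∀ j, p j ∉ Set.Ioo (p k) (p k₁) := by
      intro j hj
      have hjU : j ∈ U := by simp [hU, hj.1]
      exact absurd (hk₁min j hjU) (not_le.mpr hj.2)
    obtain ⟨x, hxmem, hxroot⟩ := root_in_gap ω p hω hpinj' k k₁ hk₁gt hgap
    refine ⟨x, ⟨hxmem.1, fun j hj => ?_⟩, hxroot⟩
    have hjU : j ∈ U := by simp [hU, hj]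
    exact lt_of_lt_of_le hxmem.2 (hk₁min j hjU)
  choose ξ hξspec hξroot using hroot
  have hξgt : ∀ k : ↥s, p k.1 < ξ k := fun k => (hξspec k).1
  have hξlt : ∀ (k : ↥s) (j : ι), p k.1 < p j → ξ k < p j := fun k => (hξspec k).2
  have hξne : ∀ (k : ↥s) (j : ι), p j - ξ k ≠ 0 := by
    intro k j
    rcases le_or_gt (p j) (p k.1) with h | h
    · have : p j < ξ k := lt_of_le_of_lt h (hξgt k)
      linarith
    · have := hξlt k j h
      linarith
  have hξ0 : ∀ k : ↥s, ξ k ≠ 0 := by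
    intro k hk0
    have := hξroot k
    rw [hk0] at this
    simp only [sub_zero] at this
    linarith
  have hξinj : Function.Injective ξ := by
    intro k k' hkk'
    by_contra hne
    have hpne : p k.1 ≠ p k'.1 := fun h => hne (Subtype.ext (hpinj' h))
    rcases lt_or_gt_of_ne hpne with h | h
    · have h1 := hξlt k k'.1 h
      have h2 := hξgt k'
      rw [hkk'] at h1
      linarith
    · have h1 := hξlt k' k.1 h
      have h2 := hξgt k
      rw [hkk'] at h2
      linarith
  -- eigenvectors of the transposed operator
  set W : Option ↥s → ι → ℝ := fun j => Option.elim j (fun k => ω k * w k)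
    (fun i k => ω k * t k / (p k - ξ i)) with hW
  set ξ' : Option ↥s → ℝ := fun j => Option.elim j 0 ξ with hξ'
  have hε : Function.Injective (fun j => -ξ' j) := by
    intro j j' hjj'
    simp only [neg_inj] at hjj'
    match j, j' with
    | Option.none, Option.none => rfl
    | Option.none, Option.some i => exact absurd hjj'.symm (by simpa [hξ'] using hξ0 i)
    | Option.some i, Option.none => exact absurd hjj' (by simpa [hξ'] using hξ0 i)
    | Option.some i, Option.some i' => simp only [hξ', Option.elim] at hjj'; rw [hξinj hjj']
  -- the secular identity at a root
  have happ : ∀ u : ι → ℝ, ∀ k, (Bop ω t w) u k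
      = ω k * t k * (∑ k', u k' / w k') - t k * u k / w k := fun u k => rfl
  have hsec : ∀ i : ↥s, ∑ k, (ω k * t k / (p k - ξ i)) / w k = 1 := by
    intro i
    have hkey : ∀ k, (ω k * t k / (p k - ξ i)) / w k = ω k + ξ i * (ω k / (p k - ξ i)) := by
      intro k
      rw [htw k]
      have h1 := hξne i k
      have h2 := hw k
      field_simp
      ring
    rw [Finset.sum_congr rfl (fun k _ => hkey k), Finset.sum_add_distrib, ← Finset.mul_sum,
      hξroot i, hωs]
    ring
  have heig : ∀ j, (Bop ω t w).HasEigenvector (-ξ' j) (W j) := by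
    intro j
    rw [Module.End.hasEigenvector_iff]
    constructor
    · rw [Module.End.mem_eigenspace_iff]
      match j with
      | Option.none =>
        funext k
        rw [happ]
        have hS : ∑ k', W Option.none k' / w k' = 1 := by
          rw [← hωs]
          refine Finset.sum_congr rfl (fun k' _ => ?_)
          simp only [hW, Option.elim]
          rw [mul_div_assoc, div_self (hw k'), mul_one]
        rw [hS]
        simp only [hW, hξ', Option.elim, Pi.smul_apply, smul_eq_mul]
        have h2 := hw k
        rw [neg_zero, zero_mul, sub_eq_zero]
        field_simp
      | Option.some i =>
        funext k
        rw [happ]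
        have hS : ∑ k', W (Option.some i) k' / w k' = 1 := by
          rw [← hsec i]
          exact Finset.sum_congr rfl (fun k' _ => by simp only [hW, Option.elim])
        rw [hS]
        simp only [hW, hξ', Option.elim, Pi.smul_apply, smul_eq_mul]
        have h1 := hξne i k
        have h2 := hw k
        rw [htw k]
        field_simp
        ring
    · intro h0
      have := congrFun h0 (Classical.arbitrary ι)
      match j with
      | Option.none =>
        simp only [hW, Option.elim, Pi.zero_apply] at this
        exact absurd this (mul_ne_zero (ne_of_gt (hω _)) (hw _))
      | Option.some i =>
        simp only [hW, Option.elim, Pi.zero_apply] at this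
        exact absurd this (div_ne_zero (mul_ne_zero (ne_of_gt (hω _)) (ne_of_gt (ht _))) (hξne i _))
  have hli : LinearIndependent ℝ W :=
    (Bop ω t w).eigenvectors_linearIndependent' (fun j => -ξ' j) hε W heig
  have hcard : Fintype.card (Option ↥s) = Module.finrank ℝ (ι → ℝ) := by
    rw [Module.finrank_pi, Fintype.card_option, Fintype.card_coe, hs,
      Finset.card_erase_of_mem (Finset.mem_univ kmax), Finset.card_univ]
    have : 1 ≤ Fintype.card ι := Fintype.card_pos
    omega
  set b := basisOfLinearIndependentOfCardEqFinrank hli hcard with hb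
  have hbW : ∀ j, b j = W j := fun j => by
    rw [hb, coe_basisOfLinearIndependentOfCardEqFinrank]
  set α : Option ↥s → ℝ := fun j => b.repr (fun k => ω k * t k) j with hα
  have hmW : ∀ k, ω k * t k = ∑ j, α j * W j k := by
    intro k
    have := b.sum_repr (fun k => ω k * t k)
    have h2 := congrFun this k
    rw [← h2]
    rw [Finset.sum_apply]
    exact Finset.sum_congr rfl (fun j _ => by rw [hbW j, Pi.smul_apply, smul_eq_mul])
  -- the scalar observables hⱼ and their ODEs
  set h : Option ↥s → ℝ → ℝ := fun j z => ∑ k, W j k * g z k with hh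
  have hd : ∀ j, ∀ z ∈ Set.Ioi (0:ℝ), HasDerivAt (h j) (-ξ' j * h j z) z := by
    intro j z hz
    have hz0 : (0:ℝ) < z := hz
    have hder : HasDerivAt (fun z' => ∑ k, W j k * g z' k)
        (∑ k, W j k * (((∑ k', ω k' * t k' * g z k') - t k * g z k) / w k)) z :=
      HasDerivAt.fun_sum (fun k _ => (hgd z hz0 k).const_mul (W j k))
    have hval : ∑ k, W j k * (((∑ k', ω k' * t k' * g z k') - t k * g z k) / w k)
        = -ξ' j * h j z := by
      set A : ℝ := ∑ k', ω k' * t k' * g z k' with hA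
      match j with
      | Option.none =>
        have key : ∀ k, W Option.none k * ((A - t k * g z k) / w k)
            = A * ω k - ω k * t k * g z k := by
          intro k
          simp only [hW, Option.elim]
          have h2 := hw k
          field_simp
        rw [Finset.sum_congr rfl (fun k _ => key k), Finset.sum_sub_distrib, ← Finset.mul_sum,
          hωs]
        have : ∑ k, ω k * t k * g z k = A := rfl
        rw [this]
        simp only [hξ', Option.elim]
        ring
      | Option.some i =>
        have key : ∀ k, W (Option.some i) k * ((A - t k * g z k) / w k)
            = A * (ω k + ξ i * (ω k / (p k - ξ i)))
              - (ω k * t k * g z k + ξ i * (W (Option.some i) k * g z k)) := by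
          intro k
          simp only [hW, Option.elim]
          have h1 := hξne i k
          have h2 := hw k
          rw [htw k]
          field_simp
          ring
        rw [Finset.sum_congr rfl (fun k _ => key k), Finset.sum_sub_distrib, ← Finset.mul_sum]
        have e1 : ∑ k, (ω k + ξ i * (ω k / (p k - ξ i))) = 1 := by
          rw [Finset.sum_add_distrib, ← Finset.mul_sum, hωs, hξroot i]
          ring
        have e2 : ∑ k, (ω k * t k * g z k + ξ i * (W (Option.some i) k * g z k))
            = A + ξ i * h (Option.some i) z := by
          rw [Finset.sum_add_distrib, ← Finset.mul_sum]
        rw [e1, e2]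
        simp only [hξ', Option.elim]
        ring
    rw [hval] at hder
    exact hder
  have hrep : ∀ j, ∀ z ∈ Set.Ioi (0:ℝ),
      h j z = (h j 1 * Real.exp (ξ' j)) * Real.exp (-ξ' j * z) :=
    fun j => expRep (ξ' j) (h j) (hd j)
  have htend0 : ∀ j, Tendsto (h j) atTop (nhds 0) := by
    intro j
    have : Tendsto (fun z => ∑ k, W j k * g z k) atTop (nhds (∑ k, W j k * 0)) :=
      tendsto_finset_sum _ (fun k _ => (hgtop k).const_mul (W j k))
    simpa using this
  set C : Option ↥s → ℝ := fun j => h j 1 * Real.exp (ξ' j) with hC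
  have hkill : ∀ j, ξ' j ≤ 0 → C j = 0 := by
    intro j hj
    have htC : Tendsto (fun z => C j * Real.exp (-ξ' j * z)) atTop (nhds 0) := by
      refine (htend0 j).congr' ?_
      filter_upwards [eventually_gt_atTop (0:ℝ)] with z hz
      exact hrep j z hz
    rcases eq_or_lt_of_le hj with heq | hlt
    · have hconst : Tendsto (fun _ : ℝ => C j) atTop (nhds 0) := by
        refine htC.congr (fun z => ?_)
        rw [heq]
        simp
      exact tendsto_nhds_unique tendsto_const_nhds hconst
    · by_contra hCne
      have habs : Tendsto (fun z => |C j * Real.exp (-ξ' j * z)|) atTop (nhds 0) := by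
        simpa using htC.abs
      have hev1 : ∀ᶠ z in atTop, |C j * Real.exp (-ξ' j * z)| < |C j| :=
        habs.eventually_lt_const (abs_pos.mpr hCne)
      have hev2 : ∀ᶠ z : ℝ in atTop, (0:ℝ) ≤ z := eventually_ge_atTop 0
      obtain ⟨z, h1, h2⟩ := (hev1.and hev2).exists
      have hle : |C j| ≤ |C j * Real.exp (-ξ' j * z)| := by
        have e1 : (1:ℝ) ≤ Real.exp (-ξ' j * z) := Real.one_le_exp (by nlinarith)
        calc |C j| = |C j| * 1 := (mul_one _).symm
          _ ≤ |C j| * Real.exp (-ξ' j * z) := by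
              have := abs_nonneg (C j)
              nlinarith
          _ = |C j| * |Real.exp (-ξ' j * z)| := by rw [abs_of_pos (Real.exp_pos _)]
          _ = |C j * Real.exp (-ξ' j * z)| := (abs_mul _ _).symm
      linarith
  set β : Option ↥s → ℝ := fun j => α j * C j with hβ
  have hβξ : ∀ j, β j ≠ 0 → 0 < ξ' j := by
    intro j hbne
    by_contra hle
    exact hbne (by rw [hβ]; simp [hkill j (le_of_not_gt hle)])
  have hIE : ∀ z ∈ Set.Ioi (0:ℝ),
      ∑ k, ω k * t k * g z k = ∑ j, β j * Real.exp (-ξ' j * z) := by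
    intro z hz
    calc ∑ k, ω k * t k * g z k = ∑ k, (∑ j, α j * W j k) * g z k :=
          Finset.sum_congr rfl (fun k _ => by rw [← hmW k])
      _ = ∑ k, ∑ j, α j * W j k * g z k :=
          Finset.sum_congr rfl (fun k _ => Finset.sum_mul _ _ _)
      _ = ∑ j, ∑ k, α j * W j k * g z k := Finset.sum_comm
      _ = ∑ j, α j * h j z := by
          refine Finset.sum_congr rfl (fun j _ => ?_)
          rw [hh, Finset.mul_sum]
          exact Finset.sum_congr rfl (fun k _ => by ring)
      _ = ∑ j, β j * Real.exp (-ξ' j * z) := by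
          refine Finset.sum_congr rfl (fun j _ => ?_)
          rw [hrep j z hz, hβ, hC]
          ring
  have hIpos : ∀ z ∈ Set.Ioi (0:ℝ), 0 < ∑ k, ω k * t k * g z k := fun z hz =>
    Finset.sum_pos (fun k _ => mul_pos (mul_pos (hω k) (ht k)) (hgpos z hz k))
      Finset.univ_nonempty
  set NZ : Finset (Option ↥s) := Finset.univ.filter (fun j => β j ≠ 0) with hNZdef
  have hNZ : NZ.Nonempty := by
    by_contra hne
    rw [Finset.not_nonempty_iff_eq_empty] at hne
    have hall : ∀ j, β j = 0 := by
      intro j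
      by_contra hb
      have hmem : j ∈ NZ := Finset.mem_filter.mpr ⟨Finset.mem_univ _, hb⟩
      rw [hne] at hmem
      exact absurd hmem (Finset.notMem_empty j)
    have h1 := hIE 1 (by norm_num)
    have h2 := hIpos 1 (by norm_num)
    rw [h1] at h2
    simp [hall] at h2
  obtain ⟨jstar, hjstarNZ, hmin⟩ := Finset.exists_min_image NZ ξ' hNZ
  have hβjstar : β jstar ≠ 0 := (Finset.mem_filter.mp hjstarNZ).2
  have hl : 0 < ξ' jstar := hβξ jstar hβjstar
  have hsome : ∀ j, β j ≠ 0 → ∃ i, j = Option.some i := by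
    intro j hb
    cases j with
    | none => exact absurd (hβξ Option.none hb) (by simp [hξ'])
    | some i => exact ⟨i, rfl⟩
  have huniq : ∀ j, j ≠ jstar → β j ≠ 0 → ξ' jstar < ξ' j := by
    intro j hne hb
    have hjNZ : j ∈ NZ := Finset.mem_filter.mpr ⟨Finset.mem_univ _, hb⟩
    rcases lt_or_eq_of_le (hmin j hjNZ) with hlt | heq
    · exact hlt
    · exfalso
      obtain ⟨i, rfl⟩ := hsome j hb
      obtain ⟨istar, rfl⟩ := hsome jstar hβjstar
      have : ξ istar = ξ i := by simpa [hξ'] using heq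
      exact hne (by rw [hξinj this.symm])
  -- the master limit computation
  have hlim : ∀ γ : Option ↥s → ℝ, (∀ j, j ≠ jstar → γ j ≠ 0 → β j ≠ 0) →
      Tendsto (fun z => ∑ j, γ j * Real.exp ((ξ' jstar - ξ' j) * z)) atTop
        (nhds (γ jstar)) := by
    intro γ hγ
    have hterm : ∀ j, Tendsto (fun z => γ j * Real.exp ((ξ' jstar - ξ' j) * z)) atTop
        (nhds (if j = jstar then γ j else 0)) := by
      intro j
      by_cases hj : j = jstar
      · subst hj
        rw [if_pos rfl]
        simpa using (tendsto_const_nhds : Tendsto (fun _ : ℝ => γ j) atTop (nhds (γ j)))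
      · rw [if_neg hj]
        by_cases hγ0 : γ j = 0
        · simpa [hγ0] using (tendsto_const_nhds : Tendsto (fun _ : ℝ => (0:ℝ)) atTop (nhds 0))
        · have hlt : ξ' jstar - ξ' j < 0 := sub_neg.mpr (huniq j hj (hγ j hj hγ0))
          have h1 : Tendsto (fun z : ℝ => (ξ' jstar - ξ' j) * z) atTop atBot :=
            tendsto_id.const_mul_atTop_of_neg hlt
          have h2 := Real.tendsto_exp_atBot.comp h1
          have h3 := h2.const_mul (γ j)
          simpa using h3
    have hsum := tendsto_finset_sum Finset.univ (fun j (_ : j ∈ Finset.univ) => hterm j)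
    have : ∑ j, (if j = jstar then γ j else 0) = γ jstar := by
      rw [Finset.sum_ite_eq' Finset.univ jstar γ]
      simp
    rw [this] at hsum
    exact hsum
  have hexpsplit : ∀ (a : ℝ) (j : Option ↥s) (z : ℝ),
      Real.exp (ξ' jstar * z) * (a * Real.exp (-ξ' j * z))
        = a * Real.exp ((ξ' jstar - ξ' j) * z) := by
    intro a j z
    rw [show (ξ' jstar - ξ' j) * z = ξ' jstar * z + -ξ' j * z by ring, Real.exp_add]
    ring
  -- positivity of the leading coefficient
  have htendI : Tendsto (fun z => Real.exp (ξ' jstar * z) * ∑ k, ω k * t k * g z k) atTop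
      (nhds (β jstar)) := by
    refine (hlim β (fun j _ hb => hb)).congr' ?_
    filter_upwards [eventually_gt_atTop (0:ℝ)] with z hz
    rw [hIE z hz, Finset.mul_sum]
    exact (Finset.sum_congr rfl (fun j _ => hexpsplit (β j) j z)).symm
  have hβpos : 0 < β jstar := by
    have hge : 0 ≤ β jstar := by
      refine ge_of_tendsto htendI ?_
      filter_upwards [eventually_gt_atTop (0:ℝ)] with z hz
      exact le_of_lt (mul_pos (Real.exp_pos _) (hIpos z hz))
    exact lt_of_le_of_ne hge (Ne.symm hβjstar)
  -- identification of the derivative on the right half line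
  have hDeq : ∀ z ∈ Set.Ioi (0:ℝ),
      (∑ k, ω k * t k * (((∑ k', ω k' * t k' * g z k') - t k * g z k) / w k))
        = ∑ j, β j * (-ξ' j * Real.exp (-ξ' j * z)) := by
    intro z hz
    have hF : HasDerivAt (fun z' => ∑ k, ω k * t k * g z' k)
        (∑ k, ω k * t k * (((∑ k', ω k' * t k' * g z k') - t k * g z k) / w k)) z :=
      HasDerivAt.fun_sum (fun k _ => (hgd z hz k).const_mul (ω k * t k))
    have hE : HasDerivAt (fun z' => ∑ j, β j * Real.exp (-ξ' j * z'))
        (∑ j, β j * (-ξ' j * Real.exp (-ξ' j * z))) z := by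
      apply HasDerivAt.fun_sum
      intro j _
      have he : HasDerivAt (fun z' => Real.exp (-ξ' j * z')) (-ξ' j * Real.exp (-ξ' j * z)) z := by
        have hlin : HasDerivAt (fun z' : ℝ => -ξ' j * z') (-ξ' j) z := by
          simpa using (hasDerivAt_id z).const_mul (-ξ' j)
        have := hlin.exp
        convert this using 1
        ring
      exact he.const_mul (β j)
    have heq : (fun z' => ∑ k, ω k * t k * g z' k)
        =ᶠ[nhds z] (fun z' => ∑ j, β j * Real.exp (-ξ' j * z')) := by
      filter_upwards [isOpen_Ioi.mem_nhds hz] with y hy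
      exact hIE y hy
    exact hF.unique (hE.congr_of_eventuallyEq heq)
  -- conclusion
  refine ⟨ξ' jstar, β jstar, hl, hβpos, ?_⟩
  have hγ : ∀ j, j ≠ jstar → (β j * -ξ' j) ≠ 0 → β j ≠ 0 :=
    fun j _ hne => left_ne_zero_of_mul hne
  have hfinal := hlim (fun j => β j * -ξ' j) hγ
  have : Tendsto (fun z => Real.exp (ξ' jstar * z) *
      ∑ k, ω k * t k * (((∑ k', ω k' * t k' * g z k') - t k * g z k) / w k)) atTop
      (nhds (β jstar * -ξ' jstar)) := by
    refine hfinal.congr' ?_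
    filter_upwards [eventually_gt_atTop (0:ℝ)] with z hz
    rw [hDeq z hz, Finset.mul_sum]
    refine (Finset.sum_congr rfl (fun j _ => ?_)).symm
    rw [← hexpsplit (β j * -ξ' j) j z]
    ring
  have hval : β jstar * -ξ' jstar = -(ξ' jstar * β jstar) := by ring
  rw [hval] at this
  exact this


/-- sign-determined rates give injective pole map -/
lemma pinj_helper {ι : Type*} (w tt : ι → ℝ) (a bb : ℝ) (ha : 0 < a) (hb : 0 < bb)
    (hw0 : ∀ k, w k ≠ 0) (hwinj : Function.Injective w)
    (htt : ∀ k, (0 < w k → tt k = a) ∧ (w k < 0 → tt k = bb)) :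
    Function.Injective fun k => tt k / w k := by
  intro j k hjk
  have hjk : tt j / w j = tt k / w k := hjk
  rcases lt_or_gt_of_ne (hw0 j) with hj | hj <;> rcases lt_or_gt_of_ne (hw0 k) with hk | hk
  · rw [(htt j).2 hj, (htt k).2 hk] at hjk
    have h2 := (div_eq_div_iff (hw0 j) (hw0 k)).mp hjk
    exact hwinj (mul_left_cancel₀ (ne_of_gt hb) h2).symm
  · exfalso
    rw [(htt j).2 hj, (htt k).1 hk] at hjk
    have h1 : bb / w j < 0 := div_neg_of_pos_of_neg hb hj
    have h2 : 0 < a / w k := div_pos ha hk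
    linarith
  · exfalso
    rw [(htt j).1 hj, (htt k).2 hk] at hjk
    have h1 : 0 < a / w j := div_pos ha hj
    have h2 : bb / w k < 0 := div_neg_of_pos_of_neg hb hk
    linarith
  · rw [(htt j).1 hj, (htt k).1 hk] at hjk
    have h2 := (div_eq_div_iff (hw0 j) (hw0 k)).mp hjk
    exact hwinj (mul_left_cancel₀ (ne_of_gt ha) h2).symm

theorem stmt1
    (K : ℕ) (hK : 1 ≤ K)
    (v ω : ℤ → ℝ)
    (hv0 : v 0 = 0)
    (hvsym : ∀ k ∈ Finset.Icc (-(K:ℤ)) (K:ℤ), v (-k) = - v k)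
    (hvmono : ∀ j ∈ Finset.Icc (-(K:ℤ)) (K:ℤ), ∀ k ∈ Finset.Icc (-(K:ℤ)) (K:ℤ), j < k → v j < v k)
    (hwpos : ∀ k ∈ Finset.Icc (-(K:ℤ)) (K:ℤ), 0 < ω k)
    (hwsym : ∀ k ∈ Finset.Icc (-(K:ℤ)) (K:ℤ), ω (-k) = ω k)
    (hwsum : ∑ k ∈ Finset.Icc (-(K:ℤ)) (K:ℤ), ω k = 1)
    (χS χN : ℝ) (hχS : χS ∈ Set.Ioo 0 (1/2 : ℝ)) (hχN : χN ∈ Set.Ioo 0 (1/2 : ℝ))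
    (c : ℝ) (hc0 : 0 < c) (hcK : c < v (K:ℤ))
    (hcv : ∀ k ∈ Finset.Icc (-(K:ℤ)) (K:ℤ), c ≠ v k)
    (Tp Tm : ℝ → ℝ) (T : ℝ → ℝ → ℝ)
    (hTpdef : ∀ u : ℝ, Tp u = if 0 < u then 1 + χS - χN else 1 - χS + χN)
    (hTmdef : ∀ u : ℝ, Tm u = if 0 < u then 1 - χS - χN else 1 + χS + χN)
    (hTdef : ∀ z u : ℝ, T z u = if 0 < z then Tp u else Tm u)
    (hadmL : 0 < ∑ k ∈ Finset.Icc (-(K:ℤ)) (K:ℤ), ω k * (v k - c) / Tm (v k - c))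
    (hadmR : ∑ k ∈ Finset.Icc (-(K:ℤ)) (K:ℤ), ω k * (v k - c) / Tp (v k - c) < 0)
    (f : ℝ → ℤ → ℝ)
    (hfc : ∀ k ∈ Finset.Icc (-(K:ℤ)) (K:ℤ), Continuous fun z => f z k)
    (hfeq : ∀ z : ℝ, z ≠ 0 → ∀ k ∈ Finset.Icc (-(K:ℤ)) (K:ℤ),
      HasDerivAt (fun z' => f z' k)
        (((∑ k' ∈ Finset.Icc (-(K:ℤ)) (K:ℤ), ω k' * T z (v k' - c) * f z k') -
          T z (v k - c) * f z k) / (v k - c)) z)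
    (hfpos : ∀ z : ℝ, ∀ k ∈ Finset.Icc (-(K:ℤ)) (K:ℤ), 0 < f z k)
    (hfint : MeasureTheory.Integrable fun z => ∑ k ∈ Finset.Icc (-(K:ℤ)) (K:ℤ), ω k * f z k)
    (hfnorm : (∫ z : ℝ, ∑ k ∈ Finset.Icc (-(K:ℤ)) (K:ℤ), ω k * f z k) = 1)
    (hftop : ∀ k ∈ Finset.Icc (-(K:ℤ)) (K:ℤ), Filter.Tendsto (fun z => f z k) Filter.atTop (nhds 0))
    (hfbot : ∀ k ∈ Finset.Icc (-(K:ℤ)) (K:ℤ), Filter.Tendsto (fun z => f z k) Filter.atBot (nhds 0)) :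
    ∃ I' : ℝ → ℝ,
      (∀ z : ℝ, z ≠ 0 →
        HasDerivAt (fun z' => ∑ k ∈ Finset.Icc (-(K:ℤ)) (K:ℤ), ω k * T z' (v k - c) * f z' k) (I' z) z) ∧
      ∃ lp mp lm mm : ℝ, 0 < lp ∧ 0 < mp ∧ 0 < lm ∧ 0 < mm ∧
        Filter.Tendsto (fun z => Real.exp (lp * z) * I' z) Filter.atTop (nhds (-mp)) ∧
        Filter.Tendsto (fun z => Real.exp (-lm * z) * I' z) Filter.atBot (nhds mm) ∧
        (∀ᶠ z in Filter.atTop, I' z < 0) ∧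
        (∀ᶠ z in Filter.atBot, 0 < I' z) := by
  classical
  set Icc := Finset.Icc (-(K:ℤ)) (K:ℤ) with hIcc
  have hK1 : (1:ℤ) ≤ (K:ℤ) := by exact_mod_cast hK
  have hmem : ∀ k : ℤ, k ∈ Icc ↔ -(K:ℤ) ≤ k ∧ k ≤ (K:ℤ) := fun k => Finset.mem_Icc
  have hmem0 : (0:ℤ) ∈ Icc := by rw [hmem]; omega
  have hmemneg : ∀ k ∈ Icc, -k ∈ Icc := by
    intro k hk
    rw [hmem] at *
    omega
  haveI : Nonempty {x // x ∈ Icc} := ⟨⟨0, hmem0⟩⟩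
  -- positivity of rates
  have hTp_pos : ∀ u : ℝ, 0 < Tp u := by
    intro u
    rw [hTpdef]
    obtain ⟨h1, h2⟩ := hχS
    obtain ⟨h3, h4⟩ := hχN
    split <;> linarith
  have hTm_pos : ∀ u : ℝ, 0 < Tm u := by
    intro u
    rw [hTmdef]
    obtain ⟨h1, h2⟩ := hχS
    obtain ⟨h3, h4⟩ := hχN
    split <;> linarith
  -- injectivity of velocities
  have hvinj : ∀ j ∈ Icc, ∀ k ∈ Icc, v j = v k → j = k := by
    intro j hj k hk hjk
    rcases lt_trichotomy j k with h | h | h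
    · exact absurd hjk (ne_of_lt (hvmono j hj k hk h))
    · exact h
    · exact absurd hjk.symm (ne_of_lt (hvmono k hk j hj h))
  have hwne : ∀ k ∈ Icc, v k - c ≠ 0 := by
    intro k hk h
    have hvk : v k = c := by linarith [sub_eq_zero.mp h]
    exact hcv k hk hvk.symm
  have hwne2 : ∀ k ∈ Icc, v k + c ≠ 0 := by
    intro k hk h
    have h1 : v (-k) = -v k := hvsym k hk
    have h2 : v (-k) = c := by rw [h1]; linarith
    exact hcv (-k) (hmemneg k hk) h2.symm
  -- T evaluation lemmas
  have hTz : ∀ z : ℝ, 0 < z → ∀ u, T z u = Tp u := fun z hz u => by rw [hTdef]; exact if_pos hz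
  have hTz' : ∀ z : ℝ, z < 0 → ∀ u, T z u = Tm u := fun z hz u => by
    rw [hTdef]; exact if_neg (not_lt.mpr (le_of_lt hz))
  -- the candidate derivative
  set I' : ℝ → ℝ := fun z => ∑ k ∈ Icc, ω k * T z (v k - c) *
      (((∑ k' ∈ Icc, ω k' * T z (v k' - c) * f z k') - T z (v k - c) * f z k) / (v k - c))
    with hI'def
  -- Part 1 : differentiability
  have hderiv : ∀ z : ℝ, z ≠ 0 →
      HasDerivAt (fun z' => ∑ k ∈ Icc, ω k * T z' (v k - c) * f z' k) (I' z) z := by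
    intro z hz
    rcases hz.lt_or_gt with hneg | hpos
    · have hder : HasDerivAt (fun z' => ∑ k ∈ Icc, ω k * Tm (v k - c) * f z' k)
          (∑ k ∈ Icc, ω k * Tm (v k - c) *
            (((∑ k' ∈ Icc, ω k' * T z (v k' - c) * f z k') - T z (v k - c) * f z k) / (v k - c))) z :=
        HasDerivAt.fun_sum (fun k hk => ((hfeq z hz k hk).const_mul (ω k * Tm (v k - c))))
      have hev : (fun z' => ∑ k ∈ Icc, ω k * T z' (v k - c) * f z' k)
          =ᶠ[nhds z] (fun z' => ∑ k ∈ Icc, ω k * Tm (v k - c) * f z' k) := by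
        filter_upwards [isOpen_Iio.mem_nhds hneg] with y hy
        exact Finset.sum_congr rfl (fun k _ => by rw [hTz' y hy])
      have hval : I' z = ∑ k ∈ Icc, ω k * Tm (v k - c) *
          (((∑ k' ∈ Icc, ω k' * T z (v k' - c) * f z k') - T z (v k - c) * f z k) / (v k - c)) := by
        rw [hI'def]
        exact Finset.sum_congr rfl (fun k _ => by rw [hTz' z hneg])
      rw [hval]
      exact hder.congr_of_eventuallyEq hev
    · have hder : HasDerivAt (fun z' => ∑ k ∈ Icc, ω k * Tp (v k - c) * f z' k)
          (∑ k ∈ Icc, ω k * Tp (v k - c) *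
            (((∑ k' ∈ Icc, ω k' * T z (v k' - c) * f z k') - T z (v k - c) * f z k) / (v k - c))) z :=
        HasDerivAt.fun_sum (fun k hk => ((hfeq z hz k hk).const_mul (ω k * Tp (v k - c))))
      have hev : (fun z' => ∑ k ∈ Icc, ω k * T z' (v k - c) * f z' k)
          =ᶠ[nhds z] (fun z' => ∑ k ∈ Icc, ω k * Tp (v k - c) * f z' k) := by
        filter_upwards [isOpen_Ioi.mem_nhds hpos] with y hy
        exact Finset.sum_congr rfl (fun k _ => by rw [hTz y hy])
      have hval : I' z = ∑ k ∈ Icc, ω k * Tp (v k - c) *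
          (((∑ k' ∈ Icc, ω k' * T z (v k' - c) * f z k') - T z (v k - c) * f z k) / (v k - c)) := by
        rw [hI'def]
        exact Finset.sum_congr rfl (fun k _ => by rw [hTz z hpos])
      rw [hval]
      exact hder.congr_of_eventuallyEq hev
  -- Part 2 : right half-line
  have hcoe : ∀ F : ℤ → ℝ, (∑ k : {x // x ∈ Icc}, F k.1) = ∑ k ∈ Icc, F k := fun F =>
    Finset.sum_coe_sort Icc F
  have hwinj' : Function.Injective (fun k : {x // x ∈ Icc} => v k.1 - c) := by
    intro j k hjk
    simp only at hjk
    have : v j.1 = v k.1 := by linarith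
    exact Subtype.ext (hvinj j.1 j.2 k.1 k.2 this)
  obtain ⟨lp, mp0, hlp, hmp0, htendR⟩ := core
    (fun k : {x // x ∈ Icc} => ω k.1) (fun k => Tp (v k.1 - c)) (fun k => v k.1 - c)
    (fun z k => f z k.1)
    (fun k => hwpos k.1 k.2)
    ((Finset.sum_coe_sort Icc ω).trans hwsum)
    (fun k => hTp_pos _)
    (fun k => hwne k.1 k.2)
    (by
      apply pinj_helper _ _ (1 + χS - χN) (1 - χS + χN)
      · obtain ⟨h1, h2⟩ := hχS; obtain ⟨h3, h4⟩ := hχN; linarith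
      · obtain ⟨h1, h2⟩ := hχS; obtain ⟨h3, h4⟩ := hχN; linarith
      · exact fun k => hwne k.1 k.2
      · exact hwinj'
      · intro k
        constructor
        · intro hpos'
          rw [hTpdef]
          exact if_pos hpos'
        · intro hneg'
          rw [hTpdef]
          exact if_neg (not_lt.mpr (le_of_lt hneg')))
    ((Finset.sum_coe_sort Icc (fun k => ω k * (v k - c) / Tp (v k - c))).trans_lt hadmR)
    (by
      intro z hz k
      have h0 := hfeq z (ne_of_gt hz) k.1 k.2
      have e1 : (∑ k' ∈ Icc, ω k' * T z (v k' - c) * f z k')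
          = ∑ k' : {x // x ∈ Icc}, ω k'.1 * Tp (v k'.1 - c) * f z k'.1 :=
        calc (∑ k' ∈ Icc, ω k' * T z (v k' - c) * f z k')
            = ∑ k' ∈ Icc, ω k' * Tp (v k' - c) * f z k' :=
              Finset.sum_congr rfl (fun k' _ => by rw [hTz z hz])
          _ = ∑ k' : {x // x ∈ Icc}, ω k'.1 * Tp (v k'.1 - c) * f z k'.1 :=
              (Finset.sum_coe_sort Icc (fun k' => ω k' * Tp (v k' - c) * f z k')).symm
      rw [e1] at h0
      rw [hTz z hz] at h0
      exact h0)
    (fun z hz k => hfpos z k.1 k.2)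
    (fun k => hftop k.1 k.2)
  -- transfer the right tendsto to I'
  have hI'R : ∀ᶠ z in atTop, (Real.exp (lp * z) *
      ∑ k : {x // x ∈ Icc}, ω k.1 * Tp (v k.1 - c) *
        (((∑ k' : {x // x ∈ Icc}, ω k'.1 * Tp (v k'.1 - c) * f z k'.1)
          - Tp (v k.1 - c) * f z k.1) / (v k.1 - c)))
      = Real.exp (lp * z) * I' z := by
    filter_upwards [eventually_gt_atTop (0:ℝ)] with z hz
    congr 1
    have e1 : (∑ k' ∈ Icc, ω k' * T z (v k' - c) * f z k')
        = ∑ k' : {x // x ∈ Icc}, ω k'.1 * Tp (v k'.1 - c) * f z k'.1 :=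
      calc (∑ k' ∈ Icc, ω k' * T z (v k' - c) * f z k')
          = ∑ k' ∈ Icc, ω k' * Tp (v k' - c) * f z k' :=
            Finset.sum_congr rfl (fun k' _ => by rw [hTz z hz])
        _ = ∑ k' : {x // x ∈ Icc}, ω k'.1 * Tp (v k'.1 - c) * f z k'.1 :=
            (Finset.sum_coe_sort Icc (fun k' => ω k' * Tp (v k' - c) * f z k')).symm
    calc (∑ k : {x // x ∈ Icc}, ω k.1 * Tp (v k.1 - c) *
        (((∑ k' : {x // x ∈ Icc}, ω k'.1 * Tp (v k'.1 - c) * f z k'.1)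
          - Tp (v k.1 - c) * f z k.1) / (v k.1 - c)))
        = ∑ k ∈ Icc, ω k * Tp (v k - c) *
          (((∑ k' : {x // x ∈ Icc}, ω k'.1 * Tp (v k'.1 - c) * f z k'.1)
            - Tp (v k - c) * f z k) / (v k - c)) :=
          Finset.sum_coe_sort Icc (fun k => ω k * Tp (v k - c) *
            (((∑ k' : {x // x ∈ Icc}, ω k'.1 * Tp (v k'.1 - c) * f z k'.1)
              - Tp (v k - c) * f z k) / (v k - c)))
      _ = I' z := by
          rw [hI'def]
          refine Finset.sum_congr rfl (fun k _ => ?_)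
          rw [← e1, hTz z hz]
  have htendRI : Tendsto (fun z => Real.exp (lp * z) * I' z) atTop (nhds (-(lp * mp0))) :=
    htendR.congr' hI'R
  -- Part 3 : left half-line via reflection
  have hmemneg' : ∀ k : {x // x ∈ Icc}, -k.1 ∈ Icc := fun k => hmemneg k.1 k.2
  set e : {x // x ∈ Icc} ≃ {x // x ∈ Icc} :=
    ⟨fun k => ⟨-k.1, hmemneg' k⟩, fun k => ⟨-k.1, hmemneg' k⟩,
     fun k => Subtype.ext (by simp), fun k => Subtype.ext (by simp)⟩ with he
  have hsumrefl : ∀ F : {x // x ∈ Icc} → ℝ, (∑ k, F (e k)) = ∑ k, F k := fun F =>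
    Equiv.sum_comp e F
  have hwinj2 : Function.Injective (fun k : {x // x ∈ Icc} => v k.1 + c) := by
    intro j k hjk
    simp only at hjk
    have : v j.1 = v k.1 := by linarith
    exact Subtype.ext (hvinj j.1 j.2 k.1 k.2 this)
  -- the reflected tumbling sum
  have hsumL : ∀ z : ℝ, z < 0 → (∑ k' ∈ Icc, ω k' * T z (v k' - c) * f z k')
      = ∑ k' : {x // x ∈ Icc}, ω k'.1 * Tm (-v k'.1 - c) * f z (-k'.1) := by
    intro z hz
    calc (∑ k' ∈ Icc, ω k' * T z (v k' - c) * f z k')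
        = ∑ k' ∈ Icc, ω k' * Tm (v k' - c) * f z k' :=
          Finset.sum_congr rfl (fun k' _ => by rw [hTz' z hz])
      _ = ∑ k' : {x // x ∈ Icc}, ω k'.1 * Tm (v k'.1 - c) * f z k'.1 :=
          (Finset.sum_coe_sort Icc (fun k' => ω k' * Tm (v k' - c) * f z k')).symm
      _ = ∑ k' : {x // x ∈ Icc}, (fun j : {x // x ∈ Icc} => ω j.1 * Tm (v j.1 - c) * f z j.1) (e k') :=
          (hsumrefl _).symm
      _ = ∑ k' : {x // x ∈ Icc}, ω k'.1 * Tm (-v k'.1 - c) * f z (-k'.1) := by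
          refine Finset.sum_congr rfl (fun k' _ => ?_)
          simp only [he, Equiv.coe_fn_mk]
          rw [hwsym k'.1 k'.2, hvsym k'.1 k'.2]
  obtain ⟨lm, mm0, hlm, hmm0, htendL⟩ := core
    (fun k : {x // x ∈ Icc} => ω k.1) (fun k => Tm (-v k.1 - c)) (fun k => v k.1 + c)
    (fun z k => f (-z) (-k.1))
    (fun k => hwpos k.1 k.2)
    ((Finset.sum_coe_sort Icc ω).trans hwsum)
    (fun k => hTm_pos _)
    (fun k => hwne2 k.1 k.2)
    (by
      apply pinj_helper _ _ (1 + χS + χN) (1 - χS - χN)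
      · obtain ⟨h1, h2⟩ := hχS; obtain ⟨h3, h4⟩ := hχN; linarith
      · obtain ⟨h1, h2⟩ := hχS; obtain ⟨h3, h4⟩ := hχN; linarith
      · exact fun k => hwne2 k.1 k.2
      · exact hwinj2
      · intro k
        constructor
        · intro hpos'
          rw [hTmdef]
          exact if_neg (by simp only [not_lt]; linarith)
        · intro hneg'
          rw [hTmdef]
          exact if_pos (by linarith))
    (by
      have heq : (∑ k : {x // x ∈ Icc}, ω k.1 * (v k.1 + c) / Tm (-v k.1 - c))
          = -(∑ k ∈ Icc, ω k * (v k - c) / Tm (v k - c)) := by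
        calc (∑ k : {x // x ∈ Icc}, ω k.1 * (v k.1 + c) / Tm (-v k.1 - c))
            = ∑ k : {x // x ∈ Icc},
                (fun j : {x // x ∈ Icc} => ω j.1 * (v j.1 + c) / Tm (-v j.1 - c)) (e k) :=
              (hsumrefl _).symm
          _ = ∑ k : {x // x ∈ Icc}, -(ω k.1 * (v k.1 - c) / Tm (v k.1 - c)) := by
              refine Finset.sum_congr rfl (fun k _ => ?_)
              simp only [he, Equiv.coe_fn_mk]
              rw [hwsym k.1 k.2, hvsym k.1 k.2, neg_neg]
              rw [show -v k.1 + c = -(v k.1 - c) by ring, mul_neg, neg_div]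
          _ = -∑ k : {x // x ∈ Icc}, ω k.1 * (v k.1 - c) / Tm (v k.1 - c) := by
              rw [Finset.sum_neg_distrib]
          _ = -(∑ k ∈ Icc, ω k * (v k - c) / Tm (v k - c)) := by
              rw [Finset.sum_coe_sort Icc (fun k => ω k * (v k - c) / Tm (v k - c))]
      rw [heq]
      exact neg_lt_zero.mpr hadmL)
    (by
      intro z hz k
      have hzne : (-z : ℝ) ≠ 0 := neg_ne_zero.mpr (ne_of_gt hz)
      have hz' : (-z : ℝ) < 0 := by linarith
      have h0 := hfeq (-z) hzne (-k.1) (hmemneg' k)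
      have hneg : HasDerivAt (fun z' : ℝ => -z') (-1 : ℝ) z := by
        simpa using (hasDerivAt_id z).fun_neg
      have hcomp := HasDerivAt.comp z h0 hneg
      have hval : ((∑ k' ∈ Icc, ω k' * T (-z) (v k' - c) * f (-z) k') -
            T (-z) (v (-k.1) - c) * f (-z) (-k.1)) / (v (-k.1) - c) * (-1)
          = ((∑ k' : {x // x ∈ Icc}, ω k'.1 * Tm (-v k'.1 - c) * f (-z) (-k'.1))
              - Tm (-v k.1 - c) * f (-z) (-k.1)) / (v k.1 + c) := by
        rw [hsumL (-z) hz', hTz' (-z) hz', hvsym k.1 k.2]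
        rw [show -v k.1 - c = -(v k.1 + c) by ring, div_neg]
        ring
      rw [hval] at hcomp
      exact hcomp)
    (fun z hz k => hfpos (-z) (-k.1) (hmemneg' k))
    (fun k => (hfbot (-k.1) (hmemneg' k)).comp tendsto_neg_atTop_atBot)
  -- transfer the left tendsto to I'
  have hI'L : ∀ᶠ z in atTop, (Real.exp (lm * z) *
      ∑ k : {x // x ∈ Icc}, ω k.1 * Tm (-v k.1 - c) *
        (((∑ k' : {x // x ∈ Icc}, ω k'.1 * Tm (-v k'.1 - c) * f (-z) (-k'.1))
          - Tm (-v k.1 - c) * f (-z) (-k.1)) / (v k.1 + c)))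
      = Real.exp (lm * z) * (-(I' (-z))) := by
    filter_upwards [eventually_gt_atTop (0:ℝ)] with z hz
    congr 1
    have hz' : (-z : ℝ) < 0 := by linarith
    calc (∑ k : {x // x ∈ Icc}, ω k.1 * Tm (-v k.1 - c) *
        (((∑ k' : {x // x ∈ Icc}, ω k'.1 * Tm (-v k'.1 - c) * f (-z) (-k'.1))
          - Tm (-v k.1 - c) * f (-z) (-k.1)) / (v k.1 + c)))
        = ∑ k : {x // x ∈ Icc}, (fun j : {x // x ∈ Icc} => ω j.1 * Tm (-v j.1 - c) *
            (((∑ k' : {x // x ∈ Icc}, ω k'.1 * Tm (-v k'.1 - c) * f (-z) (-k'.1))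
              - Tm (-v j.1 - c) * f (-z) (-j.1)) / (v j.1 + c))) (e k) := (hsumrefl _).symm
      _ = ∑ k : {x // x ∈ Icc}, -(ω k.1 * Tm (v k.1 - c) *
            (((∑ k' : {x // x ∈ Icc}, ω k'.1 * Tm (-v k'.1 - c) * f (-z) (-k'.1))
              - Tm (v k.1 - c) * f (-z) k.1) / (v k.1 - c))) := by
          refine Finset.sum_congr rfl (fun k _ => ?_)
          simp only [he, Equiv.coe_fn_mk]
          rw [hwsym k.1 k.2, hvsym k.1 k.2, neg_neg, neg_neg]
          rw [show -v k.1 + c = -(v k.1 - c) by ring, div_neg]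
          ring
      _ = -∑ k : {x // x ∈ Icc}, ω k.1 * Tm (v k.1 - c) *
            (((∑ k' : {x // x ∈ Icc}, ω k'.1 * Tm (-v k'.1 - c) * f (-z) (-k'.1))
              - Tm (v k.1 - c) * f (-z) k.1) / (v k.1 - c)) := by
          rw [Finset.sum_neg_distrib]
      _ = -(I' (-z)) := by
          congr 1
          calc (∑ k : {x // x ∈ Icc}, ω k.1 * Tm (v k.1 - c) *
              (((∑ k' : {x // x ∈ Icc}, ω k'.1 * Tm (-v k'.1 - c) * f (-z) (-k'.1))
                - Tm (v k.1 - c) * f (-z) k.1) / (v k.1 - c)))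
              = ∑ k ∈ Icc, ω k * Tm (v k - c) *
                (((∑ k' : {x // x ∈ Icc}, ω k'.1 * Tm (-v k'.1 - c) * f (-z) (-k'.1))
                  - Tm (v k - c) * f (-z) k) / (v k - c)) :=
                Finset.sum_coe_sort Icc (fun k => ω k * Tm (v k - c) *
                  (((∑ k' : {x // x ∈ Icc}, ω k'.1 * Tm (-v k'.1 - c) * f (-z) (-k'.1))
                    - Tm (v k - c) * f (-z) k) / (v k - c)))
            _ = I' (-z) := by
                rw [hI'def]
                refine Finset.sum_congr rfl (fun k _ => ?_)
                rw [← hsumL (-z) hz', hTz' (-z) hz']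
  have htendLI : Tendsto (fun z => Real.exp (lm * z) * (-(I' (-z)))) atTop
      (nhds (-(lm * mm0))) := htendL.congr' hI'L
  have htendLI2 : Tendsto (fun z => Real.exp (lm * z) * I' (-z)) atTop (nhds (lm * mm0)) := by
    have := htendLI.neg
    refine this.congr (fun z => ?_) |>.mono_right (by rw [neg_neg])
    ring
  have htendBot : Tendsto (fun z => Real.exp (-lm * z) * I' z) atBot (nhds (lm * mm0)) := by
    have hcomp := htendLI2.comp tendsto_neg_atBot_atTop
    refine hcomp.congr (fun z => ?_)
    simp only [Function.comp]
    rw [neg_neg, show lm * -z = -lm * z by ring]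
  -- final assembly
  refine ⟨I', hderiv, lp, lp * mp0, lm, lm * mm0, hlp, mul_pos hlp hmp0, hlm,
    mul_pos hlm hmm0, htendRI, htendBot, ?_, ?_⟩
  · have hev := htendRI.eventually_lt_const (show -(lp * mp0) < 0 by nlinarith)
    filter_upwards [hev] with z hz
    nlinarith [Real.exp_pos (lp * z)]
  · have hev := htendBot.eventually_const_lt (show (0:ℝ) < lm * mm0 from mul_pos hlm hmm0)
    filter_upwards [hev] with z hz
    nlinarith [Real.exp_pos (-lm * z)]
end

section
/- Assume the mean algebraic run length on the right is negative: Σ_k ω_k (v_k − c)/T₊(v_k − c) < 0. Then there exists a unique λ in the open interval (0, T₊⁺/(v_K − c)) satisfying the right dispersion relation. -/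
open MeasureTheory Filter

theorem stmt4
    (K : ℕ) (hK : 1 ≤ K)
    (v ω : ℤ → ℝ)
    (hv0 : v 0 = 0)
    (hvsym : ∀ k ∈ Finset.Icc (-(K:ℤ)) (K:ℤ), v (-k) = - v k)
    (hvmono : ∀ j ∈ Finset.Icc (-(K:ℤ)) (K:ℤ), ∀ k ∈ Finset.Icc (-(K:ℤ)) (K:ℤ), j < k → v j < v k)
    (hwpos : ∀ k ∈ Finset.Icc (-(K:ℤ)) (K:ℤ), 0 < ω k)
    (hwsym : ∀ k ∈ Finset.Icc (-(K:ℤ)) (K:ℤ), ω (-k) = ω k)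
    (hwsum : ∑ k ∈ Finset.Icc (-(K:ℤ)) (K:ℤ), ω k = 1)
    (χS χN : ℝ) (hχS : χS ∈ Set.Ioo 0 (1/2 : ℝ)) (hχN : χN ∈ Set.Ioo 0 (1/2 : ℝ))
    (c : ℝ) (hc0 : 0 < c) (hcK : c < v (K:ℤ))
    (hcv : ∀ k ∈ Finset.Icc (-(K:ℤ)) (K:ℤ), c ≠ v k)
    (Tp : ℝ → ℝ)
    (hTpdef : ∀ u : ℝ, Tp u = if 0 < u then 1 + χS - χN else 1 - χS + χN)
    (hadmR : ∑ k ∈ Finset.Icc (-(K:ℤ)) (K:ℤ), ω k * (v k - c) / Tp (v k - c) < 0) :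
    ∃! lam : ℝ, lam ∈ Set.Ioo 0 ((1 + χS - χN) / (v (K:ℤ) - c)) ∧
      (∀ k ∈ Finset.Icc (-(K:ℤ)) (K:ℤ), Tp (v k - c) - lam * (v k - c) ≠ 0) ∧
      (∑ k ∈ Finset.Icc (-(K:ℤ)) (K:ℤ), ω k * Tp (v k - c) / (Tp (v k - c) - lam * (v k - c))) = 1 := by
  obtain ⟨hχS0, hχS1⟩ := hχS
  obtain ⟨hχN0, hχN1⟩ := hχN
  set S := Finset.Icc (-(K:ℤ)) (K:ℤ) with hS
  clear_value S
  have hKmem : (K:ℤ) ∈ S := by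
    simp only [hS, Finset.mem_Icc]
    omega
  set Tplus := 1 + χS - χN with hTplusdef
  clear_value Tplus
  have hTplus_pos : 0 < Tplus := by rw [hTplusdef]; linarith
  have hTpos : ∀ x : ℝ, 0 < Tp x := by
    intro x; rw [hTpdef x]; split <;> linarith
  have hTval : ∀ x : ℝ, 0 < x → Tp x = Tplus := by
    intro x hx; rw [hTpdef x, if_pos hx, hTplusdef]
  have huK : 0 < v (K:ℤ) - c := sub_pos.mpr hcK
  have hune : ∀ k ∈ S, v k - c ≠ 0 := by
    intro k hk; exact sub_ne_zero.mpr (hcv k hk).symm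
  have huleK : ∀ k ∈ S, v k - c ≤ v (K:ℤ) - c := by
    intro k hk
    have hk2 := hk
    rw [hS] at hk2
    have hk' : k ≤ (K:ℤ) := (Finset.mem_Icc.mp hk2).2
    rcases eq_or_lt_of_le hk' with h | h
    · rw [h]
    · have := hvmono k hk (K:ℤ) hKmem h
      linarith
  set lamstar := Tplus / (v (K:ℤ) - c) with hlamstardef
  clear_value lamstar
  have hlamstar_pos : 0 < lamstar := by rw [hlamstardef]; exact div_pos hTplus_pos huK
  -- positivity of denominators
  have hDpos : ∀ lam : ℝ, 0 ≤ lam → lam < lamstar → ∀ k ∈ S,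
      0 < Tp (v k - c) - lam * (v k - c) := by
    intro lam h0 h1 k hk
    rcases lt_or_gt_of_ne (hune k hk) with hneg | hpos
    · have hT := hTpos (v k - c)
      nlinarith
    · rw [hTval _ hpos]
      have h2 : lam * (v k - c) < lamstar * (v k - c) :=
        mul_lt_mul_of_pos_right h1 hpos
      have h3 : lamstar * (v k - c) ≤ lamstar * (v (K:ℤ) - c) :=
        mul_le_mul_of_nonneg_left (huleK k hk) hlamstar_pos.le
      have h4 : lamstar * (v (K:ℤ) - c) = Tplus := by
        rw [hlamstardef]; field_simp
      linarith
  set ψ : ℝ → ℝ := fun lam => ∑ k ∈ S, ω k * (v k - c) / (Tp (v k - c) - lam * (v k - c))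
    with hψdef
  clear_value ψ
  have hψ0 : ψ 0 < 0 := by
    rw [hψdef]; simpa using hadmR
  -- strict monotonicity of ψ on [0, lamstar)
  have hmono : ∀ a b : ℝ, 0 ≤ a → a < b → b < lamstar → ψ a < ψ b := by
    intro a b ha hab hb
    have ha' : a < lamstar := hab.trans hb
    rw [hψdef]
    apply Finset.sum_lt_sum_of_nonempty ⟨(K:ℤ), hKmem⟩
    intro k hk
    have hDa := hDpos a ha ha' k hk
    have hDb := hDpos b (ha.trans hab.le) hb k hk
    have hu2 : 0 < (v k - c) * (v k - c) := mul_self_pos.mpr (hune k hk)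
    have hwk := hwpos k hk
    rw [div_lt_div_iff₀ hDa hDb]
    nlinarith [mul_pos (mul_pos hwk hu2) (sub_pos.mpr hab)]
  -- continuity of ψ
  have hcont : ∀ b : ℝ, 0 ≤ b → b < lamstar → ContinuousOn ψ (Set.Icc 0 b) := by
    intro b hb0 hbs
    rw [hψdef]
    apply continuousOn_finset_sum
    intro k hk
    apply ContinuousOn.div continuousOn_const
    · exact (continuousOn_const.sub (continuousOn_id.mul continuousOn_const))
    · intro x hx
      exact (hDpos x hx.1 (lt_of_le_of_lt hx.2 hbs) k hk).ne'
  -- bound for the terms other than K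
  set B := ∑ k ∈ S.erase (K:ℤ), ω k * |v k - c| / Tp (v k - c) with hBdef
  clear_value B
  have hBnn : 0 ≤ B := by
    rw [hBdef]
    apply Finset.sum_nonneg
    intro k hk
    have hT := hTpos (v k - c)
    have hw := hwpos k (Finset.mem_of_mem_erase hk)
    apply div_nonneg _ hT.le
    exact mul_nonneg hw.le (abs_nonneg _)
  set δ := min (Tplus / 2) (ω (K:ℤ) * (v (K:ℤ) - c) / (B + 1)) with hδdef
  clear_value δ
  have hωK := hwpos (K:ℤ) hKmem
  have hδpos : 0 < δ := by
    rw [hδdef]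
    exact lt_min (by linarith) (div_pos (mul_pos hωK huK) (by linarith))
  have hδle1 : δ ≤ Tplus / 2 := by rw [hδdef]; exact min_le_left _ _
  have hδle2 : δ ≤ ω (K:ℤ) * (v (K:ℤ) - c) / (B + 1) := by rw [hδdef]; exact min_le_right _ _
  set lam0 := (Tplus - δ) / (v (K:ℤ) - c) with hlam0def
  clear_value lam0
  have hlam0pos : 0 < lam0 := by rw [hlam0def]; exact div_pos (by linarith) huK
  have hlam0lt : lam0 < lamstar := by
    rw [hlam0def, hlamstardef]
    apply div_lt_div_of_pos_right (by linarith) huK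
  have hDK : Tp (v (K:ℤ) - c) - lam0 * (v (K:ℤ) - c) = δ := by
    rw [hTval _ huK, hlam0def]
    field_simp
    ring
  have hψlam0 : 0 < ψ lam0 := by
    have hsplit : ψ lam0 = ω (K:ℤ) * (v (K:ℤ) - c) / (Tp (v (K:ℤ) - c) - lam0 * (v (K:ℤ) - c))
        + ∑ k ∈ S.erase (K:ℤ), ω k * (v k - c) / (Tp (v k - c) - lam0 * (v k - c)) := by
      rw [hψdef]
      exact (Finset.add_sum_erase S _ hKmem).symm
    have hrest : -B ≤ ∑ k ∈ S.erase (K:ℤ), ω k * (v k - c) / (Tp (v k - c) - lam0 * (v k - c)) := by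
      rw [hBdef, ← Finset.sum_neg_distrib]
      apply Finset.sum_le_sum
      intro k hk
      have hkS : k ∈ S := Finset.mem_of_mem_erase hk
      have hD := hDpos lam0 hlam0pos.le hlam0lt k hkS
      have hT := hTpos (v k - c)
      have hwk := hwpos k hkS
      rcases lt_or_gt_of_ne (hune k hkS) with hneg | hpos
      · rw [abs_of_neg hneg]
        have heq : -(ω k * -(v k - c) / Tp (v k - c)) = ω k * (v k - c) / Tp (v k - c) := by
          ring
        rw [heq, div_le_div_iff₀ hT hD]
        nlinarith [mul_nonneg (mul_nonneg hwk.le hlam0pos.le) (mul_self_nonneg (v k - c))]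
      · have h1 : 0 ≤ ω k * (v k - c) / (Tp (v k - c) - lam0 * (v k - c)) := by positivity
        have h2 : 0 ≤ ω k * |v k - c| / Tp (v k - c) := by positivity
        linarith
    have hKterm : ω (K:ℤ) * (v (K:ℤ) - c) / (Tp (v (K:ℤ) - c) - lam0 * (v (K:ℤ) - c))
        = ω (K:ℤ) * (v (K:ℤ) - c) / δ := by rw [hDK]
    have hbig : B + 1 ≤ ω (K:ℤ) * (v (K:ℤ) - c) / δ := by
      have hB1 : (0:ℝ) < B + 1 := by linarith
      have h2 : δ * (B + 1) ≤ ω (K:ℤ) * (v (K:ℤ) - c) := by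
        have h3 := mul_le_mul_of_nonneg_right hδle2 hB1.le
        rwa [div_mul_cancel₀ _ hB1.ne'] at h3
      rw [le_div_iff₀ hδpos]
      exact le_of_eq_of_le (mul_comm _ _) h2
    rw [hsplit, hKterm]
    linarith
  -- intermediate value theorem
  obtain ⟨lam, hlamIoo, hψlam⟩ :=
    intermediate_value_Ioo hlam0pos.le (hcont lam0 hlam0pos.le hlam0lt) ⟨hψ0, hψlam0⟩
  have hlampos : 0 < lam := hlamIoo.1
  have hlamlt : lam < lamstar := hlamIoo.2.trans hlam0lt
  -- the dispersion sum equals 1 + y * ψ y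
  have hequiv : ∀ y : ℝ, 0 < y → y < lamstar →
      (∑ k ∈ S, ω k * Tp (v k - c) / (Tp (v k - c) - y * (v k - c))) = 1 + y * ψ y := by
    intro y hy0 hys
    have hterm : ∀ k ∈ S, ω k * Tp (v k - c) / (Tp (v k - c) - y * (v k - c))
        = ω k + y * (ω k * (v k - c) / (Tp (v k - c) - y * (v k - c))) := by
      intro k hk
      have hD := hDpos y hy0.le hys k hk
      rw [div_eq_iff hD.ne', add_mul, mul_assoc y, div_mul_cancel₀ _ hD.ne']
      ring
    rw [Finset.sum_congr rfl hterm, Finset.sum_add_distrib, hwsum, ← Finset.mul_sum, hψdef]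
  refine ⟨lam, ⟨⟨hlampos, hlamlt⟩, fun k hk => (hDpos lam hlampos.le hlamlt k hk).ne', ?_⟩, ?_⟩
  · rw [hequiv lam hlampos hlamlt, hψlam]
    ring
  · rintro y ⟨⟨hy0, hy1⟩, -, hysum⟩
    have hψy : ψ y = 0 := by
      rw [hequiv y hy0 hy1] at hysum
      have : y * ψ y = 0 := by linarith
      rcases mul_eq_zero.mp this with h | h
      · exact absurd h hy0.ne'
      · exact h
    rcases lt_trichotomy y lam with h | h | h
    · have := hmono y lam hy0.le h hlamlt
      rw [hψy, hψlam] at this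
      exact absurd this (lt_irrefl 0)
    · exact h
    · have := hmono lam y hlampos.le h hy1
      rw [hψy, hψlam] at this
      exact absurd this (lt_irrefl 0)
end

section
/- Assume the mean algebraic run length on the left is positive: Σ_k ω_k (v_k − c)/T₋(v_k − c) > 0. Then there exists a unique λ in the open interval (T₋⁻/(v_{−K} − c), 0) satisfying the left dispersion relation. -/
open MeasureTheory Filter

set_option maxHeartbeats 1000000 in
theorem stmt5
    (K : ℕ) (hK : 1 ≤ K)
    (v ω : ℤ → ℝ)
    (hv0 : v 0 = 0)
    (hvsym : ∀ k ∈ Finset.Icc (-(K:ℤ)) (K:ℤ), v (-k) = - v k)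
    (hvmono : ∀ j ∈ Finset.Icc (-(K:ℤ)) (K:ℤ), ∀ k ∈ Finset.Icc (-(K:ℤ)) (K:ℤ), j < k → v j < v k)
    (hwpos : ∀ k ∈ Finset.Icc (-(K:ℤ)) (K:ℤ), 0 < ω k)
    (hwsym : ∀ k ∈ Finset.Icc (-(K:ℤ)) (K:ℤ), ω (-k) = ω k)
    (hwsum : ∑ k ∈ Finset.Icc (-(K:ℤ)) (K:ℤ), ω k = 1)
    (χS χN : ℝ) (hχS : χS ∈ Set.Ioo 0 (1/2 : ℝ)) (hχN : χN ∈ Set.Ioo 0 (1/2 : ℝ))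
    (c : ℝ) (hc0 : 0 < c) (hcK : c < v (K:ℤ))
    (hcv : ∀ k ∈ Finset.Icc (-(K:ℤ)) (K:ℤ), c ≠ v k)
    (Tm : ℝ → ℝ)
    (hTmdef : ∀ u : ℝ, Tm u = if 0 < u then 1 - χS - χN else 1 + χS + χN)
    (hadmL : 0 < ∑ k ∈ Finset.Icc (-(K:ℤ)) (K:ℤ), ω k * (v k - c) / Tm (v k - c)) :
    ∃! lam : ℝ, lam ∈ Set.Ioo ((1 + χS + χN) / (v (-(K:ℤ)) - c)) 0 ∧
      (∀ k ∈ Finset.Icc (-(K:ℤ)) (K:ℤ), Tm (v k - c) - lam * (v k - c) ≠ 0) ∧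
      (∑ k ∈ Finset.Icc (-(K:ℤ)) (K:ℤ), ω k * Tm (v k - c) / (Tm (v k - c) - lam * (v k - c))) = 1 := by
  obtain ⟨hχS1, hχS2⟩ := hχS
  obtain ⟨hχN1, hχN2⟩ := hχN
  set s := Finset.Icc (-(K:ℤ)) (K:ℤ) with hs
  clear_value s
  have hTpos : ∀ u : ℝ, 0 < Tm u := by
    intro u; rw [hTmdef]; split <;> linarith
  have hKmem : (K:ℤ) ∈ s := by simp [hs, Finset.mem_Icc]
  have hmKmem : (-(K:ℤ)) ∈ s := by simp [hs, Finset.mem_Icc]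
  have hvmK : v (-(K:ℤ)) = - v (K:ℤ) := hvsym (K:ℤ) hKmem
  have huK : 0 < v (K:ℤ) - c := sub_pos.mpr hcK
  have humK : v (-(K:ℤ)) - c < 0 := by rw [hvmK]; linarith
  have hune : ∀ k ∈ s, v k - c ≠ 0 := fun k hk => sub_ne_zero_of_ne (Ne.symm (hcv k hk))
  have hvle : ∀ k ∈ s, v (-(K:ℤ)) - c ≤ v k - c := by
    intro k hk
    have hk' := hk
    rw [hs, Finset.mem_Icc] at hk'
    rcases eq_or_lt_of_le hk'.1 with h | h
    · rw [h]
    · exact sub_le_sub_right (le_of_lt (hvmono _ hmKmem k hk h)) c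
  have hTmK : Tm (v (-(K:ℤ)) - c) = 1 + χS + χN := by
    rw [hTmdef, if_neg (not_lt.mpr humK.le)]
  set a : ℝ := (1 + χS + χN) / (v (-(K:ℤ)) - c) with ha_def
  clear_value a
  have hTmpos : (0:ℝ) < 1 + χS + χN := by linarith
  have ha0 : a < 0 := by rw [ha_def]; exact div_neg_of_pos_of_neg hTmpos humK
  have hauK : a * (v (-(K:ℤ)) - c) = 1 + χS + χN := by rw [ha_def]; exact div_mul_cancel₀ _ (ne_of_lt humK)
  have hDpos : ∀ lam : ℝ, a < lam → lam ≤ 0 → ∀ k ∈ s,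
      0 < Tm (v k - c) - lam * (v k - c) := by
    intro lam h1 h2 k hk
    rcases (hune k hk).lt_or_gt with hu | hu
    · rw [hTmdef, if_neg (not_lt.mpr hu.le)]
      have h3 := hvle k hk
      nlinarith [mul_nonneg (neg_nonneg.mpr h2) (sub_nonneg.mpr h3),
        mul_pos (sub_pos.mpr h1) (neg_pos.mpr humK)]
    · nlinarith [hTpos (v k - c), mul_nonneg (neg_nonneg.mpr h2) hu.le]
  set ψ : ℝ → ℝ := fun lam => ∑ k ∈ s, ω k * (v k - c) / (Tm (v k - c) - lam * (v k - c))
    with hψdef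
  clear_value ψ
  have hmono : ∀ lam1 lam2 : ℝ, a < lam1 → lam1 < lam2 → lam2 ≤ 0 → ψ lam1 < ψ lam2 := by
    intro lam1 lam2 h1 h12 h2
    simp only [hψdef]
    apply Finset.sum_lt_sum
    · intro k hk
      have hd1 := hDpos lam1 h1 (by linarith) k hk
      have hd2 := hDpos lam2 (by linarith) h2 k hk
      rw [div_le_div_iff₀ hd1 hd2]
      nlinarith [mul_nonneg (mul_nonneg (hwpos k hk).le (mul_self_nonneg (v k - c)))
        (sub_pos.mpr h12).le]
    · refine ⟨(K:ℤ), hKmem, ?_⟩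
      have hd1 := hDpos lam1 h1 (by linarith) (K:ℤ) hKmem
      have hd2 := hDpos lam2 (by linarith) h2 (K:ℤ) hKmem
      rw [div_lt_div_iff₀ hd1 hd2]
      nlinarith [mul_pos (mul_pos (hwpos _ hKmem) (mul_pos huK huK)) (sub_pos.mpr h12)]
  have hψ0 : 0 < ψ 0 := by simpa [hψdef] using hadmL
  have hkey : ∀ lam : ℝ, (∀ k ∈ s, Tm (v k - c) - lam * (v k - c) ≠ 0) →
      (∑ k ∈ s, ω k * Tm (v k - c) / (Tm (v k - c) - lam * (v k - c))) = 1 + lam * ψ lam := by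
    intro lam h
    have h1 : ∀ k ∈ s, ω k * Tm (v k - c) / (Tm (v k - c) - lam * (v k - c))
        = ω k + lam * (ω k * (v k - c) / (Tm (v k - c) - lam * (v k - c))) := by
      intro k hk
      have hD := h k hk
      rw [mul_div_assoc', add_div' _ _ _ hD]
      congr 1; ring
    rw [Finset.sum_congr rfl h1, Finset.sum_add_distrib, hwsum]
    simp only [hψdef]
    rw [Finset.mul_sum]
  set M : ℝ := ∑ k ∈ s, |ω k * (v k - c) / Tm (v k - c)| with hM
  clear_value M
  have hM0 : 0 ≤ M := by rw [hM]; exact Finset.sum_nonneg fun k _ => abs_nonneg _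
  obtain ⟨ε, hε1, hε2, hεpos⟩ : ∃ ε : ℝ, ε ≤ -a/2 ∧ ε ≤ ω (-(K:ℤ)) / (M+1) ∧ 0 < ε :=
    ⟨min (-a/2) (ω (-(K:ℤ)) / (M+1)), min_le_left _ _, min_le_right _ _,
      lt_min (by linarith) (div_pos (hwpos _ hmKmem) (by linarith))⟩
  have hl'a : a < a + ε := by linarith
  have hl'0 : a + ε < 0 := by linarith
  have hterm : ω (-(K:ℤ)) * (v (-(K:ℤ)) - c) /
      (Tm (v (-(K:ℤ)) - c) - (a + ε) * (v (-(K:ℤ)) - c)) ≤ -(M+1) := by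
    have hDval : Tm (v (-(K:ℤ)) - c) - (a + ε) * (v (-(K:ℤ)) - c)
        = ε * (-(v (-(K:ℤ)) - c)) := by
      rw [hTmK]; linear_combination -hauK
    have hu' : v (-(K:ℤ)) - c ≠ 0 := humK.ne
    have hval : ω (-(K:ℤ)) * (v (-(K:ℤ)) - c) / (ε * (-(v (-(K:ℤ)) - c)))
        = -(ω (-(K:ℤ)) / ε) := by
      rw [div_eq_iff (mul_ne_zero hεpos.ne' (neg_ne_zero.mpr hu'))]
      field_simp
    rw [hDval, hval]
    have h3 : ε * (M+1) ≤ ω (-(K:ℤ)) := by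
      have := (le_div_iff₀ (by linarith : (0:ℝ) < M+1)).mp hε2
      linarith
    have h4 : M + 1 ≤ ω (-(K:ℤ)) / ε := (le_div_iff₀ hεpos).mpr (by linarith)
    linarith
  have hbound : ∀ k ∈ s, ω k * (v k - c) / (Tm (v k - c) - (a + ε) * (v k - c))
      ≤ |ω k * (v k - c) / Tm (v k - c)| := by
    intro k hk
    have hD := hDpos (a + ε) hl'a hl'0.le k hk
    rcases (hune k hk).lt_or_gt with hu | hu
    · have h1 : ω k * (v k - c) ≤ 0 := mul_nonpos_of_nonneg_of_nonpos (hwpos k hk).le hu.le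
      have h2 : ω k * (v k - c) / (Tm (v k - c) - (a + ε) * (v k - c)) ≤ 0 :=
        div_nonpos_of_nonpos_of_nonneg h1 hD.le
      exact h2.trans (abs_nonneg _)
    · have h1 : ω k * (v k - c) / (Tm (v k - c) - (a + ε) * (v k - c))
          ≤ ω k * (v k - c) / Tm (v k - c) := by
        rw [div_le_div_iff₀ hD (hTpos _)]
        have hp : 0 ≤ ω k * ((v k - c) * (v k - c)) * (-(a + ε)) :=
          mul_nonneg (mul_nonneg (hwpos k hk).le (mul_self_nonneg _)) (neg_nonneg.mpr hl'0.le)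
        nlinarith [hp]
      exact h1.trans (le_abs_self _)
  have hψl' : ψ (a + ε) < 0 := by
    have hsplit : ψ (a + ε) = ω (-(K:ℤ)) * (v (-(K:ℤ)) - c) /
        (Tm (v (-(K:ℤ)) - c) - (a + ε) * (v (-(K:ℤ)) - c))
        + ∑ k ∈ s.erase (-(K:ℤ)), ω k * (v k - c) / (Tm (v k - c) - (a + ε) * (v k - c)) := by
      simp only [hψdef]
      exact (Finset.add_sum_erase s _ hmKmem).symm
    have h1 : ∑ k ∈ s.erase (-(K:ℤ)), ω k * (v k - c) / (Tm (v k - c) - (a + ε) * (v k - c))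
        ≤ M := by
      calc ∑ k ∈ s.erase (-(K:ℤ)), ω k * (v k - c) / (Tm (v k - c) - (a + ε) * (v k - c))
          ≤ ∑ k ∈ s.erase (-(K:ℤ)), |ω k * (v k - c) / Tm (v k - c)| :=
            Finset.sum_le_sum fun k hk => hbound k (Finset.mem_of_mem_erase hk)
        _ ≤ M := by
            rw [hM]
            exact Finset.sum_le_sum_of_subset_of_nonneg (Finset.erase_subset _ _)
              fun k _ _ => abs_nonneg _
    rw [hsplit]
    linarith
  have hcont : ContinuousOn ψ (Set.Icc (a + ε) 0) := by
    simp only [hψdef]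
    apply continuousOn_finset_sum
    intro k hk
    apply ContinuousOn.div continuousOn_const
    · exact (continuous_const.sub (continuous_id.mul continuous_const)).continuousOn
    · intro x hx
      exact (hDpos x (lt_of_lt_of_le hl'a hx.1) hx.2 k hk).ne'
  obtain ⟨lam0, hlam0mem, hlam0⟩ := intermediate_value_Icc hl'0.le hcont
    (⟨hψl'.le, hψ0.le⟩ : (0:ℝ) ∈ Set.Icc (ψ (a + ε)) (ψ 0))
  have hlam0a : a < lam0 := lt_of_lt_of_le hl'a hlam0mem.1
  have hlam00 : lam0 < 0 := lt_of_le_of_ne hlam0mem.2 (fun h => absurd (h ▸ hlam0) hψ0.ne')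
  have hDne : ∀ k ∈ s, Tm (v k - c) - lam0 * (v k - c) ≠ 0 :=
    fun k hk => (hDpos lam0 hlam0a hlam00.le k hk).ne'
  refine ⟨lam0, ⟨⟨hlam0a, hlam00⟩, hDne, ?_⟩, ?_⟩
  · rw [hkey lam0 hDne, hlam0, mul_zero, add_zero]
  · rintro lam ⟨⟨hl1, hl2⟩, hne, hsum⟩
    have h1 : ψ lam = 0 := by
      have h2 := hkey lam hne
      rw [hsum] at h2
      have h3 : lam * ψ lam = 0 := by linarith
      rcases mul_eq_zero.mp h3 with h | h
      · exact absurd h hl2.ne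
      · exact h
    rcases lt_trichotomy lam lam0 with h | h | h
    · have := hmono lam lam0 hl1 h hlam00.le
      rw [h1, hlam0] at this
      exact absurd this (lt_irrefl 0)
    · exact h
    · have := hmono lam0 lam hlam0a h hl2.le
      rw [h1, hlam0] at this
      exact absurd this (lt_irrefl 0)
end

section
/- Let f be a profile that is positive everywhere, normalized by ∫_ℝ ρ(z) dz = 1, and such that f(z,v_k) → 0 as z → +∞ for every k. Then for every z > 0 and every k with v_k < c, one has f(z,v_k) ≤ (1 + χ_S + χ_N)/(c − v_k). -/
open MeasureTheory Filter

theorem stmt7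
    (K : ℕ) (hK : 1 ≤ K)
    (v ω : ℤ → ℝ)
    (hv0 : v 0 = 0)
    (hvsym : ∀ k ∈ Finset.Icc (-(K:ℤ)) (K:ℤ), v (-k) = - v k)
    (hvmono : ∀ j ∈ Finset.Icc (-(K:ℤ)) (K:ℤ), ∀ k ∈ Finset.Icc (-(K:ℤ)) (K:ℤ), j < k → v j < v k)
    (hwpos : ∀ k ∈ Finset.Icc (-(K:ℤ)) (K:ℤ), 0 < ω k)
    (hwsym : ∀ k ∈ Finset.Icc (-(K:ℤ)) (K:ℤ), ω (-k) = ω k)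
    (hwsum : ∑ k ∈ Finset.Icc (-(K:ℤ)) (K:ℤ), ω k = 1)
    (χS χN : ℝ) (hχS : χS ∈ Set.Ioo 0 (1/2 : ℝ)) (hχN : χN ∈ Set.Ioo 0 (1/2 : ℝ))
    (c : ℝ) (hc0 : 0 < c) (hcK : c < v (K:ℤ))
    (hcv : ∀ k ∈ Finset.Icc (-(K:ℤ)) (K:ℤ), c ≠ v k)
    (Tp Tm : ℝ → ℝ) (T : ℝ → ℝ → ℝ)
    (hTpdef : ∀ u : ℝ, Tp u = if 0 < u then 1 + χS - χN else 1 - χS + χN)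
    (hTmdef : ∀ u : ℝ, Tm u = if 0 < u then 1 - χS - χN else 1 + χS + χN)
    (hTdef : ∀ z u : ℝ, T z u = if 0 < z then Tp u else Tm u)
    (f : ℝ → ℤ → ℝ)
    (hfc : ∀ k ∈ Finset.Icc (-(K:ℤ)) (K:ℤ), Continuous fun z => f z k)
    (hfeq : ∀ z : ℝ, z ≠ 0 → ∀ k ∈ Finset.Icc (-(K:ℤ)) (K:ℤ),
      HasDerivAt (fun z' => f z' k)
        (((∑ k' ∈ Finset.Icc (-(K:ℤ)) (K:ℤ), ω k' * T z (v k' - c) * f z k') -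
          T z (v k - c) * f z k) / (v k - c)) z)
    (hfpos : ∀ z : ℝ, ∀ k ∈ Finset.Icc (-(K:ℤ)) (K:ℤ), 0 < f z k)
    (hfint : MeasureTheory.Integrable fun z => ∑ k ∈ Finset.Icc (-(K:ℤ)) (K:ℤ), ω k * f z k)
    (hfnorm : (∫ z : ℝ, ∑ k ∈ Finset.Icc (-(K:ℤ)) (K:ℤ), ω k * f z k) = 1)
    (hftop : ∀ k ∈ Finset.Icc (-(K:ℤ)) (K:ℤ), Filter.Tendsto (fun z => f z k) Filter.atTop (nhds 0)) :
    ∀ z : ℝ, 0 < z → ∀ k ∈ Finset.Icc (-(K:ℤ)) (K:ℤ), v k < c →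
      f z k ≤ (1 + χS + χN) / (c - v k) := by

  intro z hz k hk hvk
  obtain ⟨hχS0, hχS1⟩ := hχS
  obtain ⟨hχN0, hχN1⟩ := hχN
  have hw : 0 < c - v k := sub_pos.mpr hvk
  have hM0pos : (0:ℝ) < 1 + χS + χN := by linarith
  set ρ : ℝ → ℝ := fun y => ∑ k' ∈ Finset.Icc (-(K:ℤ)) (K:ℤ), ω k' * f y k' with hρ
  have hρc : Continuous ρ :=
    continuous_finset_sum _ fun k' hk' => continuous_const.mul (hfc k' hk')
  have hρnn : ∀ y, 0 ≤ ρ y := fun y =>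
    Finset.sum_nonneg fun k' hk' => le_of_lt (mul_pos (hwpos k' hk') (hfpos y k' hk'))
  have hTbd : ∀ y u : ℝ, 0 < y → 0 ≤ T y u ∧ T y u ≤ 1 + χS + χN := by
    intro y u hy
    rw [hTdef, if_pos hy, hTpdef]
    split <;> constructor <;> linarith
  set G : ℝ → ℝ := fun y => ∫ t in z..y, ρ t with hG
  have hGd : ∀ y, HasDerivAt G (ρ y) y := fun y =>
    intervalIntegral.integral_hasDerivAt_right (hρc.intervalIntegrable z y)
      (hρc.stronglyMeasurableAtFilter _ _) hρc.continuousAt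
  set F : ℝ → ℝ := fun y => f y k + (1 + χS + χN) / (c - v k) * G y with hF
  have hFd : ∀ y : ℝ, 0 < y →
      HasDerivAt F
        (((∑ k' ∈ Finset.Icc (-(K:ℤ)) (K:ℤ), ω k' * T y (v k' - c) * f y k') -
          T y (v k - c) * f y k) / (v k - c) + (1 + χS + χN) / (c - v k) * ρ y) y :=
    fun y hy => (hfeq y hy.ne' k hk).add ((hGd y).const_mul _)
  have hFd0 : ∀ y : ℝ, 0 < y →
      0 ≤ ((∑ k' ∈ Finset.Icc (-(K:ℤ)) (K:ℤ), ω k' * T y (v k' - c) * f y k') -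
          T y (v k - c) * f y k) / (v k - c) + (1 + χS + χN) / (c - v k) * ρ y := by
    intro y hy
    have hTg : 0 ≤ T y (v k - c) * f y k :=
      mul_nonneg (hTbd y _ hy).1 (hfpos y k hk).le
    have hI : (∑ k' ∈ Finset.Icc (-(K:ℤ)) (K:ℤ), ω k' * T y (v k' - c) * f y k') ≤
        (1 + χS + χN) * ρ y := by
      rw [hρ]
      simp only [Finset.mul_sum]
      apply Finset.sum_le_sum
      intro k' hk'
      calc ω k' * T y (v k' - c) * f y k' ≤ ω k' * (1 + χS + χN) * f y k' := by
            exact mul_le_mul_of_nonneg_right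
              (mul_le_mul_of_nonneg_left (hTbd y _ hy).2 (hwpos k' hk').le) (hfpos y k' hk').le
        _ = (1 + χS + χN) * (ω k' * f y k') := by ring
    have hne : v k - c ≠ 0 := by intro h; linarith [sub_eq_zero.mp h]
    have hne2 : c - v k ≠ 0 := hw.ne'
    have heq : ((∑ k' ∈ Finset.Icc (-(K:ℤ)) (K:ℤ), ω k' * T y (v k' - c) * f y k') -
          T y (v k - c) * f y k) / (v k - c) + (1 + χS + χN) / (c - v k) * ρ y =
        (T y (v k - c) * f y k -
          (∑ k' ∈ Finset.Icc (-(K:ℤ)) (K:ℤ), ω k' * T y (v k' - c) * f y k') +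
          (1 + χS + χN) * ρ y) / (c - v k) := by
      field_simp
      ring
    rw [heq]
    apply div_nonneg _ hw.le
    linarith
  have hGcont : Continuous G := by
    have : Differentiable ℝ G := fun y => (hGd y).differentiableAt
    exact this.continuous
  have key : ∀ R : ℝ, z ≤ R → f z k ≤ f R k + (1 + χS + χN) / (c - v k) := by
    intro R hR
    have mono : MonotoneOn F (Set.Icc z R) := by
      apply monotoneOn_of_deriv_nonneg (convex_Icc z R)
      · exact ((hfc k hk).add (continuous_const.mul hGcont)).continuousOn
      · intro x hx
        rw [interior_Icc] at hx
        exact (hFd x (hz.trans hx.1)).differentiableAt.differentiableWithinAt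
      · intro x hx
        rw [interior_Icc] at hx
        rw [(hFd x (hz.trans hx.1)).deriv]
        exact hFd0 x (hz.trans hx.1)
    have hFzR : F z ≤ F R :=
      mono (Set.left_mem_Icc.mpr hR) (Set.right_mem_Icc.mpr hR) hR
    have hGz : G z = 0 := intervalIntegral.integral_same
    have hGR : G R ≤ 1 := by
      rw [hG]
      simp only []
      rw [intervalIntegral.integral_of_le hR]
      calc (∫ t in Set.Ioc z R, ρ t) ≤ ∫ t, ρ t :=
            setIntegral_le_integral hfint (Filter.Eventually.of_forall hρnn)
        _ = 1 := hfnorm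
    have hM1 : 0 ≤ (1 + χS + χN) / (c - v k) := div_nonneg hM0pos.le hw.le
    rw [hF] at hFzR
    simp only [hGz, mul_zero, add_zero] at hFzR
    nlinarith [mul_le_mul_of_nonneg_left hGR hM1]
  have hlim : Filter.Tendsto (fun R => f R k + (1 + χS + χN) / (c - v k)) Filter.atTop
      (nhds (0 + (1 + χS + χN) / (c - v k))) := (hftop k hk).add tendsto_const_nhds
  rw [zero_add] at hlim
  exact ge_of_tendsto hlim (Filter.eventually_atTop.mpr ⟨z, key⟩)
end

section
/- If λ and μ are two distinct real numbers each satisfying the right dispersion relation, then the following orthogonality identity holds: Σ_k ω_k (v_k − c) T₊(v_k − c) / [(T₊(v_k − c) − λ(v_k − c))(T₊(v_k − c) − μ(v_k − c))] = 0. -/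
open MeasureTheory Filter

theorem stmt8
    (K : ℕ) (hK : 1 ≤ K)
    (v ω : ℤ → ℝ)
    (hv0 : v 0 = 0)
    (hvsym : ∀ k ∈ Finset.Icc (-(K:ℤ)) (K:ℤ), v (-k) = - v k)
    (hvmono : ∀ j ∈ Finset.Icc (-(K:ℤ)) (K:ℤ), ∀ k ∈ Finset.Icc (-(K:ℤ)) (K:ℤ), j < k → v j < v k)
    (hwpos : ∀ k ∈ Finset.Icc (-(K:ℤ)) (K:ℤ), 0 < ω k)
    (hwsym : ∀ k ∈ Finset.Icc (-(K:ℤ)) (K:ℤ), ω (-k) = ω k)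
    (hwsum : ∑ k ∈ Finset.Icc (-(K:ℤ)) (K:ℤ), ω k = 1)
    (χS χN : ℝ) (hχS : χS ∈ Set.Ioo 0 (1/2 : ℝ)) (hχN : χN ∈ Set.Ioo 0 (1/2 : ℝ))
    (c : ℝ) (hc0 : 0 < c) (hcK : c < v (K:ℤ))
    (hcv : ∀ k ∈ Finset.Icc (-(K:ℤ)) (K:ℤ), c ≠ v k)
    (Tp : ℝ → ℝ)
    (hTpdef : ∀ u : ℝ, Tp u = if 0 < u then 1 + χS - χN else 1 - χS + χN)
    (lam mu : ℝ) (hne : lam ≠ mu)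
    (hlam : (∀ k ∈ Finset.Icc (-(K:ℤ)) (K:ℤ), Tp (v k - c) - lam * (v k - c) ≠ 0) ∧
      (∑ k ∈ Finset.Icc (-(K:ℤ)) (K:ℤ), ω k * Tp (v k - c) / (Tp (v k - c) - lam * (v k - c))) = 1)
    (hmu : (∀ k ∈ Finset.Icc (-(K:ℤ)) (K:ℤ), Tp (v k - c) - mu * (v k - c) ≠ 0) ∧
      (∑ k ∈ Finset.Icc (-(K:ℤ)) (K:ℤ), ω k * Tp (v k - c) / (Tp (v k - c) - mu * (v k - c))) = 1) :
    (∑ k ∈ Finset.Icc (-(K:ℤ)) (K:ℤ),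
        ω k * (v k - c) * Tp (v k - c) /
          ((Tp (v k - c) - lam * (v k - c)) * (Tp (v k - c) - mu * (v k - c)))) = 0 := by
  have key : (lam - mu) * (∑ k ∈ Finset.Icc (-(K:ℤ)) (K:ℤ),
      ω k * (v k - c) * Tp (v k - c) /
        ((Tp (v k - c) - lam * (v k - c)) * (Tp (v k - c) - mu * (v k - c)))) = 0 := by
    rw [Finset.mul_sum]
    have : ∀ k ∈ Finset.Icc (-(K:ℤ)) (K:ℤ),
        (lam - mu) * (ω k * (v k - c) * Tp (v k - c) /
          ((Tp (v k - c) - lam * (v k - c)) * (Tp (v k - c) - mu * (v k - c)))) =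
        ω k * Tp (v k - c) / (Tp (v k - c) - lam * (v k - c)) -
        ω k * Tp (v k - c) / (Tp (v k - c) - mu * (v k - c)) := by
      intro k hk
      have hA := hlam.1 k hk
      have hB := hmu.1 k hk
      field_simp
      ring
    rw [Finset.sum_congr rfl this, Finset.sum_sub_distrib, hlam.2, hmu.2]
    ring
  have hlm : lam - mu ≠ 0 := sub_ne_zero.mpr hne
  exact (mul_eq_zero.mp key).resolve_left hlm
end

section
/- If λ and μ are two distinct nonzero real numbers each satisfying the right dispersion relation, then Σ_k ω_k (v_k − c)² / [(T₊(v_k − c) − λ(v_k − c))(T₊(v_k − c) − μ(v_k − c))] = 0. -/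
open MeasureTheory Filter

theorem stmt9
    (K : ℕ) (hK : 1 ≤ K)
    (v ω : ℤ → ℝ)
    (hv0 : v 0 = 0)
    (hvsym : ∀ k ∈ Finset.Icc (-(K:ℤ)) (K:ℤ), v (-k) = - v k)
    (hvmono : ∀ j ∈ Finset.Icc (-(K:ℤ)) (K:ℤ), ∀ k ∈ Finset.Icc (-(K:ℤ)) (K:ℤ), j < k → v j < v k)
    (hwpos : ∀ k ∈ Finset.Icc (-(K:ℤ)) (K:ℤ), 0 < ω k)
    (hwsym : ∀ k ∈ Finset.Icc (-(K:ℤ)) (K:ℤ), ω (-k) = ω k)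
    (hwsum : ∑ k ∈ Finset.Icc (-(K:ℤ)) (K:ℤ), ω k = 1)
    (χS χN : ℝ) (hχS : χS ∈ Set.Ioo 0 (1/2 : ℝ)) (hχN : χN ∈ Set.Ioo 0 (1/2 : ℝ))
    (c : ℝ) (hc0 : 0 < c) (hcK : c < v (K:ℤ))
    (hcv : ∀ k ∈ Finset.Icc (-(K:ℤ)) (K:ℤ), c ≠ v k)
    (Tp : ℝ → ℝ)
    (hTpdef : ∀ u : ℝ, Tp u = if 0 < u then 1 + χS - χN else 1 - χS + χN)
    (lam mu : ℝ) (hne : lam ≠ mu) (hlam0 : lam ≠ 0) (hmu0 : mu ≠ 0)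
    (hlam : (∀ k ∈ Finset.Icc (-(K:ℤ)) (K:ℤ), Tp (v k - c) - lam * (v k - c) ≠ 0) ∧
      (∑ k ∈ Finset.Icc (-(K:ℤ)) (K:ℤ), ω k * Tp (v k - c) / (Tp (v k - c) - lam * (v k - c))) = 1)
    (hmu : (∀ k ∈ Finset.Icc (-(K:ℤ)) (K:ℤ), Tp (v k - c) - mu * (v k - c) ≠ 0) ∧
      (∑ k ∈ Finset.Icc (-(K:ℤ)) (K:ℤ), ω k * Tp (v k - c) / (Tp (v k - c) - mu * (v k - c))) = 1) :
    (∑ k ∈ Finset.Icc (-(K:ℤ)) (K:ℤ),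
        ω k * (v k - c) ^ 2 /
          ((Tp (v k - c) - lam * (v k - c)) * (Tp (v k - c) - mu * (v k - c)))) = 0 := by
  obtain ⟨hlamne, hlamsum⟩ := hlam
  obtain ⟨hmune, hmusum⟩ := hmu
  set s := Finset.Icc (-(K:ℤ)) (K:ℤ)
  -- first moment sums vanish
  have key : ∀ (t : ℝ), t ≠ 0 → (∀ k ∈ s, Tp (v k - c) - t * (v k - c) ≠ 0) →
      (∑ k ∈ s, ω k * Tp (v k - c) / (Tp (v k - c) - t * (v k - c))) = 1 →
      (∑ k ∈ s, ω k * (v k - c) / (Tp (v k - c) - t * (v k - c))) = 0 := by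
    intro t ht hne' hsum
    have h1 : t * (∑ k ∈ s, ω k * (v k - c) / (Tp (v k - c) - t * (v k - c)))
        = ∑ k ∈ s, (ω k * Tp (v k - c) / (Tp (v k - c) - t * (v k - c)) - ω k) := by
      rw [Finset.mul_sum]
      refine Finset.sum_congr rfl fun k hk => ?_
      have hd := hne' k hk
      field_simp
      ring
    rw [Finset.sum_sub_distrib, hsum, hwsum, sub_self] at h1
    exact (mul_eq_zero.mp h1).resolve_left ht
  have hL := key lam hlam0 hlamne hlamsum
  have hM := key mu hmu0 hmune hmusum
  have h2 : (lam - mu) * (∑ k ∈ s, ω k * (v k - c) ^ 2 /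
      ((Tp (v k - c) - lam * (v k - c)) * (Tp (v k - c) - mu * (v k - c))))
      = ∑ k ∈ s, (ω k * (v k - c) / (Tp (v k - c) - lam * (v k - c))
          - ω k * (v k - c) / (Tp (v k - c) - mu * (v k - c))) := by
    rw [Finset.mul_sum]
    refine Finset.sum_congr rfl fun k hk => ?_
    have hdl := hlamne k hk
    have hdm := hmune k hk
    field_simp
    ring
  rw [Finset.sum_sub_distrib, hL, hM, sub_self] at h2
  exact (mul_eq_zero.mp h2).resolve_left (sub_ne_zero.mpr hne)
end

section
/- Let λ_{J+1}, …, λ_K be pairwise distinct real numbers each satisfying the right dispersion relation, let b_{J+1}, …, b_K be real coefficients, and set g(v_k) = Σ_{j=J+1}^{K} b_j/(T₊(v_k − c) − λ_j(v_k − c)) for each k. Then for every i ∈ {J+1,…,K} such that Σ_k ω_k (v_k − c) T₊(v_k − c)/(T₊(v_k − c) − λ_i(v_k − c))² ≠ 0, one has b_i = [Σ_k ω_k (v_k − c) g(v_k) T₊(v_k − c)/(T₊(v_k − c) − λ_i(v_k − c))] / [Σ_k ω_k (v_k − c) T₊(v_k − c)/(T₊(v_k − c) − λ_i(v_k − c))²].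 -/
open MeasureTheory Filter

theorem stmt10
    (K : ℕ) (hK : 1 ≤ K)
    (v ω : ℤ → ℝ)
    (hv0 : v 0 = 0)
    (hvsym : ∀ k ∈ Finset.Icc (-(K:ℤ)) (K:ℤ), v (-k) = - v k)
    (hvmono : ∀ j ∈ Finset.Icc (-(K:ℤ)) (K:ℤ), ∀ k ∈ Finset.Icc (-(K:ℤ)) (K:ℤ), j < k → v j < v k)
    (hwpos : ∀ k ∈ Finset.Icc (-(K:ℤ)) (K:ℤ), 0 < ω k)
    (hwsym : ∀ k ∈ Finset.Icc (-(K:ℤ)) (K:ℤ), ω (-k) = ω k)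
    (hwsum : ∑ k ∈ Finset.Icc (-(K:ℤ)) (K:ℤ), ω k = 1)
    (χS χN : ℝ) (hχS : χS ∈ Set.Ioo 0 (1/2 : ℝ)) (hχN : χN ∈ Set.Ioo 0 (1/2 : ℝ))
    (c : ℝ) (hc0 : 0 < c) (hcK : c < v (K:ℤ))
    (hcv : ∀ k ∈ Finset.Icc (-(K:ℤ)) (K:ℤ), c ≠ v k)
    (J : ℤ) (hJ0 : 0 ≤ J) (hJK : J < (K:ℤ)) (hvJ : v J < c) (hvJ1 : c < v (J+1))
    (Tp : ℝ → ℝ)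
    (hTpdef : ∀ u : ℝ, Tp u = if 0 < u then 1 + χS - χN else 1 - χS + χN)
    (lam b : ℤ → ℝ)
    (hdist : ∀ i ∈ Finset.Icc (J+1) (K:ℤ), ∀ j ∈ Finset.Icc (J+1) (K:ℤ), i ≠ j → lam i ≠ lam j)
    (hdisp : ∀ j ∈ Finset.Icc (J+1) (K:ℤ),
      (∀ k ∈ Finset.Icc (-(K:ℤ)) (K:ℤ), Tp (v k - c) - lam j * (v k - c) ≠ 0) ∧
      (∑ k ∈ Finset.Icc (-(K:ℤ)) (K:ℤ), ω k * Tp (v k - c) / (Tp (v k - c) - lam j * (v k - c))) = 1)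
    (g : ℤ → ℝ)
    (hg : ∀ k ∈ Finset.Icc (-(K:ℤ)) (K:ℤ),
      g k = ∑ j ∈ Finset.Icc (J+1) (K:ℤ), b j / (Tp (v k - c) - lam j * (v k - c))) :
    ∀ i ∈ Finset.Icc (J+1) (K:ℤ),
      (∑ k ∈ Finset.Icc (-(K:ℤ)) (K:ℤ),
          ω k * (v k - c) * Tp (v k - c) / (Tp (v k - c) - lam i * (v k - c)) ^ 2) ≠ 0 →
      b i =
        (∑ k ∈ Finset.Icc (-(K:ℤ)) (K:ℤ),
            ω k * (v k - c) * g k * Tp (v k - c) / (Tp (v k - c) - lam i * (v k - c))) /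
          (∑ k ∈ Finset.Icc (-(K:ℤ)) (K:ℤ),
            ω k * (v k - c) * Tp (v k - c) / (Tp (v k - c) - lam i * (v k - c)) ^ 2) := by

  intro i hi hS
  set I := Finset.Icc (-(K:ℤ)) (K:ℤ) with hI
  set JJ := Finset.Icc (J+1) (K:ℤ) with hJJ
  have hDi := (hdisp i hi).1
  have key : (∑ k ∈ I, ω k * (v k - c) * g k * Tp (v k - c) /
        (Tp (v k - c) - lam i * (v k - c))) =
      b i * (∑ k ∈ I, ω k * (v k - c) * Tp (v k - c) /
        (Tp (v k - c) - lam i * (v k - c)) ^ 2) := by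
    have step1 : (∑ k ∈ I, ω k * (v k - c) * g k * Tp (v k - c) /
          (Tp (v k - c) - lam i * (v k - c))) =
        ∑ j ∈ JJ, b j * ∑ k ∈ I, ω k * (v k - c) * Tp (v k - c) /
          ((Tp (v k - c) - lam i * (v k - c)) * (Tp (v k - c) - lam j * (v k - c))) := by
      have e1 : (∑ k ∈ I, ω k * (v k - c) * g k * Tp (v k - c) /
            (Tp (v k - c) - lam i * (v k - c))) =
          ∑ k ∈ I, ∑ j ∈ JJ, b j * (ω k * (v k - c) * Tp (v k - c) /
            ((Tp (v k - c) - lam i * (v k - c)) * (Tp (v k - c) - lam j * (v k - c)))) := by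
        apply Finset.sum_congr rfl
        intro k hk
        rw [hg k hk, Finset.mul_sum, Finset.sum_mul, Finset.sum_div]
        apply Finset.sum_congr rfl
        intro j hj
        have hDik := hDi k hk
        have hDjk := (hdisp j hj).1 k hk
        field_simp
      rw [e1, Finset.sum_comm]
      simp [Finset.mul_sum]
    rw [step1]
    rw [Finset.sum_eq_single_of_mem i hi]
    · congr 1
      apply Finset.sum_congr rfl
      intro k hk
      rw [sq]
    · intro j hj hji
      have hlam : lam i ≠ lam j := hdist i hi j hj (Ne.symm hji)
      have hz : (∑ k ∈ I, ω k * (v k - c) * Tp (v k - c) /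
          ((Tp (v k - c) - lam i * (v k - c)) * (Tp (v k - c) - lam j * (v k - c)))) = 0 := by
        have e2 : ∀ k ∈ I, ω k * (v k - c) * Tp (v k - c) /
            ((Tp (v k - c) - lam i * (v k - c)) * (Tp (v k - c) - lam j * (v k - c))) =
            (ω k * Tp (v k - c) / (Tp (v k - c) - lam i * (v k - c)) -
             ω k * Tp (v k - c) / (Tp (v k - c) - lam j * (v k - c))) / (lam i - lam j) := by
          intro k hk
          have hDik := hDi k hk
          have hDjk := (hdisp j hj).1 k hk
          have hij : lam i - lam j ≠ 0 := sub_ne_zero.mpr hlam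
          rw [div_sub_div _ _ hDik hDjk, div_div,
            div_eq_div_iff (mul_ne_zero hDik hDjk) (mul_ne_zero (mul_ne_zero hDik hDjk) hij)]
          ring
        rw [Finset.sum_congr rfl e2, ← Finset.sum_div, Finset.sum_sub_distrib,
          (hdisp i hi).2, (hdisp j hj).2]
        simp
      rw [hz, mul_zero]
  rw [key]
  rw [mul_div_assoc, div_self hS, mul_one]
end

section
/- Let λ_{J+1}, …, λ_K be pairwise distinct nonzero real numbers each satisfying the right dispersion relation, let b_{J+1}, …, b_K be real coefficients, and set g(v_k) = Σ_{j=J+1}^{K} b_j/(T₊(v_k − c) − λ_j(v_k − c)) for each k. Then for every i ∈ {J+1,…,K} and every k ∈ {−K,…,K}: √(ω_k) · |b_i| · |v_k − c| / |T₊(v_k − c) − λ_i(v_k − c)| ≤ max_{k'} ( |g(v_{k'})| · |v_{k'} − c| ). -/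
open MeasureTheory Filter

theorem stmt12
    (K : ℕ) (hK : 1 ≤ K)
    (v ω : ℤ → ℝ)
    (hv0 : v 0 = 0)
    (hvsym : ∀ k ∈ Finset.Icc (-(K:ℤ)) (K:ℤ), v (-k) = - v k)
    (hvmono : ∀ j ∈ Finset.Icc (-(K:ℤ)) (K:ℤ), ∀ k ∈ Finset.Icc (-(K:ℤ)) (K:ℤ), j < k → v j < v k)
    (hwpos : ∀ k ∈ Finset.Icc (-(K:ℤ)) (K:ℤ), 0 < ω k)
    (hwsym : ∀ k ∈ Finset.Icc (-(K:ℤ)) (K:ℤ), ω (-k) = ω k)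
    (hwsum : ∑ k ∈ Finset.Icc (-(K:ℤ)) (K:ℤ), ω k = 1)
    (χS χN : ℝ) (hχS : χS ∈ Set.Ioo 0 (1/2 : ℝ)) (hχN : χN ∈ Set.Ioo 0 (1/2 : ℝ))
    (c : ℝ) (hc0 : 0 < c) (hcK : c < v (K:ℤ))
    (hcv : ∀ k ∈ Finset.Icc (-(K:ℤ)) (K:ℤ), c ≠ v k)
    (J : ℤ) (hJ0 : 0 ≤ J) (hJK : J < (K:ℤ)) (hvJ : v J < c) (hvJ1 : c < v (J+1))
    (Tp : ℝ → ℝ)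
    (hTpdef : ∀ u : ℝ, Tp u = if 0 < u then 1 + χS - χN else 1 - χS + χN)
    (lam b : ℤ → ℝ)
    (hdist : ∀ i ∈ Finset.Icc (J+1) (K:ℤ), ∀ j ∈ Finset.Icc (J+1) (K:ℤ), i ≠ j → lam i ≠ lam j)
    (hlam0 : ∀ j ∈ Finset.Icc (J+1) (K:ℤ), lam j ≠ 0)
    (hdisp : ∀ j ∈ Finset.Icc (J+1) (K:ℤ),
      (∀ k ∈ Finset.Icc (-(K:ℤ)) (K:ℤ), Tp (v k - c) - lam j * (v k - c) ≠ 0) ∧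
      (∑ k ∈ Finset.Icc (-(K:ℤ)) (K:ℤ), ω k * Tp (v k - c) / (Tp (v k - c) - lam j * (v k - c))) = 1)
    (g : ℤ → ℝ)
    (hg : ∀ k ∈ Finset.Icc (-(K:ℤ)) (K:ℤ),
      g k = ∑ j ∈ Finset.Icc (J+1) (K:ℤ), b j / (Tp (v k - c) - lam j * (v k - c))) :
    ∀ i ∈ Finset.Icc (J+1) (K:ℤ), ∀ k ∈ Finset.Icc (-(K:ℤ)) (K:ℤ),
      Real.sqrt (ω k) * |b i| * |v k - c| / |Tp (v k - c) - lam i * (v k - c)| ≤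
        (Finset.Icc (-(K:ℤ)) (K:ℤ)).sup' (Finset.nonempty_Icc.mpr (by omega))
          (fun k' => |g k'| * |v k' - c|) := by
  intro i hi k hk
  have hIne : (Finset.Icc (-(K:ℤ)) (K:ℤ)).Nonempty := Finset.nonempty_Icc.mpr (by omega)
  set I := Finset.Icc (-(K:ℤ)) (K:ℤ) with hIdef
  set S := Finset.Icc (J+1) (K:ℤ) with hSdef
  set M := I.sup' hIne (fun k' => |g k'| * |v k' - c|) with hMdef
  -- basic facts
  have hu : ∀ m ∈ I, v m - c ≠ 0 := fun m hm => sub_ne_zero.mpr (Ne.symm (hcv m hm))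
  have hD : ∀ j ∈ S, ∀ m ∈ I, Tp (v m - c) - lam j * (v m - c) ≠ 0 :=
    fun j hj => (hdisp j hj).1
  have hwnn : ∀ m ∈ I, 0 ≤ ω m := fun m hm => (hwpos m hm).le
  -- the weighted first moment vanishes for each eigenvalue
  have hzero : ∀ j ∈ S, ∑ m ∈ I, ω m * ((v m - c) / (Tp (v m - c) - lam j * (v m - c))) = 0 := by
    intro j hj
    have h2 := (hdisp j hj).2
    have hrw : ∀ m ∈ I, ω m * Tp (v m - c) / (Tp (v m - c) - lam j * (v m - c))
        = ω m + lam j * (ω m * ((v m - c) / (Tp (v m - c) - lam j * (v m - c)))) := by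
      intro m hm
      have hDm := hD j hj m hm
      have e : (v m - c) / (Tp (v m - c) - lam j * (v m - c)) * (Tp (v m - c) - lam j * (v m - c)) = v m - c := div_mul_cancel₀ _ hDm
      rw [div_eq_iff hDm]
      linear_combination (-(lam j * ω m)) * e
    rw [Finset.sum_congr rfl hrw, Finset.sum_add_distrib, hwsum, ← Finset.mul_sum] at h2
    have h3 : lam j * ∑ m ∈ I, ω m * ((v m - c) / (Tp (v m - c) - lam j * (v m - c))) = 0 := by
      linarith
    exact (mul_eq_zero.mp h3).resolve_left (hlam0 j hj)
  -- Q : second moment for eigenvalue i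
  set Q := ∑ m ∈ I, ω m * ((v m - c) / (Tp (v m - c) - lam i * (v m - c)))^2 with hQdef
  have hQtermnn : ∀ m ∈ I, 0 ≤ ω m * ((v m - c) / (Tp (v m - c) - lam i * (v m - c)))^2 :=
    fun m hm => mul_nonneg (hwnn m hm) (sq_nonneg _)
  have hQpos : 0 < Q := by
    refine Finset.sum_pos (fun m hm => ?_) hIne
    exact mul_pos (hwpos m hm)
      (sq_pos_of_ne_zero (div_ne_zero (hu m hm) (hD i hi m hm)))
  -- key identity
  have hA : ∑ m ∈ I, ω m * (v m - c)^2 * g m / (Tp (v m - c) - lam i * (v m - c)) = b i * Q := by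
    have step1 : ∀ m ∈ I, ω m * (v m - c)^2 * g m / (Tp (v m - c) - lam i * (v m - c))
        = ∑ j ∈ S, b j * (ω m * (v m - c)^2 /
            ((Tp (v m - c) - lam i * (v m - c)) * (Tp (v m - c) - lam j * (v m - c)))) := by
      intro m hm
      rw [hg m hm, Finset.mul_sum, Finset.sum_div]
      refine Finset.sum_congr rfl fun j hj => ?_
      have hDi := hD i hi m hm
      have hDj := hD j hj m hm
      field_simp
    rw [Finset.sum_congr rfl step1, Finset.sum_comm]
    have hinner : ∀ j ∈ S, (∑ m ∈ I, b j * (ω m * (v m - c)^2 /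
        ((Tp (v m - c) - lam i * (v m - c)) * (Tp (v m - c) - lam j * (v m - c)))))
        = if j = i then b i * Q else 0 := by
      intro j hj
      by_cases hji : j = i
      · subst hji
        simp only [if_pos rfl]
        rw [← Finset.mul_sum]
        congr 1
        refine Finset.sum_congr rfl fun m hm => ?_
        have hDj := hD j hj m hm
        rw [div_pow]
        field_simp
      · simp only [if_neg hji]
        have hlamne : lam i - lam j ≠ 0 :=
          sub_ne_zero.mpr (Ne.symm (hdist j hj i hi hji))
        have hterm : ∀ m ∈ I, b j * (ω m * (v m - c)^2 /
            ((Tp (v m - c) - lam i * (v m - c)) * (Tp (v m - c) - lam j * (v m - c))))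
            = (b j / (lam i - lam j)) *
              (ω m * ((v m - c) / (Tp (v m - c) - lam i * (v m - c)))
               - ω m * ((v m - c) / (Tp (v m - c) - lam j * (v m - c)))) := by
          intro m hm
          have hDi := hD i hi m hm
          have hDj := hD j hj m hm
          rw [← mul_sub, div_sub_div _ _ hDi hDj,
            show (v m - c) * (Tp (v m - c) - lam j * (v m - c)) - (Tp (v m - c) - lam i * (v m - c)) * (v m - c) = (lam i - lam j) * (v m - c)^2 by ring]
          rw [eq_comm, div_mul_eq_mul_div, div_eq_iff hlamne]
          ring
        rw [Finset.sum_congr rfl hterm, ← Finset.mul_sum, Finset.sum_sub_distrib,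
          hzero i hi, hzero j hj]
        simp
    rw [Finset.sum_congr rfl hinner, Finset.sum_ite_eq' S i (fun _ => b i * Q)]
    simp [hi]
  -- M is nonnegative
  have hMnn : 0 ≤ M := le_trans (mul_nonneg (abs_nonneg _) (abs_nonneg _))
    (Finset.le_sup' (fun k' => |g k'| * |v k' - c|) hk)
  -- S1 : weighted absolute first moment
  set S1 := ∑ m ∈ I, ω m * |(v m - c) / (Tp (v m - c) - lam i * (v m - c))| with hS1def
  have hS1nn : 0 ≤ S1 :=
    Finset.sum_nonneg fun m hm => mul_nonneg (hwnn m hm) (abs_nonneg _)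
  -- bound |A| ≤ M * S1
  have habs : |b i| * Q ≤ M * S1 := by
    have h1 : |b i * Q| ≤ ∑ m ∈ I,
        |ω m * (v m - c)^2 * g m / (Tp (v m - c) - lam i * (v m - c))| := by
      rw [← hA]; exact Finset.abs_sum_le_sum_abs _ _
    have h2 : ∀ m ∈ I, |ω m * (v m - c)^2 * g m / (Tp (v m - c) - lam i * (v m - c))|
        ≤ M * (ω m * |(v m - c) / (Tp (v m - c) - lam i * (v m - c))|) := by
      intro m hm
      have hle : |g m| * |v m - c| ≤ M :=
        Finset.le_sup' (fun k' => |g k'| * |v k' - c|) hm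
      have heq : |ω m * (v m - c)^2 * g m / (Tp (v m - c) - lam i * (v m - c))|
          = (|g m| * |v m - c|) * (ω m * |(v m - c) / (Tp (v m - c) - lam i * (v m - c))|) := by
        rw [abs_div, abs_mul, abs_mul, abs_pow, abs_of_nonneg (hwnn m hm), abs_div]
        ring
      rw [heq]
      exact mul_le_mul_of_nonneg_right hle
        (mul_nonneg (hwnn m hm) (abs_nonneg _))
    calc |b i| * Q = |b i| * |Q| := by rw [abs_of_pos hQpos]
      _ = |b i * Q| := (abs_mul _ _).symm
      _ ≤ ∑ m ∈ I, |ω m * (v m - c)^2 * g m / (Tp (v m - c) - lam i * (v m - c))| := h1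
      _ ≤ ∑ m ∈ I, M * (ω m * |(v m - c) / (Tp (v m - c) - lam i * (v m - c))|) :=
          Finset.sum_le_sum h2
      _ = M * S1 := by rw [← Finset.mul_sum]
  -- Cauchy-Schwarz: S1 ≤ √Q
  have hCS : S1 ≤ Real.sqrt Q := by
    have hsq : S1^2 ≤ Q := by
      have := Finset.sum_mul_sq_le_sq_mul_sq I (fun m => Real.sqrt (ω m))
        (fun m => Real.sqrt (ω m) * |(v m - c) / (Tp (v m - c) - lam i * (v m - c))|)
      have e1 : ∑ m ∈ I, Real.sqrt (ω m) *
          (Real.sqrt (ω m) * |(v m - c) / (Tp (v m - c) - lam i * (v m - c))|) = S1 := by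
        refine Finset.sum_congr rfl fun m hm => ?_
        rw [← mul_assoc, Real.mul_self_sqrt (hwnn m hm)]
      have e2 : ∑ m ∈ I, Real.sqrt (ω m) ^ 2 = 1 := by
        rw [← hwsum]
        exact Finset.sum_congr rfl fun m hm => Real.sq_sqrt (hwnn m hm)
      have e3 : ∑ m ∈ I, (Real.sqrt (ω m) *
          |(v m - c) / (Tp (v m - c) - lam i * (v m - c))|)^2 = Q := by
        refine Finset.sum_congr rfl fun m hm => ?_
        rw [mul_pow, Real.sq_sqrt (hwnn m hm), sq_abs]
      rw [e1, e2, e3, one_mul] at this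
      exact this
    calc S1 = Real.sqrt (S1^2) := (Real.sqrt_sq hS1nn).symm
      _ ≤ Real.sqrt Q := Real.sqrt_le_sqrt hsq
  -- conclude |b i| * √Q ≤ M
  have hkey : |b i| * Real.sqrt Q ≤ M := by
    have hsp : 0 < Real.sqrt Q := Real.sqrt_pos.mpr hQpos
    have h4 : |b i| * Real.sqrt Q * Real.sqrt Q ≤ M * Real.sqrt Q := by
      rw [mul_assoc, Real.mul_self_sqrt hQpos.le]
      calc |b i| * Q ≤ M * S1 := habs
        _ ≤ M * Real.sqrt Q := mul_le_mul_of_nonneg_left hCS hMnn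
    exact le_of_mul_le_mul_right h4 hsp
  -- finish: the individual term is at most |b i| * √Q
  have hterm : Real.sqrt (ω k) * |b i| * |v k - c| / |Tp (v k - c) - lam i * (v k - c)|
      ≤ |b i| * Real.sqrt Q := by
    have h5 : ω k * ((v k - c) / (Tp (v k - c) - lam i * (v k - c)))^2 ≤ Q :=
      Finset.single_le_sum hQtermnn hk
    have h6 : Real.sqrt (ω k * ((v k - c) / (Tp (v k - c) - lam i * (v k - c)))^2)
        ≤ Real.sqrt Q := Real.sqrt_le_sqrt h5
    have h7 : Real.sqrt (ω k * ((v k - c) / (Tp (v k - c) - lam i * (v k - c)))^2)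
        = Real.sqrt (ω k) * (|v k - c| / |Tp (v k - c) - lam i * (v k - c)|) := by
      rw [Real.sqrt_mul (hwnn k hk), Real.sqrt_sq_eq_abs, abs_div]
    have : Real.sqrt (ω k) * |b i| * |v k - c| / |Tp (v k - c) - lam i * (v k - c)|
        = |b i| * (Real.sqrt (ω k) * (|v k - c| / |Tp (v k - c) - lam i * (v k - c)|)) := by
      ring
    rw [this, ← h7]
    exact mul_le_mul_of_nonneg_left h6 (abs_nonneg _)
  exact le_trans hterm hkey
end

section
/- Let f be a profile that is positive everywhere, with f(z,v_k) → 0 as z → +∞ and as z → −∞ for every k, and assume that the tumbling flux I is non-increasing on (0,∞) and non-decreasing on (−∞,0). Then for every z > 0 and every index i with v_i > c, the following alternative holds: either T₊⁺ f(z,v_i) ≥ I(z), or for every index j with v_j > v_i one has f(z,v_j) < f(z,v_i). Equivalently, on the right half-line f is strictly decreasing with respect to velocity on the set of velocities v_i > c with T₊⁺ f(z,v_i) < I(z). -/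
open MeasureTheory Filter Set

lemma aux_deriv_nonneg_of_monotoneOn {g : ℝ → ℝ} {d x : ℝ} (hx : x < 0)
    (hm : MonotoneOn g (Set.Iio 0)) (hd : HasDerivAt g d x) : 0 ≤ d := by
  have h := hasDerivAt_iff_tendsto_slope.mp hd
  have h2 : Tendsto (slope g x) (nhdsWithin x (Set.Ioi x)) (nhds d) :=
    h.mono_left (nhdsWithin_mono x (fun y hy => ne_of_gt hy))
  refine ge_of_tendsto h2 ?_
  filter_upwards [Ioo_mem_nhdsGT_of_mem (Set.left_mem_Ico.2 hx)] with y hy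
  rw [slope_def_field]
  have h3 : g x ≤ g y := hm hx hy.2 hy.1.le
  have h4 : 0 < y - x := sub_pos.2 hy.1
  exact div_nonneg (by linarith) h4.le

lemma aux_deriv_nonpos_of_antitoneOn {g : ℝ → ℝ} {d x : ℝ} (hx : 0 < x)
    (hm : AntitoneOn g (Set.Ioi 0)) (hd : HasDerivAt g d x) : d ≤ 0 := by
  have h := hasDerivAt_iff_tendsto_slope.mp hd
  have h2 : Tendsto (slope g x) (nhdsWithin x (Set.Ioi x)) (nhds d) :=
    h.mono_left (nhdsWithin_mono x (fun y hy => ne_of_gt hy))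
  refine le_of_tendsto h2 ?_
  filter_upwards [self_mem_nhdsWithin] with y hy
  rw [slope_def_field]
  have h3 : g y ≤ g x := hm hx (lt_trans hx hy) (le_of_lt hy)
  have h4 : 0 < y - x := sub_pos.2 hy
  exact div_nonpos_of_nonpos_of_nonneg (by linarith) h4.le

theorem stmt15
    (K : ℕ) (hK : 1 ≤ K)
    (v ω : ℤ → ℝ)
    (hv0 : v 0 = 0)
    (hvsym : ∀ k ∈ Finset.Icc (-(K:ℤ)) (K:ℤ), v (-k) = - v k)
    (hvmono : ∀ j ∈ Finset.Icc (-(K:ℤ)) (K:ℤ), ∀ k ∈ Finset.Icc (-(K:ℤ)) (K:ℤ), j < k → v j < v k)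
    (hwpos : ∀ k ∈ Finset.Icc (-(K:ℤ)) (K:ℤ), 0 < ω k)
    (hwsym : ∀ k ∈ Finset.Icc (-(K:ℤ)) (K:ℤ), ω (-k) = ω k)
    (hwsum : ∑ k ∈ Finset.Icc (-(K:ℤ)) (K:ℤ), ω k = 1)
    (χS χN : ℝ) (hχS : χS ∈ Set.Ioo 0 (1/2 : ℝ)) (hχN : χN ∈ Set.Ioo 0 (1/2 : ℝ))
    (c : ℝ) (hc0 : 0 < c) (hcK : c < v (K:ℤ))
    (hcv : ∀ k ∈ Finset.Icc (-(K:ℤ)) (K:ℤ), c ≠ v k)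
    (Tp Tm : ℝ → ℝ) (T : ℝ → ℝ → ℝ)
    (hTpdef : ∀ u : ℝ, Tp u = if 0 < u then 1 + χS - χN else 1 - χS + χN)
    (hTmdef : ∀ u : ℝ, Tm u = if 0 < u then 1 - χS - χN else 1 + χS + χN)
    (hTdef : ∀ z u : ℝ, T z u = if 0 < z then Tp u else Tm u)
    (f : ℝ → ℤ → ℝ)
    (hfc : ∀ k ∈ Finset.Icc (-(K:ℤ)) (K:ℤ), Continuous fun z => f z k)
    (hfeq : ∀ z : ℝ, z ≠ 0 → ∀ k ∈ Finset.Icc (-(K:ℤ)) (K:ℤ),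
      HasDerivAt (fun z' => f z' k)
        (((∑ k' ∈ Finset.Icc (-(K:ℤ)) (K:ℤ), ω k' * T z (v k' - c) * f z k') -
          T z (v k - c) * f z k) / (v k - c)) z)
    (hfpos : ∀ z : ℝ, ∀ k ∈ Finset.Icc (-(K:ℤ)) (K:ℤ), 0 < f z k)
    (hftop : ∀ k ∈ Finset.Icc (-(K:ℤ)) (K:ℤ), Filter.Tendsto (fun z => f z k) Filter.atTop (nhds 0))
    (hfbot : ∀ k ∈ Finset.Icc (-(K:ℤ)) (K:ℤ), Filter.Tendsto (fun z => f z k) Filter.atBot (nhds 0))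
    (hImono : AntitoneOn (fun z => ∑ k ∈ Finset.Icc (-(K:ℤ)) (K:ℤ), ω k * T z (v k - c) * f z k) (Set.Ioi 0))
    (hImono' : MonotoneOn (fun z => ∑ k ∈ Finset.Icc (-(K:ℤ)) (K:ℤ), ω k * T z (v k - c) * f z k) (Set.Iio 0)) :
    ∀ z : ℝ, 0 < z → ∀ i ∈ Finset.Icc (-(K:ℤ)) (K:ℤ), c < v i →
      (∑ k ∈ Finset.Icc (-(K:ℤ)) (K:ℤ), ω k * T z (v k - c) * f z k) ≤ (1 + χS - χN) * f z i ∨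
      ∀ j ∈ Finset.Icc (-(K:ℤ)) (K:ℤ), v i < v j → f z j < f z i := by
  intro z₀ hz₀ i hi hci
  by_cases hI : (∑ k ∈ Finset.Icc (-(K:ℤ)) (K:ℤ), ω k * T z₀ (v k - c) * f z₀ k) ≤
      (1 + χS - χN) * f z₀ i
  · exact Or.inl hI
  right
  intro j hj hij
  push_neg at hI
  have hA0 : 0 < 1 + χS - χN := by have := hχS.1; have := hχN.2; linarith
  have hB0 : 0 < 1 - χS - χN := by have := hχS.2; have := hχN.2; linarith
  have hcj : c < v j := lt_trans hci hij
  have hli : 0 < v i - c := sub_pos.2 hci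
  have hlj : 0 < v j - c := sub_pos.2 hcj
  have hlij : v i - c < v j - c := by linarith
  have hinv : 1 / (v j - c) - 1 / (v i - c) < 0 :=
    sub_neg.2 (one_div_lt_one_div_of_lt hli hlij)
  set A := 1 + χS - χN with hA
  set B := 1 - χS - χN with hB
  -- T values
  have hTz : ∀ z : ℝ, 0 < z → ∀ u : ℝ, T z u = Tp u := fun z hz u => by
    rw [hTdef]; exact if_pos hz
  have hTz' : ∀ z : ℝ, z < 0 → ∀ u : ℝ, T z u = Tm u := fun z hz u => by
    rw [hTdef]; exact if_neg (not_lt.2 hz.le)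
  have hTpval : ∀ m : ℤ, c < v m → Tp (v m - c) = A := fun m hm => by
    rw [hTpdef]; exact if_pos (sub_pos.2 hm)
  have hTmval : ∀ m : ℤ, c < v m → Tm (v m - c) = B := fun m hm => by
    rw [hTmdef]; exact if_pos (sub_pos.2 hm)
  -- the two half-line fluxes
  set Ip : ℝ → ℝ := fun z => ∑ k ∈ Finset.Icc (-(K:ℤ)) (K:ℤ), ω k * Tp (v k - c) * f z k
    with hIpd
  set Im : ℝ → ℝ := fun z => ∑ k ∈ Finset.Icc (-(K:ℤ)) (K:ℤ), ω k * Tm (v k - c) * f z k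
    with hImd
  have hIeq : ∀ z : ℝ, 0 < z →
      (∑ k ∈ Finset.Icc (-(K:ℤ)) (K:ℤ), ω k * T z (v k - c) * f z k) = Ip z := by
    intro z hz
    rw [hIpd]
    exact Finset.sum_congr rfl (fun k _ => by rw [hTz z hz])
  have hIeq' : ∀ z : ℝ, z < 0 →
      (∑ k ∈ Finset.Icc (-(K:ℤ)) (K:ℤ), ω k * T z (v k - c) * f z k) = Im z := by
    intro z hz
    rw [hImd]
    exact Finset.sum_congr rfl (fun k _ => by rw [hTz' z hz])
  rw [hIeq z₀ hz₀] at hI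
  -- ODEs on the two half-lines for components with v m > c
  have hDright : ∀ m ∈ Finset.Icc (-(K:ℤ)) (K:ℤ), c < v m → ∀ z : ℝ, 0 < z →
      HasDerivAt (fun z' => f z' m) ((Ip z - A * f z m) / (v m - c)) z := by
    intro m hm hcm z hz
    have h := hfeq z (ne_of_gt hz) m hm
    simp only [hTz z hz, hTpval m hcm] at h
    rw [hIpd]
    exact h
  have hDleft : ∀ m ∈ Finset.Icc (-(K:ℤ)) (K:ℤ), c < v m → ∀ z : ℝ, z < 0 →
      HasDerivAt (fun z' => f z' m) ((Im z - B * f z m) / (v m - c)) z := by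
    intro m hm hcm z hz
    have h := hfeq z (ne_of_lt hz) m hm
    simp only [hTz' z hz, hTmval m hcm] at h
    rw [hImd]
    exact h
  -- derivatives of the fluxes
  set dIp : ℝ → ℝ := fun z => ∑ k ∈ Finset.Icc (-(K:ℤ)) (K:ℤ), ω k * Tp (v k - c) *
      (((∑ k' ∈ Finset.Icc (-(K:ℤ)) (K:ℤ), ω k' * T z (v k' - c) * f z k') -
        T z (v k - c) * f z k) / (v k - c)) with hdIpd
  set dIm : ℝ → ℝ := fun z => ∑ k ∈ Finset.Icc (-(K:ℤ)) (K:ℤ), ω k * Tm (v k - c) *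
      (((∑ k' ∈ Finset.Icc (-(K:ℤ)) (K:ℤ), ω k' * T z (v k' - c) * f z k') -
        T z (v k - c) * f z k) / (v k - c)) with hdImd
  have hIp' : ∀ x : ℝ, x ≠ 0 → HasDerivAt Ip (dIp x) x := by
    intro x hx
    rw [hIpd, hdIpd]
    exact HasDerivAt.fun_sum (fun k hk => (hfeq x hx k hk).const_mul _)
  have hIm' : ∀ x : ℝ, x ≠ 0 → HasDerivAt Im (dIm x) x := by
    intro x hx
    rw [hImd, hdImd]
    exact HasDerivAt.fun_sum (fun k hk => (hfeq x hx k hk).const_mul _)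
  have hIpanti : AntitoneOn Ip (Set.Ioi 0) := by
    intro a ha b hb hab
    have h := hImono ha hb hab
    simp only at h
    rwa [hIeq a ha, hIeq b hb] at h
  have hImmono : MonotoneOn Im (Set.Iio 0) := by
    intro a ha b hb hab
    have h := hImono' ha hb hab
    simp only at h
    rwa [hIeq' a ha, hIeq' b hb] at h
  -- exponentials
  have hexp : ∀ p x : ℝ, HasDerivAt (fun y : ℝ => Real.exp (p * y)) (Real.exp (p * x) * p) x := by
    intro p x
    have h1 : HasDerivAt (fun y : ℝ => p * y) p x := by
      simpa using (hasDerivAt_id x).const_mul p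
    exact h1.exp
  have hexpc : ∀ p : ℝ, Continuous (fun y : ℝ => Real.exp (p * y)) :=
    fun p => Real.continuous_exp.comp (continuous_const.mul continuous_id)
  have hexpbot : ∀ p : ℝ, 0 < p →
      Tendsto (fun y : ℝ => Real.exp (p * y)) atBot (nhds 0) := by
    intro p hp
    exact Real.tendsto_exp_atBot.comp (tendsto_id.const_mul_atBot hp)
  -- Q on the right half line
  set Q : ℝ → ℝ := fun z => Real.exp ((A / (v i - c)) * z) * (Ip z - A * f z i) with hQd
  have hQ' : ∀ x : ℝ, 0 < x →
      HasDerivAt Q (Real.exp ((A / (v i - c)) * x) * dIp x) x := by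
    intro x hx
    rw [hQd]
    have h := (hexp (A / (v i - c)) x).fun_mul
      ((hIp' x (ne_of_gt hx)).fun_sub ((hDright i hi hci x hx).const_mul A))
    convert h using 1
    · rfl
    · rfl
    field_simp
    ring
  have hQanti : AntitoneOn Q (Set.Ioi 0) := by
    refine antitoneOn_of_deriv_nonpos (convex_Ioi 0) ?_ ?_ ?_
    · refine Continuous.continuousOn ?_
      rw [hQd, hIpd]
      exact (hexpc _).mul
        ((continuous_finset_sum _ (fun k hk => continuous_const.mul (hfc k hk))).sub
          (continuous_const.mul (hfc i hi)))
    · intro x hx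
      rw [interior_Ioi] at hx
      exact (hQ' x hx).differentiableAt.differentiableWithinAt
    · intro x hx
      rw [interior_Ioi] at hx
      rw [(hQ' x hx).deriv]
      have hd : dIp x ≤ 0 :=
        aux_deriv_nonpos_of_antitoneOn hx hIpanti (hIp' x (ne_of_gt hx))
      exact mul_nonpos_of_nonneg_of_nonpos (Real.exp_pos _).le hd
  have hQz₀ : 0 < Q z₀ := by
    rw [hQd]
    exact mul_pos (Real.exp_pos _) (by linarith)
  have hpos : ∀ x : ℝ, 0 < x → x ≤ z₀ → 0 < Ip x - A * f x i := by
    intro x hx hxz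
    have h := hQanti hx hz₀ hxz
    by_contra hcon
    push_neg at hcon
    have : Q x ≤ 0 := by
      rw [hQd]
      exact mul_nonpos_of_nonneg_of_nonpos (Real.exp_pos _).le (by linarith)
    linarith
  -- R on the left half line
  set R : ℝ → ℝ := fun z => Real.exp ((B / (v i - c)) * z) * (Im z - B * f z i) with hRd
  have hR' : ∀ x : ℝ, x < 0 →
      HasDerivAt R (Real.exp ((B / (v i - c)) * x) * dIm x) x := by
    intro x hx
    rw [hRd]
    have h := (hexp (B / (v i - c)) x).fun_mul
      ((hIm' x (ne_of_lt hx)).fun_sub ((hDleft i hi hci x hx).const_mul B))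
    convert h using 1
    · rfl
    · rfl
    field_simp
    ring
  have hRmono : MonotoneOn R (Set.Iio 0) := by
    refine monotoneOn_of_deriv_nonneg (convex_Iio 0) ?_ ?_ ?_
    · refine Continuous.continuousOn ?_
      rw [hRd, hImd]
      exact (hexpc _).mul
        ((continuous_finset_sum _ (fun k hk => continuous_const.mul (hfc k hk))).sub
          (continuous_const.mul (hfc i hi)))
    · intro x hx
      rw [interior_Iio] at hx
      exact (hR' x hx).differentiableAt.differentiableWithinAt
    · intro x hx
      rw [interior_Iio] at hx
      rw [(hR' x hx).deriv]
      have hd : 0 ≤ dIm x :=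
        aux_deriv_nonneg_of_monotoneOn hx hImmono (hIm' x (ne_of_lt hx))
      exact mul_nonneg (Real.exp_pos _).le hd
  have hImbot : Tendsto Im atBot (nhds 0) := by
    rw [hImd]
    have h := tendsto_finset_sum (Finset.Icc (-(K:ℤ)) (K:ℤ))
      (fun k hk => (hfbot k hk).const_mul (ω k * Tm (v k - c)))
    simpa using h
  have hRbot : Tendsto R atBot (nhds 0) := by
    rw [hRd]
    have h := (hexpbot (B / (v i - c)) (div_pos hB0 hli)).mul
      (hImbot.sub ((hfbot i hi).const_mul B))
    simpa using h
  have hRnonneg : ∀ x : ℝ, x < 0 → 0 ≤ Im x - B * f x i := by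
    intro x hx
    have hRx : 0 ≤ R x := by
      refine le_of_tendsto hRbot ?_
      rw [eventually_atBot]
      exact ⟨x, fun w hw => hRmono (lt_of_le_of_lt hw hx) hx hw⟩
    by_contra hcon
    push_neg at hcon
    have : R x < 0 := by
      rw [hRd]
      exact mul_neg_of_pos_of_neg (Real.exp_pos _) (by linarith)
    linarith
  -- S on the left half line : comparison of f j and f i
  set S : ℝ → ℝ := fun z => Real.exp ((B / (v j - c)) * z) * (f z j - f z i) with hSd
  have hS' : ∀ x : ℝ, x < 0 →
      HasDerivAt S (Real.exp ((B / (v j - c)) * x) *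
        ((1 / (v j - c) - 1 / (v i - c)) * (Im x - B * f x i))) x := by
    intro x hx
    rw [hSd]
    have h := (hexp (B / (v j - c)) x).fun_mul
      ((hDleft j hj hcj x hx).fun_sub (hDleft i hi hci x hx))
    convert h using 1
    · rfl
    · rfl
    field_simp
    ring
  have hSanti : AntitoneOn S (Set.Iio 0) := by
    refine antitoneOn_of_deriv_nonpos (convex_Iio 0) ?_ ?_ ?_
    · refine Continuous.continuousOn ?_
      rw [hSd]
      exact (hexpc _).mul ((hfc j hj).sub (hfc i hi))
    · intro x hx
      rw [interior_Iio] at hx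
      exact (hS' x hx).differentiableAt.differentiableWithinAt
    · intro x hx
      rw [interior_Iio] at hx
      rw [(hS' x hx).deriv]
      refine mul_nonpos_of_nonneg_of_nonpos (Real.exp_pos _).le ?_
      exact mul_nonpos_of_nonpos_of_nonneg hinv.le (hRnonneg x hx)
  have hSbot : Tendsto S atBot (nhds 0) := by
    rw [hSd]
    have h := (hexpbot (B / (v j - c)) (div_pos hB0 hlj)).mul
      ((hfbot j hj).sub (hfbot i hi))
    simpa using h
  have hSnonpos : ∀ x : ℝ, x < 0 → f x j - f x i ≤ 0 := by
    intro x hx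
    have hSx : S x ≤ 0 := by
      refine ge_of_tendsto hSbot ?_
      rw [eventually_atBot]
      exact ⟨x, fun w hw => hSanti (lt_of_le_of_lt hw hx) hx hw⟩
    by_contra hcon
    push_neg at hcon
    have : 0 < S x := by
      rw [hSd]
      exact mul_pos (Real.exp_pos _) (by linarith)
    linarith
  have hg0 : f 0 j - f 0 i ≤ 0 := by
    have hgc : Continuous (fun z => f z j - f z i) := (hfc j hj).sub (hfc i hi)
    have ht : Tendsto (fun z => f z j - f z i) (nhdsWithin 0 (Set.Iio 0))
        (nhds (f 0 j - f 0 i)) := (hgc.tendsto 0).mono_left nhdsWithin_le_nhds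
    refine le_of_tendsto ht ?_
    filter_upwards [self_mem_nhdsWithin] with x hx
    exact hSnonpos x hx
  -- P on [0, z₀]
  set P : ℝ → ℝ := fun z => Real.exp ((A / (v j - c)) * z) * (f z j - f z i) with hPd
  have hP' : ∀ x : ℝ, 0 < x →
      HasDerivAt P (Real.exp ((A / (v j - c)) * x) *
        ((1 / (v j - c) - 1 / (v i - c)) * (Ip x - A * f x i))) x := by
    intro x hx
    rw [hPd]
    have h := (hexp (A / (v j - c)) x).fun_mul
      ((hDright j hj hcj x hx).fun_sub (hDright i hi hci x hx))
    convert h using 1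
    · rfl
    · rfl
    field_simp
    ring
  have hPanti : StrictAntiOn P (Set.Icc 0 z₀) := by
    refine strictAntiOn_of_deriv_neg (convex_Icc 0 z₀) ?_ ?_
    · refine Continuous.continuousOn ?_
      rw [hPd]
      exact (hexpc _).mul ((hfc j hj).sub (hfc i hi))
    · intro x hx
      rw [interior_Icc] at hx
      rw [(hP' x hx.1).deriv]
      refine mul_neg_of_pos_of_neg (Real.exp_pos _) ?_
      exact mul_neg_of_neg_of_pos hinv (hpos x hx.1 hx.2.le)
  have hfin : P z₀ < P 0 :=
    hPanti (Set.left_mem_Icc.2 hz₀.le) (Set.right_mem_Icc.2 hz₀.le) hz₀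
  have hP0 : P 0 ≤ 0 := by
    rw [hPd]
    simp only [mul_zero, Real.exp_zero, one_mul]
    exact hg0
  have hPz₀ : P z₀ < 0 := lt_of_lt_of_le hfin hP0
  rw [hPd] at hPz₀
  by_contra hcon
  push_neg at hcon
  have : 0 ≤ Real.exp ((A / (v j - c)) * z₀) * (f z₀ j - f z₀ i) :=
    mul_nonneg (Real.exp_pos _).le (by linarith)
  linarith
end

section
/- Let f be a profile that is positive everywhere, with f(z,v_k) → 0 as z → +∞ and as z → −∞ for every k, and assume that the tumbling flux I is non-increasing on (0,∞) and non-decreasing on (−∞,0). Define ρ⁺(z) = Σ_{k : v_k > c} ω_k f(z,v_k) and ρ⁻(z) = Σ_{k : v_k < c} ω_k f(z,v_k). Then both ρ⁺ and ρ⁻ are strictly decreasing on (0,∞), and both ρ⁺ and ρ⁻ are strictly increasing on (−∞,0). -/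
open MeasureTheory Filter Set

/-- coefficient: `Ap` for positive speeds, `Bn` for negative speeds -/
noncomputable def tcoef (lam : ℤ → ℝ) (Ap Bn : ℝ) (k : ℤ) : ℝ :=
  if 0 < lam k then Ap else Bn

/-- the tumbling flux functional -/
noncomputable def irf (S : Finset ℤ) (w lam : ℤ → ℝ) (Ap Bn : ℝ)
    (F : ℝ → ℤ → ℝ) (z : ℝ) : ℝ :=
  ∑ k ∈ S, w k * tcoef lam Ap Bn k * F z k

lemma tendsto_exp_neg_mul_atTop {c : ℝ} (hc : 0 < c) :
    Tendsto (fun z : ℝ => Real.exp (-(c * z))) atTop (nhds 0) := by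
  have h1 : Tendsto (fun z : ℝ => c * z) atTop atTop :=
    Tendsto.const_mul_atTop hc tendsto_id
  have h2 : Tendsto (fun z : ℝ => -(c * z)) atTop atBot :=
    tendsto_neg_atTop_atBot.comp h1
  exact Real.tendsto_exp_atBot.comp h2

lemma deriv_nonpos_of_antitoneOn_Ioi {g : ℝ → ℝ} {d z : ℝ} (hz : 0 < z)
    (hg : AntitoneOn g (Set.Ioi 0)) (hd : HasDerivAt g d z) : d ≤ 0 := by
  have h1 : HasDerivWithinAt g d (Set.Ioi z) z := hd.hasDerivWithinAt
  rw [hasDerivWithinAt_iff_tendsto_slope] at h1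
  have hss : Set.Ioi z \ {z} = Set.Ioi z := by
    apply Set.diff_singleton_eq_self
    simp
  rw [hss] at h1
  refine le_of_tendsto h1 ?_
  filter_upwards [self_mem_nhdsWithin] with y hy
  have hyz : z < y := hy
  have hle : g y ≤ g z := hg (Set.mem_Ioi.mpr hz) (Set.mem_Ioi.mpr (hz.trans hyz)) hyz.le
  rw [slope_def_field]
  apply div_nonpos_of_nonpos_of_nonneg
  · linarith
  · linarith
section AL1
variable (S : Finset ℤ) (w lam : ℤ → ℝ) (Ap Bn : ℝ) (F : ℝ → ℤ → ℝ)

lemma AL1 (hBn : 0 < Bn)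
    (hcont : ∀ k ∈ S, Continuous fun z => F z k)
    (hode : ∀ z ∈ Set.Ioi (0:ℝ), ∀ k ∈ S, HasDerivAt (fun y => F y k)
      ((irf S w lam Ap Bn F z - tcoef lam Ap Bn k * F z k) / lam k) z)
    (hanti : AntitoneOn (irf S w lam Ap Bn F) (Set.Ioi 0))
    (hpos : ∀ z : ℝ, ∀ k ∈ S, 0 < F z k)
    (hdecay : ∀ k ∈ S, Tendsto (fun z => F z k) atTop (nhds 0)) :
    ∀ k ∈ S, lam k < 0 → ∀ z ∈ Set.Ioi (0:ℝ), Bn * F z k < irf S w lam Ap Bn F z := by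
  set IR := irf S w lam Ap Bn F with hIR
  intro k hk hlk z0 hz0
  by_contra hcon
  push_neg at hcon
  set μ := -lam k with hμdef
  have hμpos : 0 < μ := by simp [hμdef]; linarith
  have htc : tcoef lam Ap Bn k = Bn := by
    simp [tcoef, not_lt.mpr hlk.le]
  set C := Bn / μ with hCdef
  have hCpos : 0 < C := div_pos hBn hμpos
  -- the Gronwall auxiliary function
  set vv : ℝ → ℝ := fun z => (Bn * F z k - IR z0) * Real.exp (-(C * z)) with hvv
  have hexp : ∀ z : ℝ, HasDerivAt (fun y : ℝ => Real.exp (-(C * y)))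
      (Real.exp (-(C * z)) * (-C)) z := by
    intro z
    have h1 : HasDerivAt (fun y : ℝ => -(C * y)) (-C) z := by
      simpa using ((hasDerivAt_id z).const_mul C).fun_neg
    simpa [Function.comp_def] using (Real.hasDerivAt_exp (-(C * z))).comp z h1
  have hdvv : ∀ z ∈ Set.Ioi z0, HasDerivAt vv
      ((Bn * ((IR z - Bn * F z k) / lam k)) * Real.exp (-(C * z))
        + (Bn * F z k - IR z0) * (Real.exp (-(C * z)) * (-C))) z := by
    intro z hz
    have hz' : z ∈ Set.Ioi (0:ℝ) := Set.mem_Ioi.mpr (lt_trans hz0 hz)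
    have h1 : HasDerivAt (fun y => Bn * F y k - IR z0)
        (Bn * ((IR z - Bn * F z k) / lam k)) z := by
      have := (hode z hz' k hk).const_mul Bn
      rw [htc] at this
      exact this.sub_const _
    exact h1.mul (hexp z)
  have hdvv_nonneg : ∀ z ∈ Set.Ioi z0,
      0 ≤ (Bn * ((IR z - Bn * F z k) / lam k)) * Real.exp (-(C * z))
        + (Bn * F z k - IR z0) * (Real.exp (-(C * z)) * (-C)) := by
    intro z hz
    have hz' : z ∈ Set.Ioi (0:ℝ) := Set.mem_Ioi.mpr (lt_trans hz0 hz)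
    have hIRle : IR z ≤ IR z0 := hanti hz0 hz' (le_of_lt hz)
    have hlamne : lam k ≠ 0 := ne_of_lt hlk
    have key : (Bn * ((IR z - Bn * F z k) / lam k))
        + (Bn * F z k - IR z0) * (-C) = C * (IR z0 - IR z) := by
      rw [hCdef]
      field_simp [hμdef]
      ring
    have h2 : (Bn * ((IR z - Bn * F z k) / lam k)) * Real.exp (-(C * z))
        + (Bn * F z k - IR z0) * (Real.exp (-(C * z)) * (-C))
        = (C * (IR z0 - IR z)) * Real.exp (-(C * z)) := by
      rw [← key]; ring
    rw [h2]
    have : 0 ≤ C * (IR z0 - IR z) := mul_nonneg hCpos.le (by linarith)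
    exact mul_nonneg this (Real.exp_pos _).le
  have hvvcont : Continuous vv := by
    have := hcont k hk
    continuity
  have hvvmono : MonotoneOn vv (Set.Ici z0) := by
    apply monotoneOn_of_deriv_nonneg (convex_Ici z0) hvvcont.continuousOn
    · intro z hz
      rw [interior_Ici] at hz
      exact ((hdvv z hz).differentiableAt).differentiableWithinAt
    · intro z hz
      rw [interior_Ici] at hz
      rw [(hdvv z hz).deriv]
      exact hdvv_nonneg z hz
  have hu_nonneg : ∀ z ∈ Set.Ici z0, 0 ≤ Bn * F z k - IR z0 := by
    intro z hz
    have h0 : (0:ℝ) ≤ vv z0 := by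
      have : 0 ≤ Bn * F z0 k - IR z0 := by linarith
      exact mul_nonneg this (Real.exp_pos _).le
    have h1 : vv z0 ≤ vv z := hvvmono Set.self_mem_Ici hz hz
    have h2 : 0 ≤ vv z := le_trans h0 h1
    rw [hvv] at h2
    simp only at h2
    nlinarith [Real.exp_pos (-(C * z)), h2]
  -- F(·,k) is monotone on [z0,∞)
  have hFmono : MonotoneOn (fun z => F z k) (Set.Ici z0) := by
    apply monotoneOn_of_deriv_nonneg (convex_Ici z0) (hcont k hk).continuousOn
    · intro z hz
      rw [interior_Ici] at hz
      exact (hode z (Set.mem_Ioi.mpr (lt_trans hz0 hz)) k hk).differentiableAt.differentiableWithinAt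
    · intro z hz
      rw [interior_Ici] at hz
      have hz' : z ∈ Set.Ioi (0:ℝ) := Set.mem_Ioi.mpr (lt_trans hz0 hz)
      rw [(hode z hz' k hk).deriv, htc]
      have hIRle : IR z ≤ IR z0 := hanti hz0 hz' (le_of_lt hz)
      have hu := hu_nonneg z (Set.mem_Ici.mpr (le_of_lt hz))
      have hnum : IR z - Bn * F z k ≤ 0 := by linarith
      exact div_nonneg_iff.mpr (Or.inr ⟨hnum, hlk.le⟩)
  have hev : ∀ᶠ z in atTop, F z0 k ≤ F z k := by
    filter_upwards [eventually_ge_atTop z0] with z hz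
    exact hFmono Set.self_mem_Ici hz hz
  have : F z0 k ≤ 0 := ge_of_tendsto (hdecay k hk) hev
  exact absurd this (not_le.mpr (hpos z0 k hk))

lemma AL2 (hBn : 0 < Bn)
    (hcont : ∀ k ∈ S, Continuous fun z => F z k)
    (hode : ∀ z ∈ Set.Ioi (0:ℝ), ∀ k ∈ S, HasDerivAt (fun y => F y k)
      ((irf S w lam Ap Bn F z - tcoef lam Ap Bn k * F z k) / lam k) z)
    (hanti : AntitoneOn (irf S w lam Ap Bn F) (Set.Ioi 0))
    (hpos : ∀ z : ℝ, ∀ k ∈ S, 0 < F z k)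
    (hdecay : ∀ k ∈ S, Tendsto (fun z => F z k) atTop (nhds 0)) :
    ∀ k ∈ S, ∀ l ∈ S, lam l < lam k → lam k < 0 → F 0 l ≤ F 0 k := by
  set IR := irf S w lam Ap Bn F with hIR
  intro k hk l hl hll hlk
  have hlkl : lam l < 0 := hll.trans hlk
  have hal1 := AL1 S w lam Ap Bn F hBn hcont hode hanti hpos hdecay l hl hlkl
  have htck : tcoef lam Ap Bn k = Bn := by simp [tcoef, not_lt.mpr hlk.le]
  have htcl : tcoef lam Ap Bn l = Bn := by simp [tcoef, not_lt.mpr hlkl.le]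
  set μk := -lam k with hμk
  set μl := -lam l with hμl
  have hμkpos : 0 < μk := by simp [hμk]; linarith
  have hμlpos : 0 < μl := by simp [hμl]; linarith
  have hμkl : μk < μl := by simp [hμk, hμl]; linarith
  set C := Bn / μk with hC
  have hCpos : 0 < C := div_pos hBn hμkpos
  set yy : ℝ → ℝ := fun z => (F z k - F z l) * Real.exp (-(C * z)) with hyy
  have hexp : ∀ z : ℝ, HasDerivAt (fun y : ℝ => Real.exp (-(C * y)))
      (Real.exp (-(C * z)) * (-C)) z := by
    intro z
    have h1 : HasDerivAt (fun y : ℝ => -(C * y)) (-C) z := by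
      simpa using ((hasDerivAt_id z).const_mul C).fun_neg
    simpa [Function.comp_def] using (Real.hasDerivAt_exp (-(C * z))).comp z h1
  have hdyy : ∀ z ∈ Set.Ioi (0:ℝ), HasDerivAt yy
      (((IR z - Bn * F z k) / lam k - (IR z - Bn * F z l) / lam l) * Real.exp (-(C * z))
        + (F z k - F z l) * (Real.exp (-(C * z)) * (-C))) z := by
    intro z hz
    have h1 : HasDerivAt (fun y => F y k - F y l)
        ((IR z - Bn * F z k) / lam k - (IR z - Bn * F z l) / lam l) z := by
      have ha := hode z hz k hk; rw [htck] at ha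
      have hb := hode z hz l hl; rw [htcl] at hb
      exact ha.sub hb
    exact h1.mul (hexp z)
  have hdyy_nonpos : ∀ z ∈ Set.Ioi (0:ℝ),
      ((IR z - Bn * F z k) / lam k - (IR z - Bn * F z l) / lam l) * Real.exp (-(C * z))
        + (F z k - F z l) * (Real.exp (-(C * z)) * (-C)) ≤ 0 := by
    intro z hz
    have hneg : Bn * F z l - IR z < 0 := by have := hal1 z hz; linarith
    have hcoef : 0 < 1 / μk - 1 / μl := by
      rw [sub_pos]
      exact one_div_lt_one_div_of_lt hμkpos hμkl
    have key : (IR z - Bn * F z k) / lam k - (IR z - Bn * F z l) / lam l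
        + (F z k - F z l) * (-C)
        = (Bn * F z l - IR z) * (1 / μk - 1 / μl) := by
      have hk0 : lam k ≠ 0 := ne_of_lt hlk
      have hl0 : lam l ≠ 0 := ne_of_lt hlkl
      rw [hC]
      field_simp [hμk, hμl]
      ring
    have h2 : ((IR z - Bn * F z k) / lam k - (IR z - Bn * F z l) / lam l) * Real.exp (-(C * z))
        + (F z k - F z l) * (Real.exp (-(C * z)) * (-C))
        = ((Bn * F z l - IR z) * (1 / μk - 1 / μl)) * Real.exp (-(C * z)) := by
      rw [← key]; ring
    rw [h2]
    apply mul_nonpos_of_nonpos_of_nonneg _ (Real.exp_pos _).le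
    exact mul_nonpos_of_nonpos_of_nonneg hneg.le hcoef.le
  have hyycont : Continuous yy := by
    have h1 := hcont k hk
    have h2 := hcont l hl
    continuity
  have hyyanti : AntitoneOn yy (Set.Ici 0) := by
    apply antitoneOn_of_deriv_nonpos (convex_Ici 0) hyycont.continuousOn
    · intro z hz
      rw [interior_Ici] at hz
      exact ((hdyy z hz).differentiableAt).differentiableWithinAt
    · intro z hz
      rw [interior_Ici] at hz
      rw [(hdyy z hz).deriv]
      exact hdyy_nonpos z hz
  have hlim : Tendsto yy atTop (nhds 0) := by
    have h1 : Tendsto (fun z => F z k - F z l) atTop (nhds 0) := by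
      have := (hdecay k hk).sub (hdecay l hl)
      simpa using this
    have h2 := tendsto_exp_neg_mul_atTop hCpos
    have := h1.mul h2
    simpa using this
  have h0 : 0 ≤ yy 0 := by
    refine le_of_tendsto hlim ?_
    filter_upwards [eventually_ge_atTop (0:ℝ)] with z hz
    exact hyyanti Set.self_mem_Ici hz hz
  have : 0 ≤ F 0 k - F 0 l := by
    rw [hyy] at h0
    simp at h0
    nlinarith [Real.exp_pos (-(C * 0)), h0]
  linarith
lemma AL3 (hAp : 0 < Ap) (hBn : 0 < Bn)
    (hw : ∀ k ∈ S, 0 < w k) (hw1 : ∑ k ∈ S, w k = 1)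
    (hinj : Set.InjOn lam ↑S)
    (hlamne : ∀ k ∈ S, lam k ≠ 0)
    (hcont : ∀ k ∈ S, Continuous fun z => F z k)
    (hode : ∀ z ∈ Set.Ioi (0:ℝ), ∀ k ∈ S, HasDerivAt (fun y => F y k)
      ((irf S w lam Ap Bn F z - tcoef lam Ap Bn k * F z k) / lam k) z)
    (hanti : AntitoneOn (irf S w lam Ap Bn F) (Set.Ioi 0))
    (hpos : ∀ z : ℝ, ∀ k ∈ S, 0 < F z k)
    (hdecay : ∀ k ∈ S, Tendsto (fun z => F z k) atTop (nhds 0))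
    (hNne : ∃ k ∈ S, lam k < 0) (hPne : ∃ k ∈ S, 0 < lam k)
    (hbd : ∀ i ∈ S, ∀ j ∈ S, 0 < lam i → lam i < lam j → F 0 j ≤ F 0 i) :
    ∀ z ∈ Set.Ioi (0:ℝ),
      0 < ∑ j ∈ S.filter (fun k => 0 < lam k),
        w j * ((Ap * F z j - irf S w lam Ap Bn F z) / lam j) := by
  intro z hz
  set IR := irf S w lam Ap Bn F with hIRdef
  set IRD : ℝ → ℝ := fun ζ => ∑ k ∈ S,
    (w k * tcoef lam Ap Bn k) * ((IR ζ - tcoef lam Ap Bn k * F ζ k) / lam k) with hIRDdef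
  have hIRd : ∀ ζ ∈ Set.Ioi (0:ℝ), HasDerivAt IR (IRD ζ) ζ := by
    intro ζ hζ
    have : HasDerivAt (fun y => ∑ k ∈ S, w k * tcoef lam Ap Bn k * F y k) (IRD ζ) ζ :=
      HasDerivAt.fun_sum (fun k hk => ((hode ζ hζ k hk).const_mul (w k * tcoef lam Ap Bn k)))
    exact this
  have hIRDle : ∀ ζ ∈ Set.Ioi (0:ℝ), IRD ζ ≤ 0 := fun ζ hζ =>
    deriv_nonpos_of_antitoneOn_Ioi hζ hanti (hIRd ζ hζ)
  have hIRcont : Continuous IR := by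
    rw [hIRdef]
    unfold irf
    exact continuous_finset_sum S (fun k hk => (continuous_const.mul (hcont k hk)))
  set P := S.filter (fun k => 0 < lam k) with hPdef
  set Nf := S.filter (fun k => ¬ 0 < lam k) with hNfdef
  -- ordering lemma
  have hord : ∀ i ∈ P, ∀ j ∈ P, lam i < lam j →
      (Ap * F z j - IR z) * Real.exp (Ap / lam j * z)
        ≤ (Ap * F z i - IR z) * Real.exp (Ap / lam i * z) := by
    intro i hi j hj hij
    obtain ⟨hiS, hipos⟩ := Finset.mem_filter.mp hi
    obtain ⟨hjS, hjpos⟩ := Finset.mem_filter.mp hj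
    have hR : ∀ m ∈ S, 0 < lam m → ∀ ζ ∈ Set.Ioi (0:ℝ),
        HasDerivAt (fun y => (Ap * F y m - IR y) * Real.exp (Ap / lam m * y))
          ((-IRD ζ) * Real.exp (Ap / lam m * ζ)) ζ := by
      intro m hm hmpos ζ hζ
      have htcm : tcoef lam Ap Bn m = Ap := by simp [tcoef, hmpos]
      have h1 : HasDerivAt (fun y => Ap * F y m - IR y)
          (Ap * ((IR ζ - Ap * F ζ m) / lam m) - IRD ζ) ζ := by
        have ha := (hode ζ hζ m hm).const_mul Ap
        rw [htcm] at ha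
        exact ha.sub (hIRd ζ hζ)
      have h2 : HasDerivAt (fun y : ℝ => Real.exp (Ap / lam m * y))
          (Real.exp (Ap / lam m * ζ) * (Ap / lam m)) ζ := by
        have hl : HasDerivAt (fun y : ℝ => Ap / lam m * y) (Ap / lam m) ζ := by
          simpa using (hasDerivAt_id ζ).const_mul (Ap / lam m)
        simpa [Function.comp_def] using (Real.hasDerivAt_exp (Ap / lam m * ζ)).comp ζ hl
      have h3 := h1.fun_mul h2
      refine h3.congr_deriv ?_
      have hm0 : lam m ≠ 0 := ne_of_gt hmpos
      ring
    set D : ℝ → ℝ := fun ζ => (Ap * F ζ i - IR ζ) * Real.exp (Ap / lam i * ζ)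
      - (Ap * F ζ j - IR ζ) * Real.exp (Ap / lam j * ζ) with hDdef
    have hDd : ∀ ζ ∈ Set.Ioi (0:ℝ), HasDerivAt D
        ((-IRD ζ) * Real.exp (Ap / lam i * ζ) - (-IRD ζ) * Real.exp (Ap / lam j * ζ)) ζ := by
      intro ζ hζ
      exact (hR i hiS hipos ζ hζ).sub (hR j hjS hjpos ζ hζ)
    have hDcont : Continuous D := by
      have h1 := hcont i hiS
      have h2 := hcont j hjS
      fun_prop
    have hDmono : MonotoneOn D (Set.Ici 0) := by
      apply monotoneOn_of_deriv_nonneg (convex_Ici 0) hDcont.continuousOn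
      · intro ζ hζ
        rw [interior_Ici] at hζ
        exact ((hDd ζ hζ).differentiableAt).differentiableWithinAt
      · intro ζ hζ
        rw [interior_Ici] at hζ
        rw [(hDd ζ hζ).deriv]
        have hexple : Real.exp (Ap / lam j * ζ) ≤ Real.exp (Ap / lam i * ζ) := by
          apply Real.exp_le_exp.mpr
          apply mul_le_mul_of_nonneg_right _ (le_of_lt hζ)
          rw [div_le_div_iff₀ hjpos hipos]
          nlinarith
        have hIRDζ := hIRDle ζ hζ
        nlinarith
    have h0z : D 0 ≤ D z := hDmono Set.self_mem_Ici (Set.mem_Ici.mpr (le_of_lt hz)) (le_of_lt hz)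
    have hD0 : 0 ≤ D 0 := by
      rw [hDdef]
      simp only [mul_zero, Real.exp_zero, mul_one]
      have := hbd i hiS j hjS hipos hij
      nlinarith
    simp only [hDdef] at h0z hD0
    linarith
  -- positivity of E
  have hNfne : Nf.Nonempty := by
    obtain ⟨k, hk, hlk⟩ := hNne
    exact ⟨k, Finset.mem_filter.mpr ⟨hk, not_lt.mpr hlk.le⟩⟩
  have hEpos : 0 < ∑ k ∈ Nf, w k * (IR z - Bn * F z k) := by
    apply Finset.sum_pos _ hNfne
    intro k hk
    obtain ⟨hkS, hknpos⟩ := Finset.mem_filter.mp hk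
    have hklt : lam k < 0 := lt_of_le_of_ne (not_lt.mp hknpos) (hlamne k hkS)
    have := AL1 S w lam Ap Bn F hBn hcont hode hanti hpos hdecay k hkS hklt z hz
    have hwk := hw k hkS
    nlinarith
  -- the identity
  have hsum0 : ∑ j ∈ P, w j * (Ap * F z j - IR z) = ∑ k ∈ Nf, w k * (IR z - Bn * F z k) := by
    have h1 : ∑ k ∈ S, w k * (tcoef lam Ap Bn k * F z k - IR z) = 0 := by
      have h2 : ∑ k ∈ S, w k * (tcoef lam Ap Bn k * F z k - IR z)
          = (∑ k ∈ S, w k * tcoef lam Ap Bn k * F z k) - (∑ k ∈ S, w k) * IR z := by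
        rw [Finset.sum_mul, ← Finset.sum_sub_distrib]
        congr 1
        ext k
        ring
      rw [h2, hw1, one_mul]
      have : (∑ k ∈ S, w k * tcoef lam Ap Bn k * F z k) = IR z := rfl
      rw [this, sub_self]
    have h3 := Finset.sum_filter_add_sum_filter_not S (fun k => 0 < lam k)
      (fun k => w k * (tcoef lam Ap Bn k * F z k - IR z))
    rw [h1] at h3
    have h4 : ∑ k ∈ P, w k * (tcoef lam Ap Bn k * F z k - IR z)
        = ∑ j ∈ P, w j * (Ap * F z j - IR z) := by
      apply Finset.sum_congr rfl
      intro k hk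
      obtain ⟨hkS, hkpos⟩ := Finset.mem_filter.mp hk
      have : tcoef lam Ap Bn k = Ap := by simp [tcoef, hkpos]
      rw [this]
    have h5 : ∑ k ∈ Nf, w k * (tcoef lam Ap Bn k * F z k - IR z)
        = - ∑ k ∈ Nf, w k * (IR z - Bn * F z k) := by
      rw [← Finset.sum_neg_distrib]
      apply Finset.sum_congr rfl
      intro k hk
      obtain ⟨hkS, hknpos⟩ := Finset.mem_filter.mp hk
      have : tcoef lam Ap Bn k = Bn := by simp [tcoef, hknpos]
      rw [this]
      ring
    rw [h4, h5] at h3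
    linarith
  -- threshold argument
  by_cases hX : (P.filter (fun j => Ap * F z j - IR z ≤ 0)).Nonempty
  · obtain ⟨i0, hi0mem, hi0min⟩ := Finset.exists_min_image _ lam hX
    obtain ⟨hi0P, hi0neg⟩ := Finset.mem_filter.mp hi0mem
    obtain ⟨hi0S, hi0pos⟩ := Finset.mem_filter.mp hi0P
    have hstep : ∀ j ∈ P, w j * ((Ap * F z j - IR z) / lam i0)
        ≤ w j * ((Ap * F z j - IR z) / lam j) := by
      intro j hj
      obtain ⟨hjS, hjpos⟩ := Finset.mem_filter.mp hj
      apply mul_le_mul_of_nonneg_left _ (hw j hjS).le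
      by_cases hhj : Ap * F z j - IR z ≤ 0
      · have hjX : j ∈ P.filter (fun j => Ap * F z j - IR z ≤ 0) :=
          Finset.mem_filter.mpr ⟨hj, hhj⟩
        have hle : lam i0 ≤ lam j := hi0min j hjX
        rw [div_le_div_iff₀ hi0pos hjpos]
        nlinarith
      · push_neg at hhj
        have hjlt : lam j < lam i0 := by
          rcases lt_trichotomy (lam j) (lam i0) with h | h | h
          · exact h
          · exfalso
            have := hinj hjS hi0S h
            rw [this] at hhj
            linarith
          · exfalso
            have horder := hord i0 hi0P j hj h
            have he1 := Real.exp_pos (Ap / lam j * z)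
            have he2 := Real.exp_pos (Ap / lam i0 * z)
            nlinarith
        rw [div_le_div_iff₀ hi0pos hjpos]
        nlinarith
    have hge := Finset.sum_le_sum hstep
    have heq : ∑ j ∈ P, w j * ((Ap * F z j - IR z) / lam i0)
        = (∑ j ∈ P, w j * (Ap * F z j - IR z)) / lam i0 := by
      rw [Finset.sum_div]
      apply Finset.sum_congr rfl
      intro j hj
      ring
    rw [heq, hsum0] at hge
    have : 0 < (∑ k ∈ Nf, w k * (IR z - Bn * F z k)) / lam i0 := div_pos hEpos hi0pos
    linarith
  · -- all terms positive
    have hPne' : P.Nonempty := by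
      obtain ⟨k, hk, hlk⟩ := hPne
      exact ⟨k, Finset.mem_filter.mpr ⟨hk, hlk⟩⟩
    apply Finset.sum_pos _ hPne'
    intro j hj
    obtain ⟨hjS, hjpos⟩ := Finset.mem_filter.mp hj
    have hhj : 0 < Ap * F z j - IR z := by
      by_contra hcon
      push_neg at hcon
      exact hX ⟨j, Finset.mem_filter.mpr ⟨hj, hcon⟩⟩
    exact mul_pos (hw j hjS) (div_pos hhj hjpos)
end AL1

theorem stmt16
    (K : ℕ) (hK : 1 ≤ K)
    (v ω : ℤ → ℝ)
    (hv0 : v 0 = 0)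
    (hvsym : ∀ k ∈ Finset.Icc (-(K:ℤ)) (K:ℤ), v (-k) = - v k)
    (hvmono : ∀ j ∈ Finset.Icc (-(K:ℤ)) (K:ℤ), ∀ k ∈ Finset.Icc (-(K:ℤ)) (K:ℤ), j < k → v j < v k)
    (hwpos : ∀ k ∈ Finset.Icc (-(K:ℤ)) (K:ℤ), 0 < ω k)
    (hwsym : ∀ k ∈ Finset.Icc (-(K:ℤ)) (K:ℤ), ω (-k) = ω k)
    (hwsum : ∑ k ∈ Finset.Icc (-(K:ℤ)) (K:ℤ), ω k = 1)
    (χS χN : ℝ) (hχS : χS ∈ Set.Ioo 0 (1/2 : ℝ)) (hχN : χN ∈ Set.Ioo 0 (1/2 : ℝ))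
    (c : ℝ) (hc0 : 0 < c) (hcK : c < v (K:ℤ))
    (hcv : ∀ k ∈ Finset.Icc (-(K:ℤ)) (K:ℤ), c ≠ v k)
    (Tp Tm : ℝ → ℝ) (T : ℝ → ℝ → ℝ)
    (hTpdef : ∀ u : ℝ, Tp u = if 0 < u then 1 + χS - χN else 1 - χS + χN)
    (hTmdef : ∀ u : ℝ, Tm u = if 0 < u then 1 - χS - χN else 1 + χS + χN)
    (hTdef : ∀ z u : ℝ, T z u = if 0 < z then Tp u else Tm u)
    (f : ℝ → ℤ → ℝ)
    (hfc : ∀ k ∈ Finset.Icc (-(K:ℤ)) (K:ℤ), Continuous fun z => f z k)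
    (hfeq : ∀ z : ℝ, z ≠ 0 → ∀ k ∈ Finset.Icc (-(K:ℤ)) (K:ℤ),
      HasDerivAt (fun z' => f z' k)
        (((∑ k' ∈ Finset.Icc (-(K:ℤ)) (K:ℤ), ω k' * T z (v k' - c) * f z k') -
          T z (v k - c) * f z k) / (v k - c)) z)
    (hfpos : ∀ z : ℝ, ∀ k ∈ Finset.Icc (-(K:ℤ)) (K:ℤ), 0 < f z k)
    (hftop : ∀ k ∈ Finset.Icc (-(K:ℤ)) (K:ℤ), Filter.Tendsto (fun z => f z k) Filter.atTop (nhds 0))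
    (hfbot : ∀ k ∈ Finset.Icc (-(K:ℤ)) (K:ℤ), Filter.Tendsto (fun z => f z k) Filter.atBot (nhds 0))
    (hImono : AntitoneOn (fun z => ∑ k ∈ Finset.Icc (-(K:ℤ)) (K:ℤ), ω k * T z (v k - c) * f z k) (Set.Ioi 0))
    (hImono' : MonotoneOn (fun z => ∑ k ∈ Finset.Icc (-(K:ℤ)) (K:ℤ), ω k * T z (v k - c) * f z k) (Set.Iio 0)) :
    StrictAntiOn (fun z => ∑ k ∈ (Finset.Icc (-(K:ℤ)) (K:ℤ)).filter (fun k => c < v k), ω k * f z k) (Set.Ioi 0) ∧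
    StrictAntiOn (fun z => ∑ k ∈ (Finset.Icc (-(K:ℤ)) (K:ℤ)).filter (fun k => v k < c), ω k * f z k) (Set.Ioi 0) ∧
    StrictMonoOn (fun z => ∑ k ∈ (Finset.Icc (-(K:ℤ)) (K:ℤ)).filter (fun k => c < v k), ω k * f z k) (Set.Iio 0) ∧
    StrictMonoOn (fun z => ∑ k ∈ (Finset.Icc (-(K:ℤ)) (K:ℤ)).filter (fun k => v k < c), ω k * f z k) (Set.Iio 0) := by
  obtain ⟨hχS0, hχS2⟩ := hχS
  obtain ⟨hχN0, hχN2⟩ := hχN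
  set S := Finset.Icc (-(K:ℤ)) (K:ℤ) with hSdef
  have hKmem : (K:ℤ) ∈ S := by
    rw [hSdef, Finset.mem_Icc]
    constructor <;> omega
  have h0mem : (0:ℤ) ∈ S := by
    rw [hSdef, Finset.mem_Icc]
    constructor <;> omega
  -- the four coefficients
  set ApR : ℝ := 1 + χS - χN with hApRdef
  set BnR : ℝ := 1 - χS + χN with hBnRdef
  set ApL : ℝ := 1 + χS + χN with hApLdef
  set BnL : ℝ := 1 - χS - χN with hBnLdef
  have hApR : 0 < ApR := by rw [hApRdef]; linarith
  have hBnR : 0 < BnR := by rw [hBnRdef]; linarith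
  have hApL : 0 < ApL := by rw [hApLdef]; linarith
  have hBnL : 0 < BnL := by rw [hBnLdef]; linarith
  set lamR : ℤ → ℝ := fun k => v k - c with hlamRdef
  set lamL : ℤ → ℝ := fun k => c - v k with hlamLdef
  set FL : ℝ → ℤ → ℝ := fun z k => f (-z) k with hFLdef
  -- coefficient identification, right side
  have htcR : ∀ z : ℝ, 0 < z → ∀ k : ℤ, T z (v k - c) = tcoef lamR ApR BnR k := by
    intro z hz k
    rw [hTdef, if_pos hz, hTpdef]
    rfl
  have hIRR_eq : ∀ z : ℝ, 0 < z →
      (∑ k ∈ S, ω k * T z (v k - c) * f z k) = irf S ω lamR ApR BnR f z := by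
    intro z hz
    apply Finset.sum_congr rfl
    intro k _
    rw [htcR z hz k]
  -- coefficient identification, left side
  have htcL : ∀ y : ℝ, y < 0 → ∀ k ∈ S, T y (v k - c) = tcoef lamL ApL BnL k := by
    intro y hy k hk
    have hne := hcv k hk
    rw [hTdef, if_neg (by linarith : ¬ 0 < y), hTmdef]
    unfold tcoef
    by_cases h : 0 < v k - c
    · rw [if_pos h, if_neg (by rw [hlamLdef]; simp only; linarith)]
    · rw [if_neg h]
      have hlt : v k < c := by
        rcases lt_trichotomy (v k) c with hh | hh | hh
        · exact hh
        · exact absurd hh.symm hne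
        · exact absurd hh (by linarith)
      rw [if_pos (by rw [hlamLdef]; simp only; linarith)]
  have hIRL_eq : ∀ y : ℝ, y < 0 →
      (∑ k ∈ S, ω k * T y (v k - c) * f y k) = irf S ω lamL ApL BnL FL (-y) := by
    intro y hy
    apply Finset.sum_congr rfl
    intro k hk
    rw [htcL y hy k hk]
    have : FL (-y) k = f y k := by rw [hFLdef]; simp
    rw [this]
  -- ODE, right instance
  have hodeR : ∀ z ∈ Set.Ioi (0:ℝ), ∀ k ∈ S, HasDerivAt (fun y => f y k)
      ((irf S ω lamR ApR BnR f z - tcoef lamR ApR BnR k * f z k) / lamR k) z := by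
    intro z hz k hk
    have h := hfeq z (ne_of_gt hz) k hk
    have hval : ((∑ k' ∈ S, ω k' * T z (v k' - c) * f z k') - T z (v k - c) * f z k) / (v k - c)
        = (irf S ω lamR ApR BnR f z - tcoef lamR ApR BnR k * f z k) / lamR k := by
      rw [hIRR_eq z hz, htcR z hz k]
    rw [hval] at h
    exact h
  -- ODE, left instance
  have hodeL : ∀ z ∈ Set.Ioi (0:ℝ), ∀ k ∈ S, HasDerivAt (fun y => FL y k)
      ((irf S ω lamL ApL BnL FL z - tcoef lamL ApL BnL k * FL z k) / lamL k) z := by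
    intro z hz k hk
    have hzneg : (-z : ℝ) < 0 := by linarith [Set.mem_Ioi.mp hz]
    have h := hfeq (-z) (ne_of_lt hzneg) k hk
    have hneg : HasDerivAt (fun y : ℝ => -y) (-1 : ℝ) z := by
      simpa using (hasDerivAt_id z).fun_neg
    have h2 := h.comp z hneg
    have hval : (((∑ k' ∈ S, ω k' * T (-z) (v k' - c) * f (-z) k') -
          T (-z) (v k - c) * f (-z) k) / (v k - c)) * (-1)
        = (irf S ω lamL ApL BnL FL z - tcoef lamL ApL BnL k * FL z k) / lamL k := by
      have he1 : (∑ k' ∈ S, ω k' * T (-z) (v k' - c) * f (-z) k')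
          = irf S ω lamL ApL BnL FL z := by
        have := hIRL_eq (-z) hzneg
        simpa using this
      rw [he1, htcL (-z) hzneg k hk]
      have he2 : f (-z) k = FL z k := by rw [hFLdef]
      rw [he2]
      have hd : v k - c ≠ 0 := sub_ne_zero_of_ne (fun hh => hcv k hk hh.symm)
      have hd2 : lamL k ≠ 0 := by
        rw [hlamLdef]
        simp only
        exact sub_ne_zero_of_ne (hcv k hk)
      have hlamLk : lamL k = -(v k - c) := by rw [hlamLdef]; simp only; ring
      rw [hlamLk, div_neg]
      ring
    rw [hval] at h2
    exact h2
  -- antitonicity of the fluxes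
  have hantiR : AntitoneOn (irf S ω lamR ApR BnR f) (Set.Ioi 0) := by
    intro x hx y hy hxy
    have h5 := hImono hx hy hxy
    simp only at h5
    rwa [hIRR_eq x (Set.mem_Ioi.mp hx), hIRR_eq y (Set.mem_Ioi.mp hy)] at h5
  have hantiL : AntitoneOn (irf S ω lamL ApL BnL FL) (Set.Ioi 0) := by
    intro x hx y hy hxy
    have hx0 := Set.mem_Ioi.mp hx
    have hy0 := Set.mem_Ioi.mp hy
    have h1 : (-y : ℝ) ∈ Set.Iio 0 := by simp; linarith
    have h2 : (-x : ℝ) ∈ Set.Iio 0 := by simp; linarith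
    have h5 := hImono' h1 h2 (by linarith)
    simp only at h5
    rw [hIRL_eq (-y) (by linarith), hIRL_eq (-x) (by linarith)] at h5
    simpa using h5
  -- continuity/positivity/decay, left instance
  have hcontL : ∀ k ∈ S, Continuous fun z => FL z k := by
    intro k hk
    rw [hFLdef]
    exact (hfc k hk).comp continuous_neg
  have hposL : ∀ z : ℝ, ∀ k ∈ S, 0 < FL z k := by
    intro z k hk
    rw [hFLdef]
    exact hfpos (-z) k hk
  have hdecayL : ∀ k ∈ S, Filter.Tendsto (fun z => FL z k) Filter.atTop (nhds 0) := by
    intro k hk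
    rw [hFLdef]
    exact (hfbot k hk).comp tendsto_neg_atTop_atBot
  -- nonvanishing and injectivity of speeds
  have hlamneR : ∀ k ∈ S, lamR k ≠ 0 := by
    intro k hk
    rw [hlamRdef]
    exact sub_ne_zero_of_ne (fun hh => hcv k hk hh.symm)
  have hlamneL : ∀ k ∈ S, lamL k ≠ 0 := by
    intro k hk
    rw [hlamLdef]
    exact sub_ne_zero_of_ne (hcv k hk)
  have hvinj : ∀ a ∈ S, ∀ b ∈ S, v a = v b → a = b := by
    intro a ha b hb hab
    rcases lt_trichotomy a b with h | h | h
    · exact absurd (hvmono a ha b hb h) (by rw [hab]; exact lt_irrefl _)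
    · exact h
    · exact absurd (hvmono b hb a ha h) (by rw [hab]; exact lt_irrefl _)
  have hinjR : Set.InjOn lamR ↑S := by
    intro a ha b hb hab
    rw [hlamRdef] at hab
    simp only at hab
    exact hvinj a (Finset.mem_coe.mp ha) b (Finset.mem_coe.mp hb) (by linarith)
  have hinjL : Set.InjOn lamL ↑S := by
    intro a ha b hb hab
    rw [hlamLdef] at hab
    simp only at hab
    exact hvinj a (Finset.mem_coe.mp ha) b (Finset.mem_coe.mp hb) (by linarith)
  -- nonemptiness
  have hlamR0 : lamR 0 < 0 := by rw [hlamRdef]; simp [hv0]; linarith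
  have hlamRK : 0 < lamR (K:ℤ) := by rw [hlamRdef]; simp; linarith
  have hlamL0 : 0 < lamL 0 := by rw [hlamLdef]; simp [hv0]; linarith
  have hlamLK : lamL (K:ℤ) < 0 := by rw [hlamLdef]; simp; linarith
  have hNneR : ∃ k ∈ S, lamR k < 0 := ⟨0, h0mem, hlamR0⟩
  have hPneR : ∃ k ∈ S, 0 < lamR k := ⟨(K:ℤ), hKmem, hlamRK⟩
  have hNneL : ∃ k ∈ S, lamL k < 0 := ⟨(K:ℤ), hKmem, hlamLK⟩
  have hPneL : ∃ k ∈ S, 0 < lamL k := ⟨0, h0mem, hlamL0⟩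
  -- per-mode bounds
  have hAL1R := AL1 S ω lamR ApR BnR f hBnR hfc hodeR hantiR hfpos hftop
  have hAL2R := AL2 S ω lamR ApR BnR f hBnR hfc hodeR hantiR hfpos hftop
  have hAL1L := AL1 S ω lamL ApL BnL FL hBnL hcontL hodeL hantiL hposL hdecayL
  have hAL2L := AL2 S ω lamL ApL BnL FL hBnL hcontL hodeL hantiL hposL hdecayL
  -- boundary orderings
  have hbdR : ∀ i ∈ S, ∀ j ∈ S, 0 < lamR i → lamR i < lamR j → f 0 j ≤ f 0 i := by
    intro i hi j hj h1 h2
    rw [hlamRdef] at h1 h2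
    simp only at h1 h2
    have h3 : lamL j < lamL i := by rw [hlamLdef]; simp only; linarith
    have h4 : lamL i < 0 := by rw [hlamLdef]; simp only; linarith
    have := hAL2L i hi j hj h3 h4
    rw [hFLdef] at this
    simpa using this
  have hbdL : ∀ i ∈ S, ∀ j ∈ S, 0 < lamL i → lamL i < lamL j → FL 0 j ≤ FL 0 i := by
    intro i hi j hj h1 h2
    rw [hlamLdef] at h1 h2
    simp only at h1 h2
    have h3 : lamR j < lamR i := by rw [hlamRdef]; simp only; linarith
    have h4 : lamR i < 0 := by rw [hlamRdef]; simp only; linarith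
    have := hAL2R i hi j hj h3 h4
    rw [hFLdef]
    simpa using this
  -- aggregate positivity
  have hAL3R := AL3 S ω lamR ApR BnR f hApR hBnR hwpos hwsum hinjR hlamneR hfc hodeR
    hantiR hfpos hftop hNneR hPneR hbdR
  have hAL3L := AL3 S ω lamL ApL BnL FL hApL hBnL hwpos hwsum hinjL hlamneL hcontL hodeL
    hantiL hposL hdecayL hNneL hPneL hbdL
    -- filter identifications
  have hfilter_eqR : S.filter (fun k => c < v k) = S.filter (fun k => 0 < lamR k) := by
    apply Finset.filter_congr
    intro k _
    rw [hlamRdef]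
    simp only
    constructor <;> intro <;> linarith
  have hfilter_eqL : S.filter (fun k => v k < c) = S.filter (fun k => 0 < lamL k) := by
    apply Finset.filter_congr
    intro k _
    rw [hlamLdef]
    simp only
    constructor <;> intro <;> linarith
  have hcontsum : ∀ (t : Finset ℤ), t ⊆ S → Continuous (fun z => ∑ k ∈ t, ω k * f z k) := by
    intro t ht
    exact continuous_finset_sum _ (fun k hk => continuous_const.mul (hfc k (ht hk)))
  refine ⟨?_, ?_, ?_, ?_⟩
  · -- (1) ρ⁺ strictly decreasing on the right
    apply strictAntiOn_of_deriv_neg (convex_Ioi 0)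
      ((hcontsum _ (Finset.filter_subset _ S)).continuousOn)
    intro z hz
    rw [interior_Ioi] at hz
    have hD : HasDerivAt (fun z => ∑ k ∈ S.filter (fun k => c < v k), ω k * f z k)
        (∑ k ∈ S.filter (fun k => c < v k),
          ω k * ((irf S ω lamR ApR BnR f z - tcoef lamR ApR BnR k * f z k) / lamR k)) z :=
      HasDerivAt.fun_sum (fun k hk => (hodeR z hz k (Finset.mem_of_mem_filter k hk)).const_mul (ω k))
    rw [hD.deriv]
    have h3 := hAL3R z hz
    have heq : ∑ k ∈ S.filter (fun k => c < v k),
        ω k * ((irf S ω lamR ApR BnR f z - tcoef lamR ApR BnR k * f z k) / lamR k)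
        = - ∑ j ∈ S.filter (fun k => 0 < lamR k),
            ω j * ((ApR * f z j - irf S ω lamR ApR BnR f z) / lamR j) := by
      rw [hfilter_eqR, ← Finset.sum_neg_distrib]
      apply Finset.sum_congr rfl
      intro k hk
      have hkpos : 0 < lamR k := (Finset.mem_filter.mp hk).2
      have htck : tcoef lamR ApR BnR k = ApR := by simp [tcoef, hkpos]
      rw [htck]
      ring
    rw [heq]
    linarith
  · -- (2) ρ⁻ strictly decreasing on the right
    apply strictAntiOn_of_deriv_neg (convex_Ioi 0)
      ((hcontsum _ (Finset.filter_subset _ S)).continuousOn)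
    intro z hz
    rw [interior_Ioi] at hz
    have hD : HasDerivAt (fun z => ∑ k ∈ S.filter (fun k => v k < c), ω k * f z k)
        (∑ k ∈ S.filter (fun k => v k < c),
          ω k * ((irf S ω lamR ApR BnR f z - tcoef lamR ApR BnR k * f z k) / lamR k)) z :=
      HasDerivAt.fun_sum (fun k hk => (hodeR z hz k (Finset.mem_of_mem_filter k hk)).const_mul (ω k))
    rw [hD.deriv]
    apply Finset.sum_neg
    · intro k hk
      have hkS := Finset.mem_of_mem_filter k hk
      have hkv : v k < c := (Finset.mem_filter.mp hk).2
      have hlamk : lamR k < 0 := by rw [hlamRdef]; simp only; linarith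
      have htck : tcoef lamR ApR BnR k = BnR := by simp [tcoef, not_lt.mpr hlamk.le]
      have h1 := hAL1R k hkS hlamk z hz
      rw [htck]
      apply mul_neg_of_pos_of_neg (hwpos k hkS)
      apply div_neg_of_pos_of_neg (by linarith) hlamk
    · exact ⟨0, Finset.mem_filter.mpr ⟨h0mem, by rw [hv0]; exact hc0⟩⟩
  · -- (3) ρ⁺ strictly increasing on the left
    apply strictMonoOn_of_deriv_pos (convex_Iio 0)
      ((hcontsum _ (Finset.filter_subset _ S)).continuousOn)
    intro y hy
    rw [interior_Iio] at hy
    have hy0 : y < 0 := hy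
    have hD : HasDerivAt (fun z => ∑ k ∈ S.filter (fun k => c < v k), ω k * f z k)
        (∑ k ∈ S.filter (fun k => c < v k),
          ω k * (((∑ k' ∈ S, ω k' * T y (v k' - c) * f y k') - T y (v k - c) * f y k) / (v k - c))) y :=
      HasDerivAt.fun_sum (fun k hk =>
        (hfeq y (ne_of_lt hy0) k (Finset.mem_of_mem_filter k hk)).const_mul (ω k))
    rw [hD.deriv]
    apply Finset.sum_pos
    · intro k hk
      have hkS := Finset.mem_of_mem_filter k hk
      have hkv : c < v k := (Finset.mem_filter.mp hk).2
      have hlamLk : lamL k < 0 := by rw [hlamLdef]; simp only; linarith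
      have htck2 : tcoef lamL ApL BnL k = BnL := by simp [tcoef, not_lt.mpr hlamLk.le]
      have h1 := hAL1L k hkS hlamLk (-y) (by simp only [Set.mem_Ioi]; linarith)
      have hFLval : FL (-y) k = f y k := by rw [hFLdef]; simp
      rw [hFLval] at h1
      apply mul_pos (hwpos k hkS)
      apply div_pos
      · rw [hIRL_eq y hy, htcL y hy k hkS, htck2]
        linarith
      · linarith
    · exact ⟨(K:ℤ), Finset.mem_filter.mpr ⟨hKmem, hcK⟩⟩
  · -- (4) ρ⁻ strictly increasing on the left
    apply strictMonoOn_of_deriv_pos (convex_Iio 0)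
      ((hcontsum _ (Finset.filter_subset _ S)).continuousOn)
    intro y hy
    rw [interior_Iio] at hy
    have hy0 : y < 0 := hy
    have hD : HasDerivAt (fun z => ∑ k ∈ S.filter (fun k => v k < c), ω k * f z k)
        (∑ k ∈ S.filter (fun k => v k < c),
          ω k * (((∑ k' ∈ S, ω k' * T y (v k' - c) * f y k') - T y (v k - c) * f y k) / (v k - c))) y :=
      HasDerivAt.fun_sum (fun k hk =>
        (hfeq y (ne_of_lt hy0) k (Finset.mem_of_mem_filter k hk)).const_mul (ω k))
    rw [hD.deriv]
    have h3 := hAL3L (-y) (by simp only [Set.mem_Ioi]; linarith)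
    have heq : ∑ k ∈ S.filter (fun k => v k < c),
        ω k * (((∑ k' ∈ S, ω k' * T y (v k' - c) * f y k') - T y (v k - c) * f y k) / (v k - c))
        = ∑ j ∈ S.filter (fun k => 0 < lamL k),
            ω j * ((ApL * FL (-y) j - irf S ω lamL ApL BnL FL (-y)) / lamL j) := by
      rw [hfilter_eqL]
      apply Finset.sum_congr rfl
      intro k hk
      have hkS := Finset.mem_of_mem_filter k hk
      have hklam : 0 < lamL k := (Finset.mem_filter.mp hk).2
      have htck2 : tcoef lamL ApL BnL k = ApL := by simp [tcoef, hklam]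
      have hFLval : FL (-y) k = f y k := by rw [hFLdef]; simp
      rw [hIRL_eq y hy, htcL y hy k hkS, htck2, hFLval]
      rw [show lamL k = -(v k - c) from by rw [hlamLdef]; simp only; ring, div_neg]
      ring
    rw [heq]
    exact h3
end

section
/- Assume χ_N ≤ χ_S. Then the following inequality between mean algebraic run lengths holds: (1/2) · ( (v_K − c)/T₊⁺ + (v_{−K} − c)/T₊⁻ ) ≤ Σ_k ω_k (v_k − c)/T₊(v_k − c). (This expresses that replacing the weights ω by the two-velocity weights (1/2, 0, …, 0, 1/2) can only decrease the mean algebraic run length on the right, ensuring uniform confinement along the interpolation of weights.) -/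
open MeasureTheory Filter

lemma aux17 (T₁ T₂ c V a : ℝ) (h2 : 0 < T₂) (h21 : T₂ ≤ T₁)
    (hc : 0 < c) (hcV : c < V) (haV : a ≤ V) (hVa : -V ≤ a) (hac : a ≠ c) :
    (V - c) / T₁ + (-V - c) / T₂ ≤
      (a - c) / (if 0 < a - c then T₁ else T₂) + (-a - c) / (if 0 < -a - c then T₁ else T₂) := by
  have h1 : 0 < T₁ := lt_of_lt_of_le h2 h21
  have hVc : 0 < V - c := by linarith
  have hinv : 1 / T₁ ≤ 1 / T₂ := one_div_le_one_div_of_le h2 h21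
  rcases lt_trichotomy a c with h | h | h
  · rcases le_or_gt (-c) a with h' | h'
    · rw [if_neg (by push_neg; linarith), if_neg (by push_neg; linarith)]
      have e : (a - c) / T₂ + (-a - c) / T₂ - ((V - c) / T₁ + (-V - c) / T₂)
          = (V - c) * (1/T₂ - 1/T₁) := by field_simp; ring
      have hp : 0 ≤ (V - c) * (1/T₂ - 1/T₁) :=
        mul_nonneg hVc.le (by linarith : (0:ℝ) ≤ 1/T₂ - 1/T₁)
      linarith
    · rw [if_neg (by push_neg; linarith), if_pos (by linarith)]
      have e : (a - c) / T₂ + (-a - c) / T₁ - ((V - c) / T₁ + (-V - c) / T₂)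
          = (V + a) * (1/T₂ - 1/T₁) := by field_simp; ring
      have hp : 0 ≤ (V + a) * (1/T₂ - 1/T₁) :=
        mul_nonneg (by linarith : (0:ℝ) ≤ V + a) (by linarith : (0:ℝ) ≤ 1/T₂ - 1/T₁)
      linarith
  · exact absurd h hac
  · rw [if_pos (by linarith), if_neg (by push_neg; linarith)]
    have e : (a - c) / T₁ + (-a - c) / T₂ - ((V - c) / T₁ + (-V - c) / T₂)
        = (V - a) * (1/T₂ - 1/T₁) := by field_simp; ring
    have hp : 0 ≤ (V - a) * (1/T₂ - 1/T₁) :=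
      mul_nonneg (by linarith : (0:ℝ) ≤ V - a) (by linarith : (0:ℝ) ≤ 1/T₂ - 1/T₁)
    linarith

theorem stmt17
    (K : ℕ) (hK : 1 ≤ K)
    (v ω : ℤ → ℝ)
    (hv0 : v 0 = 0)
    (hvsym : ∀ k ∈ Finset.Icc (-(K:ℤ)) (K:ℤ), v (-k) = - v k)
    (hvmono : ∀ j ∈ Finset.Icc (-(K:ℤ)) (K:ℤ), ∀ k ∈ Finset.Icc (-(K:ℤ)) (K:ℤ), j < k → v j < v k)
    (hwpos : ∀ k ∈ Finset.Icc (-(K:ℤ)) (K:ℤ), 0 < ω k)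
    (hwsym : ∀ k ∈ Finset.Icc (-(K:ℤ)) (K:ℤ), ω (-k) = ω k)
    (hwsum : ∑ k ∈ Finset.Icc (-(K:ℤ)) (K:ℤ), ω k = 1)
    (χS χN : ℝ) (hχS : χS ∈ Set.Ioo 0 (1/2 : ℝ)) (hχN : χN ∈ Set.Ioo 0 (1/2 : ℝ))
    (hχ : χN ≤ χS)
    (c : ℝ) (hc0 : 0 < c) (hcK : c < v (K:ℤ))
    (hcv : ∀ k ∈ Finset.Icc (-(K:ℤ)) (K:ℤ), c ≠ v k)
    (Tp : ℝ → ℝ)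
    (hTpdef : ∀ u : ℝ, Tp u = if 0 < u then 1 + χS - χN else 1 - χS + χN) :
    (1/2 : ℝ) * ((v (K:ℤ) - c) / (1 + χS - χN) + (v (-(K:ℤ)) - c) / (1 - χS + χN)) ≤
      ∑ k ∈ Finset.Icc (-(K:ℤ)) (K:ℤ), ω k * (v k - c) / Tp (v k - c) := by
  obtain ⟨hS0, hS2⟩ := hχS
  obtain ⟨hN0, hN2⟩ := hχN
  have hT2 : (0:ℝ) < 1 - χS + χN := by linarith
  have hT21 : 1 - χS + χN ≤ 1 + χS - χN := by linarith
  have hT1 : (0:ℝ) < 1 + χS - χN := lt_of_lt_of_le hT2 hT21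
  have hKmem : (K:ℤ) ∈ Finset.Icc (-(K:ℤ)) (K:ℤ) := by
    simp only [Finset.mem_Icc]; omega
  have hmKmem : -(K:ℤ) ∈ Finset.Icc (-(K:ℤ)) (K:ℤ) := by
    simp only [Finset.mem_Icc]; omega
  have hVK : v (-(K:ℤ)) = - v (K:ℤ) := hvsym (K:ℤ) hKmem
  rw [hVK]
  set S := Finset.Icc (-(K:ℤ)) (K:ℤ) with hS
  have hbound : ∀ k ∈ S, -(v (K:ℤ)) ≤ v k ∧ v k ≤ v (K:ℤ) := by
    intro k hk
    have hk' := hk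
    simp only [hS, Finset.mem_Icc] at hk'
    constructor
    · rcases eq_or_lt_of_le hk'.1 with h | h
      · rw [← h, hVK]
      · have := hvmono (-(K:ℤ)) hmKmem k hk h
        rw [hVK] at this; linarith
    · rcases eq_or_lt_of_le hk'.2 with h | h
      · rw [h]
      · exact (hvmono k hk (K:ℤ) hKmem h).le
  set M : ℝ := (v (K:ℤ) - c) / (1 + χS - χN) + (-v (K:ℤ) - c) / (1 - χS + χN) with hM
  set F : ℤ → ℝ := fun k => ω k * (v k - c) / Tp (v k - c) with hF
  have key : ∀ k ∈ S, ω k * M ≤ F k + F (-k) := by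
    intro k hk
    have hwk := hwpos k hk
    have h1 : F k + F (-k)
        = ω k * ((v k - c) / Tp (v k - c) + (-v k - c) / Tp (-v k - c)) := by
      simp only [hF]
      rw [hwsym k hk, hvsym k hk]
      ring
    rw [h1, hM]
    apply mul_le_mul_of_nonneg_left _ hwk.le
    have hb := hbound k hk
    rw [hTpdef, hTpdef]
    exact aux17 (1+χS-χN) (1-χS+χN) c (v (K:ℤ)) (v k) hT2 hT21 hc0 hcK hb.2 hb.1
      (fun h => hcv k hk h.symm)
  have hsum : ∑ k ∈ S, ω k * M ≤ ∑ k ∈ S, (F k + F (-k)) := Finset.sum_le_sum key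
  have e1 : ∑ k ∈ S, ω k * M = M := by rw [← Finset.sum_mul, hwsum, one_mul]
  have e2 : ∑ k ∈ S, (F k + F (-k)) = 2 * ∑ k ∈ S, F k := by
    rw [Finset.sum_add_distrib]
    have h3 : ∑ k ∈ S, F (-k) = ∑ k ∈ S, F k := by
      apply Finset.sum_equiv (Equiv.neg ℤ)
      · intro i; simp [hS, Finset.mem_Icc]; omega
      · intro i _; rfl
    rw [h3]; ring
  rw [e1, e2] at hsum
  show (1/2 : ℝ) * M ≤ ∑ k ∈ S, F k
  clear_value M F S
  linarith
end
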